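/- arXiv:2004.07722 — 9 statements merged into one kernel-verified Lean document; each statement's English description precedes it below -/
import Mathlib

section
/- Let P, Q ⊆ ℤ^r be finite sets such that there is an invertible affine-linear transformation φ : ℚ^r → ℚ^r (i.e., φ(v) = Mv + b with M an invertible r×r rational matrix and b ∈ ℚ^r) satisfying φ(P) = Q, where P and Q are viewed inside ℚ^r. Then there is a constant c = c_{P,Q} ∈ (0,1) such that pdd_Q(c·α) ≤ pdd_P(α) for all α ∈ (0,1). -/
/-- The condition set in the definition of `pdd`. -/
def pddSet (r : ℕ) (P : Finset (Fin r → ℤ)) (α : ℝ) : Set ℝ :=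
  {β : ℝ | ∀ ε : ℝ, 0 < ε → ∃ N0 : ℕ, ∀ N : ℕ, N0 ≤ N →
    ∀ A : Finset (Fin r → ℤ),
      (∀ a ∈ A, ∀ i, 1 ≤ a i ∧ a i ≤ (N : ℤ)) →
      α * (N : ℝ) ^ r ≤ A.card →
    ∃ d : ℤ, d ≠ 0 ∧
      (β - ε) * (N : ℝ) ^ r ≤
        (({x : Fin r → ℤ | ∀ p ∈ P, x + d • p ∈ A}).ncard : ℝ)}

noncomputable def pdd (r : ℕ) (P : Finset (Fin r → ℤ)) (α : ℝ) : ℝ :=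
  sSup ({0} ∪ {β : ℝ | ∀ ε : ℝ, 0 < ε → ∃ N0 : ℕ, ∀ N : ℕ, N0 ≤ N →
    ∀ A : Finset (Fin r → ℤ),
      (∀ a ∈ A, ∀ i, 1 ≤ a i ∧ a i ≤ (N : ℤ)) →
      α * (N : ℝ) ^ r ≤ A.card →
    ∃ d : ℤ, d ≠ 0 ∧
      (β - ε) * (N : ℝ) ^ r ≤
        (({x : Fin r → ℤ | ∀ p ∈ P, x + d • p ∈ A}).ncard : ℝ)})

lemma pdd_def (r : ℕ) (P : Finset (Fin r → ℤ)) (α : ℝ) :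
    pdd r P α = sSup ({0} ∪ pddSet r P α) := rfl

-- helper: clearing denominators
lemma den_mul_self (q : ℚ) : ((q.den : ℚ)) * q = (q.num : ℚ) := by
  have hd : (q.den : ℚ) ≠ 0 := Nat.cast_ne_zero.2 q.den_nz
  rw [mul_comm]
  nth_rewrite 1 [← Rat.num_div_den q]
  rw [div_mul_cancel₀ _ hd]

lemma helper1 (q : ℚ) (n : ℕ) (h : q.den ∣ n) : ∃ z : ℤ, (z : ℚ) = (n : ℚ) * q := by
  obtain ⟨k, hk⟩ := h
  refine ⟨q.num * k, ?_⟩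
  subst hk
  push_cast
  rw [mul_comm (q.den : ℚ) (k : ℚ), mul_assoc, den_mul_self q]
  ring

lemma helper2 (μ : ℚ) (v z : ℤ) (h : μ * (v : ℚ) = (z : ℚ)) : (μ.den : ℤ) ∣ v := by
  have hd : (μ.den : ℚ) ≠ 0 := Nat.cast_ne_zero.2 μ.den_nz
  have h2 : (μ.num : ℚ) * v = z * μ.den := by
    have := congrArg (fun x => x * (μ.den : ℚ)) h
    rw [mul_comm μ (v:ℚ), mul_assoc] at this
    rw [← this, ← den_mul_self μ]
    ring
  have h3 : μ.num * v = z * μ.den := by exact_mod_cast h2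
  have h4 : (μ.den : ℤ) ∣ μ.num * v := ⟨z, by linarith [h3]⟩
  have h5 : μ.den ∣ (μ.num * v).natAbs := Int.natAbs_dvd_natAbs.mpr (by exact_mod_cast h4)
  rw [Int.natAbs_mul] at h5
  have h6 : μ.den ∣ v.natAbs :=
    (Nat.Coprime.dvd_of_dvd_mul_left (Nat.Coprime.symm μ.reduced) h5)
  have h7 : (μ.den : ℤ) ∣ (v.natAbs : ℤ) := Int.natCast_dvd_natCast.mpr h6
  exact (Int.dvd_natAbs).mp h7

noncomputable def box (r N : ℕ) : Finset (Fin r → ℤ) := Fintype.piFinset fun _ => Finset.Icc 1 (N : ℤ)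

lemma box_card (r N : ℕ) : (box r N).card = N ^ r := by
  rw [box, Fintype.card_piFinset]
  simp [Int.card_Icc]

lemma mem_box {r N : ℕ} {a : Fin r → ℤ} : a ∈ box r N ↔ ∀ i, 1 ≤ a i ∧ a i ≤ (N : ℤ) := by
  simp [box, Fintype.mem_piFinset, Finset.mem_Icc]

lemma goodX_finite {r : ℕ} {P : Finset (Fin r → ℤ)} {A : Finset (Fin r → ℤ)} {d : ℤ}
    {p0 : Fin r → ℤ} (hp0 : p0 ∈ P) :
    ({x : Fin r → ℤ | ∀ p ∈ P, x + d • p ∈ A}).Finite := by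
  have hsub : {x : Fin r → ℤ | ∀ p ∈ P, x + d • p ∈ A} ⊆
      (fun x => x + d • p0) ⁻¹' (A : Set (Fin r → ℤ)) := by
    intro x hx
    exact hx p0 hp0
  refine Set.Finite.subset (Set.Finite.preimage ?_ A.finite_toSet) hsub
  intro x _ y _ h
  simpa using h

lemma goodX_ncard_le {r : ℕ} {P : Finset (Fin r → ℤ)} {A : Finset (Fin r → ℤ)} {d : ℤ}
    {p0 : Fin r → ℤ} (hp0 : p0 ∈ P) :
    ({x : Fin r → ℤ | ∀ p ∈ P, x + d • p ∈ A}).ncard ≤ A.card := by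
  have h := Set.ncard_le_ncard_of_injOn
    (s := {x : Fin r → ℤ | ∀ p ∈ P, x + d • p ∈ A}) (t := (A : Set (Fin r → ℤ)))
    (fun x => x + d • p0)
    (fun x hx => hx p0 hp0) (fun x _ y _ h => by simpa using h) A.finite_toSet
  simpa [Set.ncard_coe_finset] using h

lemma infinite_pi (r : ℕ) (hr : 1 ≤ r) : (Set.univ : Set (Fin r → ℤ)).Infinite := by
  haveI : NeZero r := ⟨by omega⟩
  exact Set.infinite_of_injective_forall_mem
    (f := fun n : ℤ => (fun _ : Fin r => n))
    (fun a b h => congrFun h ⟨0, by omega⟩) (fun _ => Set.mem_univ _)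

lemma goodX_ncard_le_real {r N : ℕ} {P : Finset (Fin r → ℤ)} {A : Finset (Fin r → ℤ)} {d : ℤ}
    (hA : A ⊆ box r N) :
    (({x : Fin r → ℤ | ∀ p ∈ P, x + d • p ∈ A}).ncard : ℝ) ≤ (N : ℝ) ^ r := by
  have hcard : (A.card : ℝ) ≤ (N : ℝ) ^ r := by
    have := Finset.card_le_card hA
    rw [box_card] at this
    exact_mod_cast this
  rcases P.eq_empty_or_nonempty with hP | ⟨p0, hp0⟩
  · subst hP
    rcases Nat.eq_zero_or_pos r with hr | hr
    · subst hr
      have : ({x : Fin 0 → ℤ | ∀ p ∈ (∅ : Finset (Fin 0 → ℤ)), x + d • p ∈ A}) = Set.univ := by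
        ext x; simp
      rw [this, Set.ncard_univ]
      simp [Nat.card_unique]
    · have : ({x : Fin r → ℤ | ∀ p ∈ (∅ : Finset (Fin r → ℤ)), x + d • p ∈ A}) = Set.univ := by
        ext x; simp
      rw [this, (infinite_pi r hr).ncard]
      norm_num
  · calc (({x : Fin r → ℤ | ∀ p ∈ P, x + d • p ∈ A}).ncard : ℝ) ≤ (A.card : ℝ) := by
          exact_mod_cast goodX_ncard_le hp0
      _ ≤ _ := hcard

lemma pddSet_le_one (r : ℕ) (P : Finset (Fin r → ℤ)) {α : ℝ} (h0 : 0 < α) (h1 : α ≤ 1)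
    {β : ℝ} (hβ : β ∈ pddSet r P α) : β ≤ 1 := by
  by_contra hc
  push_neg at hc
  have hε : (0 : ℝ) < (β - 1) / 2 := by linarith
  obtain ⟨N0, hN0⟩ := hβ _ hε
  set N := max N0 1 with hN
  have hN1 : 1 ≤ N := le_max_right _ _
  have hNr : (1 : ℝ) ≤ (N : ℝ) ^ r := one_le_pow₀ (by exact_mod_cast hN1)
  obtain ⟨d, hd, hcount⟩ := hN0 N (le_max_left _ _) (box r N)
    (fun a ha i => mem_box.mp ha i)
    (by rw [box_card]; push_cast; nlinarith)
  have hle : (({x : Fin r → ℤ | ∀ p ∈ P, x + d • p ∈ box r N}).ncard : ℝ) ≤ (N : ℝ) ^ r :=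
    goodX_ncard_le_real (subset_refl _)
  nlinarith

lemma pdd_bddAbove (r : ℕ) (P : Finset (Fin r → ℤ)) {α : ℝ} (h0 : 0 < α) (h1 : α ≤ 1) :
    BddAbove ({0} ∪ pddSet r P α) := by
  refine ⟨1, fun x hx => ?_⟩
  rcases hx with hx | hx
  · simp at hx; simp [hx]
  · exact pddSet_le_one r P h0 h1 hx

lemma pdd_nonneg (r : ℕ) (P : Finset (Fin r → ℤ)) {α : ℝ} (h0 : 0 < α) (h1 : α ≤ 1) :
    0 ≤ pdd r P α :=
  le_csSup (pdd_bddAbove r P h0 h1) (Or.inl rfl)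

set_option maxHeartbeats 2000000 in
lemma transfer (r : ℕ) (P Q : Finset (Fin r → ℤ))
    (M : Matrix (Fin r) (Fin r) ℚ) (hM : IsUnit M.det) (b : Fin r → ℚ)
    (hPQ : (fun p : Fin r → ℤ => M.mulVec (fun i => ((p i : ℚ))) + b) '' (↑P : Set (Fin r → ℤ))
        = (fun q : Fin r → ℤ => fun i => ((q i : ℚ))) '' (↑Q : Set (Fin r → ℤ))) :
    ∃ c : ℝ, 0 < c ∧ c < 1 ∧ ∀ α : ℝ, 0 < α → α < 1 →
      pddSet r Q (c * α) ⊆ pddSet r P α := by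
  classical
  -- clear denominators of M
  set L : ℕ := ∏ ij : Fin r × Fin r, (M ij.1 ij.2).den with hLdef
  have hL1 : 0 < L := Finset.prod_pos (fun ij _ => (M ij.1 ij.2).pos)
  have hLden : ∀ i j, (M i j).den ∣ L := fun i j =>
    Finset.dvd_prod_of_mem _ (Finset.mem_univ ((i, j) : Fin r × Fin r))
  have hT0 : ∀ i j, ∃ z : ℤ, (z : ℚ) = (L : ℚ) * M i j := fun i j => helper1 _ _ (hLden i j)
  choose T0 hT0 using hT0
  clear_value L
  set Tz : Matrix (Fin r) (Fin r) ℤ := Matrix.of T0 with hTzdef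
  clear_value Tz
  have hcast : ∀ (v : Fin r → ℤ) (i : Fin r),
      ((Tz.mulVec v) i : ℚ) = (L : ℚ) * (M.mulVec (fun j => (v j : ℚ))) i := by
    intro v i
    simp only [Matrix.mulVec, dotProduct, hTzdef, Matrix.of_apply]
    push_cast
    rw [Finset.mul_sum]
    refine Finset.sum_congr rfl (fun j _ => ?_)
    rw [hT0 i j]; ring
  have hMinj : ∀ v w : Fin r → ℚ, M.mulVec v = M.mulVec w → v = w := by
    intro v w h
    have h2 := congrArg (fun u => Matrix.mulVec M⁻¹ u) h
    simpa [Matrix.mulVec_mulVec, Matrix.nonsing_inv_mul M hM] using h2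
  have hTzinj : Function.Injective (fun v : Fin r → ℤ => Tz.mulVec v) := by
    intro v w h
    have h2 : M.mulVec (fun j => ((v j : ℚ))) = M.mulVec (fun j => ((w j : ℚ))) := by
      funext i
      have h3 : ((Tz.mulVec v) i : ℚ) = ((Tz.mulVec w) i : ℚ) := by
        simp only at h; rw [h]
      rw [hcast, hcast] at h3
      have hL0 : (L : ℚ) ≠ 0 := by positivity
      exact mul_left_cancel₀ hL0 h3
    have := hMinj _ _ h2
    funext i
    have := congrFun this i
    exact_mod_cast this
  set K : ℕ := ∑ i : Fin r, ∑ j : Fin r, (T0 i j).natAbs with hKdef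
  clear_value K
  set C : ℕ := 2 * K + 1 with hCdef
  clear_value C
  have hC1 : 1 ≤ C := by omega
  have hTbound : ∀ (N : ℕ) (v : Fin r → ℤ), (∀ j, 1 ≤ v j ∧ v j ≤ (N : ℤ)) →
      ∀ i, |Tz.mulVec v i| ≤ (K : ℤ) * N := by
    intro N v hv i
    have h1 : |Tz.mulVec v i| ≤ ∑ j, |T0 i j * v j| := by
      simpa [Matrix.mulVec, dotProduct, hTzdef] using
        Finset.abs_sum_le_sum_abs (fun j => T0 i j * v j) Finset.univ
    have h2 : ∑ j, |T0 i j * v j| ≤ ∑ j, |T0 i j| * (N : ℤ) := by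
      refine Finset.sum_le_sum (fun j _ => ?_)
      rw [abs_mul]
      refine mul_le_mul_of_nonneg_left ?_ (abs_nonneg _)
      have := hv j
      rw [abs_of_pos (by omega)]
      omega
    have h3 : ∑ j, |T0 i j| * (N : ℤ) ≤ (K : ℤ) * N := by
      rw [← Finset.sum_mul]
      refine mul_le_mul_of_nonneg_right ?_ (by positivity)
      have h4 : ∑ j, |T0 i j| = ((∑ j, (T0 i j).natAbs : ℕ) : ℤ) := by
        push_cast
        refine Finset.sum_congr rfl (fun j _ => ?_)
        rw [Int.abs_eq_natAbs]
      rw [h4]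
      have h5 : ∑ j, (T0 i j).natAbs ≤ K := by
        rw [hKdef]
        exact Finset.single_le_sum (f := fun i => ∑ j, (T0 i j).natAbs)
          (fun _ _ => Nat.zero_le _) (Finset.mem_univ i)
      exact_mod_cast h5
    omega
  -- gcd data
  set Dset : Finset ℤ := Finset.image (fun x : ((Fin r → ℤ) × (Fin r → ℤ)) × Fin r =>
    x.1.1 x.2 - x.1.2 x.2) ((P ×ˢ P) ×ˢ Finset.univ) with hDdef
  set gz : ℤ := Dset.gcd id with hgzdef
  clear_value gz
  set g : ℕ := max 1 gz.natAbs with hgdef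
  clear_value g
  have hg1 : 1 ≤ g := by rw [hgdef]; exact le_max_left _ _
  haveI : NeZero g := ⟨by omega⟩
  -- the constant
  set c : ℝ := 1 / (2 * (C : ℝ) ^ r * (g : ℝ) ^ r) with hcdef
  clear_value c
  have hCpow : (1 : ℝ) ≤ (C : ℝ) ^ r := one_le_pow₀ (by exact_mod_cast hC1)
  have hgpow : (1 : ℝ) ≤ (g : ℝ) ^ r := one_le_pow₀ (by exact_mod_cast hg1)
  have hc0 : 0 < c := by rw [hcdef]; positivity
  have hc1 : c < 1 := by
    rw [hcdef, div_lt_one (by positivity)]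
    nlinarith
  refine ⟨c, hc0, hc1, ?_⟩
  intro α hα0 hα1 β hβ
  rcases Nat.eq_zero_or_pos r with hr0 | hr
  · -- the degenerate case r = 0
    subst hr0
    intro ε hε
    obtain ⟨N0', hN0'⟩ := hβ ε hε
    refine ⟨max N0' 1, fun N hN A hbox hcard => ?_⟩
    haveI : Unique (Fin 0 → ℤ) := ⟨⟨fun i => i.elim0⟩, fun x => funext fun i => i.elim0⟩
    have hA1 : 0 < A.card := by
      by_contra h
      have hA0 : A.card = 0 := by omega
      rw [hA0] at hcard
      simp only [pow_zero, mul_one, Nat.cast_zero] at hcard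
      linarith
    obtain ⟨a0, ha0⟩ := Finset.card_pos.mp hA1
    refine ⟨1, one_ne_zero, ?_⟩
    have hgoodX : {x : Fin 0 → ℤ | ∀ p ∈ P, x + (1:ℤ) • p ∈ A} = Set.univ := by
      refine Set.eq_univ_of_forall (fun x p hp => ?_)
      have hxa : x + (1:ℤ) • p = a0 := Subsingleton.elim _ _
      rw [hxa]; exact ha0
    rw [hgoodX, Set.ncard_univ, Nat.card_unique]
    simp only [pow_zero, mul_one, Nat.cast_one]
    -- get β - ε ≤ 1 from the oracle
    obtain ⟨d'', hd'', hcnt⟩ := hN0' (max N0' 1) (le_max_left _ _) (box 0 (max N0' 1))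
      (fun a ha i => mem_box.mp ha i)
      (by rw [box_card]; simp only [pow_zero, Nat.cast_one]; nlinarith)
    have hub : (({y : Fin 0 → ℤ | ∀ q ∈ Q, y + d'' • q ∈ box 0 (max N0' 1)}).ncard : ℝ) ≤ 1 := by
      have h2 := Set.ncard_le_ncard (Set.subset_univ
        {y : Fin 0 → ℤ | ∀ q ∈ Q, y + d'' • q ∈ box 0 (max N0' 1)}) Set.finite_univ
      rw [Set.ncard_univ, Nat.card_unique] at h2
      exact_mod_cast h2
    simp only [pow_zero, mul_one] at hcnt
    linarith
  · -- main case: r ≥ 1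
    intro ε hε
    obtain ⟨N0', hN0'⟩ := hβ ε hε
    refine ⟨max (max N0' 1) ⌈(2 * (g : ℝ) ^ r) / α⌉₊, fun N hN A hbox hcard => ?_⟩
    have hN1 : 1 ≤ N := le_trans (le_trans (le_max_right _ _) (le_max_left _ _)) hN
    have hNN0' : N0' ≤ N := le_trans (le_trans (le_max_left _ _) (le_max_left _ _)) hN
    have hNg : (2 * (g : ℝ) ^ r) / α ≤ (N : ℝ) := by
      have := le_trans (le_max_right (max N0' 1) _) hN
      exact Nat.ceil_le.mp this
    have hNr1 : (1 : ℝ) ≤ (N : ℝ) := by exact_mod_cast hN1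
    have hNpow : (N : ℝ) ≤ (N : ℝ) ^ r := by
      calc (N : ℝ) = (N : ℝ) ^ 1 := (pow_one _).symm
        _ ≤ (N : ℝ) ^ r := pow_le_pow_right₀ hNr1 hr
    have hNgr : 2 * (g : ℝ) ^ r ≤ α * (N : ℝ) ^ r := by
      have h1 : 2 * (g : ℝ) ^ r ≤ α * N := by
        rw [div_le_iff₀ hα0] at hNg
        linarith [hNg]
      nlinarith
    -- pigeonhole: pass to a coset of g·ℤ^r
    set f : (Fin r → ℤ) → (Fin r → ZMod g) := (fun a i => ((a i : ZMod g))) with hfdef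
    clear_value f
    obtain ⟨ρ, _, hρ⟩ := Finset.exists_le_card_fiber_of_mul_le_card_of_maps_to
      (s := A) (t := (Finset.univ : Finset (Fin r → ZMod g))) (f := f)
      (n := A.card / g ^ r)
      (fun a _ => Finset.mem_univ _) ⟨(fun _ => 0), Finset.mem_univ _⟩
      (by
        have hcu : (Finset.univ : Finset (Fin r → ZMod g)).card = g ^ r := by
          rw [Finset.card_univ, Fintype.card_fun, ZMod.card, Fintype.card_fin]
        rw [hcu, mul_comm]
        exact Nat.div_mul_le_self _ _)
    set A' : Finset (Fin r → ℤ) := A.filter (fun a => f a = ρ) with hA'def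
    clear_value A'
    have hA'sub : A' ⊆ A := by rw [hA'def]; exact Finset.filter_subset _ _
    have hA'coset : ∀ a ∈ A', ∀ a' ∈ A', ∀ i, (g : ℤ) ∣ (a i - a' i) := by
      intro a ha a' ha' i
      rw [hA'def] at ha ha'
      have h1 : f a = ρ := (Finset.mem_filter.mp ha).2
      have h2 : f a' = ρ := (Finset.mem_filter.mp ha').2
      have h3 : ((a i : ZMod g)) = ((a' i : ZMod g)) := by
        have := congrFun (h1.trans h2.symm) i
        simpa [hfdef] using this
      have h4 : (((a i - a' i : ℤ)) : ZMod g) = 0 := by push_cast; rw [h3]; ring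
      exact (ZMod.intCast_zmod_eq_zero_iff_dvd _ _).mp h4
    have hgr0 : (0 : ℝ) < (g : ℝ) ^ r := by positivity
    have hA'card : α * (N : ℝ) ^ r / (2 * (g : ℝ) ^ r) ≤ (A'.card : ℝ) := by
      have hmod := Nat.div_add_mod A.card (g ^ r)
      have hlt : A.card % g ^ r < g ^ r := Nat.mod_lt _ (by positivity)
      have hub : (A.card : ℝ) < ((A.card / g ^ r : ℕ) : ℝ) * (g : ℝ) ^ r + (g : ℝ) ^ r := by
        have : (A.card : ℝ) = ((g ^ r * (A.card / g ^ r) + A.card % g ^ r : ℕ) : ℝ) := by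
          rw [hmod]
        rw [this]
        push_cast
        have : ((A.card % g ^ r : ℕ) : ℝ) < (g : ℝ) ^ r := by exact_mod_cast hlt
        have h0 : (0 : ℝ) ≤ ((A.card / g ^ r : ℕ) : ℝ) := by positivity
        nlinarith
      have hm : α * (N : ℝ) ^ r / (2 * (g : ℝ) ^ r) ≤ ((A.card / g ^ r : ℕ) : ℝ) := by
        rw [div_le_iff₀ (by positivity)]
        nlinarith
      calc α * (N : ℝ) ^ r / (2 * (g : ℝ) ^ r) ≤ ((A.card / g ^ r : ℕ) : ℝ) := hm
        _ ≤ (A'.card : ℝ) := by exact_mod_cast hρ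
    -- construct B
    set ψ : (Fin r → ℤ) → (Fin r → ℤ) := fun a i => Tz.mulVec a i + ((K : ℤ) * N + 1) with hψdef
    clear_value ψ
    have hψinj : Function.Injective ψ := by
      intro a a' h
      apply hTzinj
      simp only
      funext i
      have := congrFun h i
      simp only [hψdef] at this
      omega
    set B : Finset (Fin r → ℤ) := A'.image ψ with hBdef
    clear_value B
    have hBcard : B.card = A'.card := by
      rw [hBdef]; exact Finset.card_image_of_injective _ hψinj
    have hBbox : ∀ y ∈ B, ∀ i, 1 ≤ y i ∧ y i ≤ ((C * N : ℕ) : ℤ) := by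
      intro y hy i
      rw [hBdef] at hy
      obtain ⟨a, ha, rfl⟩ := Finset.mem_image.mp hy
      have hb := hTbound N a (fun j => hbox a (hA'sub ha) j) i
      have habs := abs_le.mp hb
      have hCN : ((C * N : ℕ) : ℤ) = (2 * (K : ℤ) + 1) * N := by push_cast [hCdef]; ring
      constructor
      · simp only [hψdef]; omega
      · simp only [hψdef]; rw [hCN]
        have h1N : (1 : ℤ) ≤ N := by exact_mod_cast hN1
        have hexp : (2 * (K : ℤ) + 1) * N = (K : ℤ) * N + (K : ℤ) * N + N := by ring
        rw [hexp]
        have h2 := habs.2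
        omega
    have hBdense : (c * α) * (((C * N : ℕ) : ℝ)) ^ r ≤ (B.card : ℝ) := by
      rw [hBcard]
      have heq : (c * α) * (((C * N : ℕ) : ℝ)) ^ r = α * (N : ℝ) ^ r / (2 * (g : ℝ) ^ r) := by
        have hCNr : (((C * N : ℕ) : ℝ)) = (C : ℝ) * (N : ℝ) := by exact_mod_cast Nat.cast_mul C N
        rw [hCNr, mul_pow, hcdef]
        have hC0 : (0 : ℝ) < (C : ℝ) ^ r := by positivity
        field_simp
      rw [heq]
      exact hA'card
    -- apply the oracle for Q
    obtain ⟨d', hd'0, hd'cnt⟩ := hN0' (C * N)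
      (le_trans hNN0' (Nat.le_mul_of_pos_left N (by omega))) B hBbox hBdense
    set goodY : Set (Fin r → ℤ) := {y | ∀ q ∈ Q, y + d' • q ∈ B} with hgoodYdef
    clear_value goodY
    by_cases hβε : β ≤ ε
    · refine ⟨1, one_ne_zero, ?_⟩
      have h1 : (β - ε) * (N : ℝ) ^ r ≤ 0 :=
        mul_nonpos_of_nonpos_of_nonneg (by linarith) (by positivity)
      have h2 : (0 : ℝ) ≤ (({x : Fin r → ℤ | ∀ p ∈ P, x + (1:ℤ) • p ∈ A}).ncard : ℝ) :=
        Nat.cast_nonneg _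
      linarith
    · push_neg at hβε
      have hCr : (0:ℝ) < (C:ℝ) := by exact_mod_cast (by omega : 0 < C)
      have hNr : (0:ℝ) < (N:ℝ) := by exact_mod_cast (by omega : 0 < N)
      have hCNpos : (0:ℝ) < ((C:ℝ) * (N:ℝ)) ^ r := by positivity
      have hYne : goodY.Nonempty := by
        rw [Set.nonempty_iff_ne_empty]
        intro h
        rw [h, Set.ncard_empty] at hd'cnt
        norm_num at hd'cnt
        nlinarith [hd'cnt, hCNpos, sub_pos.mpr hβε]
      have hgoodY_mem : ∀ y, y ∈ goodY ↔ ∀ q ∈ Q, y + d' • q ∈ B := fun y => by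
        rw [hgoodYdef]; exact Iff.rfl
      obtain ⟨ystar, hystar⟩ := hYne
      have hPne : P.Nonempty := by
        rcases P.eq_empty_or_nonempty with hP | hP
        · exfalso
          have hQe : Q = ∅ := by
            rw [hP] at hPQ
            simp only [Finset.coe_empty, Set.image_empty] at hPQ
            have := Set.image_eq_empty.mp hPQ.symm
            exact_mod_cast Finset.coe_eq_empty.mp this
          have hYuniv : goodY = Set.univ := by
            rw [hgoodYdef]
            ext y
            simp [hQe]
          have h0' : goodY.ncard = 0 := by rw [hYuniv]; exact (infinite_pi r hr).ncard
          rw [h0'] at hd'cnt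
          norm_num at hd'cnt
          nlinarith [hd'cnt, hCNpos, sub_pos.mpr hβε]
        · exact hP
      obtain ⟨p0, hp0⟩ := hPne
      have hqf : ∀ p ∈ P, ∃ q ∈ Q,
          (fun i => ((q i : ℚ))) = M.mulVec (fun i => ((p i : ℚ))) + b := by
        intro p hp
        have hmem2 : M.mulVec (fun i => ((p i : ℚ))) + b ∈
            (fun q : Fin r → ℤ => fun i => ((q i : ℚ))) '' (↑Q : Set (Fin r → ℤ)) := by
          rw [← hPQ]; exact ⟨p, hp, rfl⟩
        obtain ⟨q, hq, hqe⟩ := hmem2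
        exact ⟨q, hq, hqe⟩
      choose qf hqfQ hqfcast using hqf
      have hmemB : ∀ y ∈ goodY, ∀ p, ∀ hp : p ∈ P, ∃ a ∈ A', ψ a = y + d' • (qf p hp) := by
        intro y hy p hp
        have h1 : y + d' • (qf p hp) ∈ B := ((hgoodY_mem y).mp hy) _ (hqfQ p hp)
        rw [hBdef] at h1
        exact Finset.mem_image.mp h1
      have hdiff : ∀ (y : Fin r → ℤ) (p p' : Fin r → ℤ) (hp : p ∈ P) (hp' : p' ∈ P)
          (a a' : Fin r → ℤ), ψ a = y + d' • (qf p hp) → ψ a' = y + d' • (qf p' hp') →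
          ∀ i, (L : ℤ) * (a i - a' i) = d' * (p i - p' i) := by
        intro y p p' hp hp' a a' ha ha' i0
        have hz : ∀ i, Tz.mulVec a i - Tz.mulVec a' i
            = d' * ((qf p hp) i - (qf p' hp') i) := by
          intro i
          have e1 := congrFun ha i
          have e2 := congrFun ha' i
          simp only [hψdef, Pi.add_apply, Pi.smul_apply, smul_eq_mul] at e1 e2
          have : d' * ((qf p hp) i - (qf p' hp') i)
              = d' * (qf p hp) i - d' * (qf p' hp') i := by ring
          rw [this]
          omega
        have hQ1 : M.mulVec (fun i => (((L : ℤ) * (a i - a' i) : ℤ) : ℚ)) =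
            M.mulVec (fun i => ((d' * (p i - p' i) : ℤ) : ℚ)) := by
          funext i
          have lhs : M.mulVec (fun j => (((L : ℤ) * (a j - a' j) : ℤ) : ℚ)) i
              = (L : ℚ) * (M.mulVec (fun j => ((a j : ℚ))) i
                - M.mulVec (fun j => ((a' j : ℚ))) i) := by
            simp only [Matrix.mulVec, dotProduct]
            push_cast
            rw [mul_sub, Finset.mul_sum, Finset.mul_sum, ← Finset.sum_sub_distrib]
            exact Finset.sum_congr rfl fun j _ => by ring
          have rhs : M.mulVec (fun j => ((d' * (p j - p' j) : ℤ) : ℚ)) i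
              = (d' : ℚ) * (M.mulVec (fun j => ((p j : ℚ))) i
                - M.mulVec (fun j => ((p' j : ℚ))) i) := by
            simp only [Matrix.mulVec, dotProduct]
            push_cast
            rw [mul_sub, Finset.mul_sum, Finset.mul_sum, ← Finset.sum_sub_distrib]
            exact Finset.sum_congr rfl fun j _ => by ring
          rw [lhs, rhs]
          have h1 : (L:ℚ) * (M.mulVec (fun j => ((a j : ℚ))) i
              - M.mulVec (fun j => ((a' j : ℚ))) i)
              = ((Tz.mulVec a i : ℤ) : ℚ) - ((Tz.mulVec a' i : ℤ) : ℚ) := by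
            rw [hcast, hcast]; ring
          have h2 : ((Tz.mulVec a i : ℤ) : ℚ) - ((Tz.mulVec a' i : ℤ) : ℚ)
              = (d' : ℚ) * (((qf p hp) i : ℚ) - ((qf p' hp') i : ℚ)) := by
            exact_mod_cast congrArg (fun z : ℤ => (z : ℚ)) (hz i)
          have h3 : ((qf p hp) i : ℚ) = M.mulVec (fun j => ((p j : ℚ))) i + b i :=
            congrFun (hqfcast p hp) i
          have h4 : ((qf p' hp') i : ℚ) = M.mulVec (fun j => ((p' j : ℚ))) i + b i :=
            congrFun (hqfcast p' hp') i
          rw [h1, h2, h3, h4]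
          ring
        have h5 := congrFun (hMinj _ _ hQ1) i0
        exact_mod_cast h5
      have hL0 : (L : ℚ) ≠ 0 := by
        have : 0 < L := hL1
        positivity
      have hgq0 : (g : ℚ) ≠ 0 := by
        have : 0 < g := hg1
        positivity
      have hkey : ∃ θ : ℤ, θ ≠ 0 ∧ ∀ y ∈ goodY, ∃ x : Fin r → ℤ,
          (∀ p ∈ P, x + θ • p ∈ A) ∧ ψ (x + θ • p0) = y + d' • (qf p0 hp0) := by
        by_cases hsing : ∀ p ∈ P, p = p0
        · refine ⟨1, one_ne_zero, fun y hy => ?_⟩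
          obtain ⟨a, haA', haψ⟩ := hmemB y hy p0 hp0
          refine ⟨a - (1:ℤ) • p0, fun p hp => ?_, ?_⟩
          · have hxa : a - (1:ℤ) • p0 + (1:ℤ) • p = a := by
              rw [hsing p hp]
              funext i
              simp only [Pi.add_apply, Pi.sub_apply, Pi.smul_apply, smul_eq_mul]
              ring
            rw [hxa]; exact hA'sub haA'
          · have hxa : a - (1:ℤ) • p0 + (1:ℤ) • p0 = a := by
              funext i
              simp only [Pi.add_apply, Pi.sub_apply, Pi.smul_apply, smul_eq_mul]
              ring
            rw [hxa]; exact haψ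
        · push_neg at hsing
          obtain ⟨p1, hp1, hp1ne⟩ := hsing
          choose af hafA' hafψ using hmemB ystar hystar
          set μ : ℚ := (d' : ℚ) / ((L : ℚ) * (g : ℚ)) with hμdef
          clear_value μ
          have hμv : ∀ v ∈ Dset, (μ.den : ℤ) ∣ v := by
            intro v hv
            rw [hDdef] at hv
            obtain ⟨⟨⟨p, p'⟩, i⟩, hxmem, rfl⟩ := Finset.mem_image.mp hv
            have hx1 := Finset.mem_product.mp hxmem
            have hpP : p ∈ P := (Finset.mem_product.mp hx1.1).1
            have hp'P : p' ∈ P := (Finset.mem_product.mp hx1.1).2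
            have hd := hdiff ystar p p' hpP hp'P (af p hpP) (af p' hp'P)
              (hafψ p hpP) (hafψ p' hp'P) i
            obtain ⟨k, hk⟩ := hA'coset (af p hpP) (hafA' p hpP) (af p' hp'P) (hafA' p' hp'P) i
            rw [hk] at hd
            have hq : (d' : ℚ) * (((p i - p' i : ℤ)) : ℚ) = (L : ℚ) * ((g : ℚ) * (k : ℚ)) := by
              exact_mod_cast hd.symm
            refine helper2 μ _ k ?_
            rw [hμdef]
            field_simp
            push_cast at hq ⊢
            linarith [hq]
          have hgzdvd : (μ.den : ℤ) ∣ gz := by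
            rw [hgzdef]
            exact Finset.dvd_gcd (fun v hv => hμv v hv)
          have hgzne : gz ≠ 0 := by
            intro h0'
            rw [hgzdef, Finset.gcd_eq_zero_iff] at h0'
            obtain ⟨i0, hi0⟩ := Function.ne_iff.mp hp1ne
            have hmem3 : ((⟨⟨p1, p0⟩, i0⟩ : ((Fin r → ℤ) × (Fin r → ℤ)) × Fin r))
                ∈ (P ×ˢ P) ×ˢ Finset.univ :=
              Finset.mem_product.mpr ⟨Finset.mem_product.mpr ⟨hp1, hp0⟩, Finset.mem_univ _⟩
            have h8 := h0' _ (Finset.mem_image_of_mem _ hmem3)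
            simp only [id_eq] at h8
            exact hi0 (by omega)
          have hgnat : g = gz.natAbs := by
            have h7 : 0 < gz.natAbs := Int.natAbs_pos.mpr hgzne
            omega
          have hdeng : μ.den ∣ g := by
            rw [hgnat]
            have h6 : (μ.den : ℤ) ∣ (gz.natAbs : ℤ) := (Int.dvd_natAbs).mpr hgzdvd
            exact_mod_cast h6
          obtain ⟨θ, hθ⟩ := helper1 μ g hdeng
          have hθL : (d' : ℚ) = (L : ℚ) * (θ : ℚ) := by
            rw [hθ, hμdef]
            field_simp
          have hd'L : d' = (L : ℤ) * θ := by exact_mod_cast hθL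
          have hθ0 : θ ≠ 0 := by
            intro h0'
            rw [h0', mul_zero] at hd'L
            exact hd'0 hd'L
          refine ⟨θ, hθ0, fun y hy => ?_⟩
          choose ay hayA' hayψ using hmemB y hy
          refine ⟨ay p0 hp0 - θ • p0, fun p hp => ?_, ?_⟩
          · have hco : ∀ i, (ay p hp) i - (ay p0 hp0) i = θ * (p i - p0 i) := by
              intro i
              have hd := hdiff y p p0 hp hp0 (ay p hp) (ay p0 hp0)
                (hayψ p hp) (hayψ p0 hp0) i
              rw [hd'L] at hd
              have hL0' : (L : ℤ) ≠ 0 := by exact_mod_cast hL1.ne'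
              have h9 : (L:ℤ) * ((ay p hp) i - (ay p0 hp0) i)
                  = (L:ℤ) * (θ * (p i - p0 i)) := by linarith [hd]
              exact mul_left_cancel₀ hL0' h9
            have hxp : ay p0 hp0 - θ • p0 + θ • p = ay p hp := by
              funext i
              simp only [Pi.add_apply, Pi.sub_apply, Pi.smul_apply, smul_eq_mul]
              linarith [hco i]
            rw [hxp]; exact hA'sub (hayA' p hp)
          · have hxx : ay p0 hp0 - θ • p0 + θ • p0 = ay p0 hp0 := by
              funext i
              simp only [Pi.add_apply, Pi.sub_apply, Pi.smul_apply, smul_eq_mul]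
              ring
            rw [hxx]; exact hayψ p0 hp0
      obtain ⟨θ, hθ0, hkey⟩ := hkey
      refine ⟨θ, hθ0, ?_⟩
      choose xf hxfA hxfψ using hkey
      set F : (Fin r → ℤ) → (Fin r → ℤ) := fun y => if h : y ∈ goodY then xf y h else 0
        with hFdef
      clear_value F
      have hmaps : ∀ y ∈ goodY, F y ∈ {x : Fin r → ℤ | ∀ p ∈ P, x + θ • p ∈ A} := by
        intro y hy
        rw [hFdef]
        simp only [dif_pos hy]
        exact fun p hp => hxfA y hy p hp
      have hinj : Set.InjOn F goodY := by
        intro y1 h1 y2 h2 he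
        rw [hFdef] at he
        simp only [dif_pos h1, dif_pos h2] at he
        have e1 := hxfψ y1 h1
        have e2 := hxfψ y2 h2
        rw [he] at e1
        exact add_right_cancel (e1.symm.trans e2)
      have hfin : ({x : Fin r → ℤ | ∀ p ∈ P, x + θ • p ∈ A}).Finite := goodX_finite hp0
      have hcnt2 : goodY.ncard ≤ ({x : Fin r → ℤ | ∀ p ∈ P, x + θ • p ∈ A}).ncard :=
        Set.ncard_le_ncard_of_injOn F hmaps hinj hfin
      have hpowle : ((N:ℝ))^r ≤ (((C*N : ℕ)):ℝ)^r := by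
        have h10 : (N : ℝ) ≤ ((C*N:ℕ) : ℝ) := by
          exact_mod_cast Nat.le_mul_of_pos_left N (by omega : 0 < C)
        exact pow_le_pow_left₀ (by positivity) h10 r
      calc (β - ε) * (N:ℝ)^r ≤ (β - ε) * ((C*N:ℕ):ℝ)^r :=
            mul_le_mul_of_nonneg_left hpowle (by linarith)
        _ ≤ (goodY.ncard : ℝ) := hd'cnt
        _ ≤ _ := by exact_mod_cast hcnt2

theorem stmt7 (r : ℕ) (P Q : Finset (Fin r → ℤ))
    (M : Matrix (Fin r) (Fin r) ℚ) (hM : IsUnit M.det) (b : Fin r → ℚ)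
    (hPQ : (fun p : Fin r → ℤ => M.mulVec (fun i => ((p i : ℚ))) + b) '' (↑P : Set (Fin r → ℤ))
        = (fun q : Fin r → ℤ => fun i => ((q i : ℚ))) '' (↑Q : Set (Fin r → ℤ))) :
    ∃ c : ℝ, 0 < c ∧ c < 1 ∧
      ∀ α : ℝ, 0 < α → α < 1 → pdd r Q (c * α) ≤ pdd r P α := by
  obtain ⟨c, hc0, hc1, htr⟩ := transfer r P Q M hM b hPQ
  refine ⟨c, hc0, hc1, fun α hα0 hα1 => ?_⟩
  rw [pdd_def, pdd_def]
  refine csSup_le ⟨0, Or.inl rfl⟩ (fun x hx => ?_)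
  rcases hx with hx | hx
  · rw [Set.mem_singleton_iff] at hx
    subst hx
    exact le_csSup (pdd_bddAbove r P hα0 hα1.le) (Or.inl rfl)
  · exact le_csSup (pdd_bddAbove r P hα0 hα1.le) (Or.inr (htr α hα0 hα1 hx))
end

section
/- Let m1, m2, m3, m4 be positive integers. Then there exist nonzero complex numbers A, B, C with B/A ∉ ℝ such that BC(B − C) = m2·m3, CA(C − A) = m1·m4, and AB(A − B) = m1·m2. -/
theorem stmt9 (m1 m2 m3 m4 : ℕ) (h1 : 0 < m1) (h2 : 0 < m2) (h3 : 0 < m3) (h4 : 0 < m4) :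
    ∃ A B C : ℂ, A ≠ 0 ∧ B ≠ 0 ∧ C ≠ 0 ∧ (B / A).im ≠ 0 ∧
      B * C * (B - C) = (m2 : ℂ) * (m3 : ℂ) ∧
      C * A * (C - A) = (m1 : ℂ) * (m4 : ℂ) ∧
      A * B * (A - B) = (m1 : ℂ) * (m2 : ℂ) := by
  have h1' : (0:ℝ) < m1 := by exact_mod_cast h1
  have h2' : (0:ℝ) < m2 := by exact_mod_cast h2
  have h3' : (0:ℝ) < m3 := by exact_mod_cast h3
  have h4' : (0:ℝ) < m4 := by exact_mod_cast h4
  obtain ⟨α, hα, hαm⟩ : ∃ α : ℝ, 0 < α ∧ (m1:ℝ)*α = m3 :=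
    ⟨(m3:ℝ)/(m1:ℝ), div_pos h3' h1', by field_simp⟩
  obtain ⟨β, hβ, hβm⟩ : ∃ β : ℝ, 0 < β ∧ (m2:ℝ)*β = m4 :=
    ⟨(m4:ℝ)/(m2:ℝ), div_pos h4' h2', by field_simp⟩
  obtain ⟨s, hspos, hs2⟩ : ∃ s : ℝ, 0 < s ∧ s^2 = α*β*(1+α+β) :=
    ⟨Real.sqrt (α*β*(1+α+β)), Real.sqrt_pos.2 (by positivity), Real.sq_sqrt (by positivity)⟩
  obtain ⟨t, htpos, htr⟩ : ∃ t : ℝ, 0 < t ∧ t*(1+β) = 1 :=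
    ⟨(1+β)⁻¹, by positivity, inv_mul_cancel₀ (by positivity)⟩
  -- complex versions of the relations
  have hs2c : (s:ℂ)^2 = (α:ℂ)*(β:ℂ)*(1+(α:ℂ)+(β:ℂ)) := by exact_mod_cast congrArg Complex.ofReal hs2
  have htc : (t:ℂ)*(1+(β:ℂ)) = 1 := by exact_mod_cast congrArg Complex.ofReal htr
  have hαc : (m1:ℂ)*(α:ℂ) = (m3:ℂ) := by exact_mod_cast congrArg Complex.ofReal hαm
  have hβc : (m2:ℂ)*(β:ℂ) = (m4:ℂ) := by exact_mod_cast congrArg Complex.ofReal hβm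
  set M : ℂ := -(α:ℂ) + (s:ℂ)*Complex.I with hMdef
  set v : ℂ := (t:ℂ) * M with hvdef
  have hvre : v.re = -(t*α) := by
    simp [hvdef, hMdef, Complex.mul_re, Complex.mul_im]
  have hvim : v.im = t*s := by
    simp [hvdef, hMdef, Complex.mul_re, Complex.mul_im]
  have hvim0 : v.im ≠ 0 := by rw [hvim]; positivity
  have hM : M^2 + 2*(α:ℂ)*M + ((α:ℂ)^2+(α:ℂ)*(β:ℂ))*(1+(β:ℂ)) = 0 := by
    rw [hMdef]
    linear_combination (s:ℂ)^2*Complex.I_sq - hs2c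
  have hQ : (1+(β:ℂ))*v^2 + 2*(α:ℂ)*v + (α:ℂ)^2 + (α:ℂ)*(β:ℂ) = 0 := by
    rw [hvdef]
    linear_combination ((1:ℂ)+(β:ℂ))*(t:ℂ)^2*hM
      - ((2:ℂ)*(α:ℂ)*(t:ℂ)*M + ((α:ℂ)^2+(α:ℂ)*(β:ℂ))*(1+(1+(β:ℂ))*(t:ℂ)))*htc
  have hvα : v + (α:ℂ) ≠ 0 := by
    intro h
    apply hvim0
    have := congrArg Complex.im h
    simpa using this
  set u : ℂ := (v^2 + (α:ℂ))/(v + (α:ℂ)) with hudef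
  have hu : u * (v + (α:ℂ)) = v^2 + (α:ℂ) := div_mul_cancel₀ _ hvα
  -- u has nonzero imaginary part
  have huim : u.im ≠ 0 := by
    rw [hudef, Complex.div_im, div_sub_div_same]
    have hnspos : 0 < Complex.normSq (v + (α:ℂ)) := Complex.normSq_pos.2 hvα
    have e1 : (v^2 + (α:ℂ)).im = 2*v.re*v.im := by
      simp [pow_two, Complex.mul_im]
      try ring
    have e2 : (v^2 + (α:ℂ)).re = v.re^2 - v.im^2 + α := by
      simp [pow_two, Complex.mul_re]
      try ring
    have e3 : (v + (α:ℂ)).re = v.re + α := by simp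
    have e4 : (v + (α:ℂ)).im = v.im := by simp
    have hnum : (v^2 + (α:ℂ)).im * (v + (α:ℂ)).re - (v^2 + (α:ℂ)).re * (v + (α:ℂ)).im
        = -(t^2*s*α*(1+α)) := by
      rw [e1, e2, e3, e4, hvre, hvim]
      linear_combination (t^3*s)*hs2 + (t^2*s*α*(α+β) + t*s*α)*htr
    rw [hnum]
    have hneg : -(t^2*s*α*(1+α)) / Complex.normSq (v + (α:ℂ)) < 0 :=
      div_neg_of_neg_of_pos (by
        have : 0 < t^2*s*α*(1+α) := by positivity
        linarith) hnspos
    exact ne_of_lt hneg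
  have hu0 : u ≠ 0 := by intro h; apply huim; rw [h]; simp
  have hv0 : v ≠ 0 := by intro h; apply hvim0; rw [h]; simp
  have h1mu : (1:ℂ) - u ≠ 0 := by
    intro h
    apply huim
    have := congrArg Complex.im h
    simpa using this.symm
  have hw : u*(1-u) ≠ 0 := mul_ne_zero hu0 h1mu
  have hm1c : (m1:ℂ) ≠ 0 := Nat.cast_ne_zero.2 h1.ne'
  have hm2c : (m2:ℂ) ≠ 0 := Nat.cast_ne_zero.2 h2.ne'
  obtain ⟨A, hA⟩ := IsAlgClosed.exists_pow_nat_eq (((m1:ℂ)*(m2:ℂ))/(u*(1-u))) (n := 3) (by norm_num)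
  have hA0 : A ≠ 0 := by
    intro h
    rw [h] at hA
    simp only [ne_eq, zero_pow, OfNat.ofNat_ne_zero, not_false_eq_true] at hA
    exact (div_ne_zero (mul_ne_zero hm1c hm2c) hw) hA.symm
  -- key polynomial identity for the second equation
  have hvv : (m2:ℂ)*(v*(v-1)*(v+(α:ℂ))^2) = (m4:ℂ)*((v^2+(α:ℂ))*(v-v^2)) := by
    linear_combination (m2:ℂ)*v*(v-1)*hQ + ((v^2+(α:ℂ))*(v-v^2))*hβc
  have hf2 : (m1:ℂ)*(m2:ℂ)*(v*(v-1)) = (m1:ℂ)*(m4:ℂ)*(u*(1-u)) := by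
    have hG4 : (m1:ℂ)*(m2:ℂ)*(v*(v-1))*(v+(α:ℂ))^2 = (m1:ℂ)*(m4:ℂ)*(u*(1-u))*(v+(α:ℂ))^2 := by
      linear_combination (m1:ℂ)*hvv
        - ((m1:ℂ)*(m4:ℂ)*(v+(α:ℂ) - u*(v+(α:ℂ)) - (v^2+(α:ℂ))))*hu
    exact mul_right_cancel₀ (pow_ne_zero 2 hvα) hG4
  refine ⟨A, A*u, A*v, hA0, mul_ne_zero hA0 hu0, mul_ne_zero hA0 hv0, ?_, ?_, ?_, ?_⟩
  · rw [mul_comm A u, mul_div_assoc, div_self hA0, mul_one]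
    exact huim
  · have h : (A*u)*(A*v)*((A*u) - (A*v)) = A^3 * (u*v*(u-v)) := by ring
    rw [h, hA, div_mul_eq_mul_div, div_eq_iff hw]
    linear_combination ((m1:ℂ)*(m2:ℂ)*u)*hu + ((m2:ℂ)*u*(1-u))*hαc
  · have h : (A*v)*A*((A*v) - A) = A^3 * (v*(v-1)) := by ring
    rw [h, hA, div_mul_eq_mul_div, div_eq_iff hw]
    linear_combination hf2
  · have h : A*(A*u)*(A - A*u) = A^3 * (u*(1-u)) := by ring
    rw [h, hA, div_mul_cancel₀ _ hw]
end

section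
/- Let m1, m2, m3, m4 be positive integers and let A, B, C be nonzero complex numbers satisfying BC(B − C) = m2·m3, CA(C − A) = m1·m4, and AB(A − B) = m1·m2. Define f : ℂ × ℂ → ℂ by f(x, y) = (m2·A·x + m1·B·y)² / A. Then for all integers n1, n2, d: m2·m3·f(n1 + m1·d, n2) + m1·m4·f(n1, n2 + m2·d) + m1·m2·f(n1 − m3·d, n2 − m4·d) = (m2·m3 + m1·m4 + m1·m2)·f(n1, n2). -/
theorem stmt10 (m1 m2 m3 m4 : ℕ) (h1 : 0 < m1) (h2 : 0 < m2) (h3 : 0 < m3) (h4 : 0 < m4)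
    (A B C : ℂ) (hA : A ≠ 0) (hB : B ≠ 0) (hC : C ≠ 0)
    (e1 : B * C * (B - C) = (m2 : ℂ) * (m3 : ℂ))
    (e2 : C * A * (C - A) = (m1 : ℂ) * (m4 : ℂ))
    (e3 : A * B * (A - B) = (m1 : ℂ) * (m2 : ℂ))
    (f : ℂ → ℂ → ℂ)
    (hf : ∀ x y : ℂ, f x y = ((m2 : ℂ) * A * x + (m1 : ℂ) * B * y) ^ 2 / A) :
    ∀ n1 n2 d : ℤ,
      (m2 : ℂ) * (m3 : ℂ) * f ((n1 : ℂ) + (m1 : ℂ) * (d : ℂ)) (n2 : ℂ) +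
        (m1 : ℂ) * (m4 : ℂ) * f (n1 : ℂ) ((n2 : ℂ) + (m2 : ℂ) * (d : ℂ)) +
        (m1 : ℂ) * (m2 : ℂ) * f ((n1 : ℂ) - (m3 : ℂ) * (d : ℂ)) ((n2 : ℂ) - (m4 : ℂ) * (d : ℂ)) =
      ((m2 : ℂ) * (m3 : ℂ) + (m1 : ℂ) * (m4 : ℂ) + (m1 : ℂ) * (m2 : ℂ)) * f (n1 : ℂ) (n2 : ℂ) := by
  intro n1 n2 d
  simp only [hf, div_eq_mul_inv]
  set p : ℂ := (m2 : ℂ) * (m3 : ℂ) with hp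
  set q : ℂ := (m1 : ℂ) * (m4 : ℂ) with hq
  set r : ℂ := (m1 : ℂ) * (m2 : ℂ) with hr
  set P : ℂ := B * C * (B - C) with hP
  set Q : ℂ := C * A * (C - A) with hQ
  set R : ℂ := A * B * (A - B) with hR
  linear_combination
    (-(d : ℂ) ^ 2 * A⁻¹ * (r ^ 2 * A ^ 2 + r * A * ((p + P) * A + 2 * q * B))) * e1 +
    (-(d : ℂ) ^ 2 * A⁻¹ * (r ^ 2 * B ^ 2 + r * B * ((q + Q) * B + 2 * P * A))) * e2 +
    (-(d : ℂ) ^ 2 * A⁻¹ * ((r + R) * (P * A ^ 2 + Q * B ^ 2) + (P * A + Q * B) ^ 2)) * e3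
end

section
/- Let m1, m2, m3, m4 be positive integers. There exists a constant c > 0 (depending on m1, m2, m3, m4) such that for every integer L > 0 there exists a subset Λ ⊆ {0, 1, …, L − 1} with |Λ| ≥ L·exp(−c·√(log L)) such that the only quadruples (x, y, z, w) ∈ Λ⁴ satisfying m2·m3·x + m1·m4·y + m1·m2·z = (m2·m3 + m1·m4 + m1·m2)·w are those with x = y = z = w. -/
open Finset

lemma digits_unique : ∀ (n K : ℕ) (g h : Fin n → ℕ),
    (∀ i, g i < K) → (∀ i, h i < K) →
    (∑ i, g i * K ^ (i : ℕ)) = (∑ i, h i * K ^ (i : ℕ)) → g = h := by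
  intro n
  induction n with
  | zero => intro K g h _ _ _; funext i; exact i.elim0
  | succ m ih =>
    intro K g h hg hh heq
    rw [Fin.sum_univ_succ, Fin.sum_univ_succ] at heq
    simp only [Fin.val_zero, pow_zero, mul_one, Fin.val_succ] at heq
    have h1 : ∀ (u : Fin m → ℕ), (∑ i : Fin m, u i * K ^ ((i:ℕ)+1))
        = K * ∑ i : Fin m, u i * K ^ (i:ℕ) := by
      intro u
      rw [Finset.mul_sum]
      exact Finset.sum_congr rfl fun i _ => by ring
    rw [h1, h1] at heq
    have hK : 0 < K := Nat.pos_of_ne_zero (by rintro rfl; exact Nat.not_lt_zero _ (hg 0))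
    have h0 : g 0 = h 0 := by
      have := congrArg (· % K) heq
      simpa [Nat.add_mul_mod_self_left, Nat.mod_eq_of_lt (hg 0), Nat.mod_eq_of_lt (hh 0)] using this
    have htail : (g ∘ Fin.succ) = (h ∘ Fin.succ) := by
      apply ih K _ _ (fun i => hg i.succ) (fun i => hh i.succ)
      have : K * (∑ i : Fin m, g i.succ * K ^ (i:ℕ)) = K * (∑ i : Fin m, h i.succ * K ^ (i:ℕ)) := by
        omega
      exact Nat.eq_of_mul_eq_mul_left hK this
    funext i
    refine Fin.cases h0 (fun j => ?_) i
    exact congrFun htail j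

lemma digits_lt : ∀ (n K : ℕ) (g : Fin n → ℕ), (∀ i, g i < K) →
    (∑ i, g i * K ^ (i : ℕ)) < K ^ n := by
  intro n
  induction n with
  | zero => intro K g _; simp
  | succ m ih =>
    intro K g hg
    rw [Fin.sum_univ_succ]
    simp only [Fin.val_zero, pow_zero, mul_one, Fin.val_succ]
    have h1 : (∑ i : Fin m, g i.succ * K ^ ((i:ℕ)+1))
        = K * ∑ i : Fin m, g i.succ * K ^ (i:ℕ) := by
      rw [Finset.mul_sum]; exact Finset.sum_congr rfl fun i _ => by ring
    rw [h1]
    have h2 : (∑ i : Fin m, g i.succ * K ^ (i:ℕ)) < K ^ m := by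
      simpa [Function.comp] using ih K (g ∘ Fin.succ) (fun i => hg i.succ)
    have h3 : K * ((∑ i : Fin m, g i.succ * K ^ (i:ℕ)) + 1) ≤ K * K ^ m :=
      Nat.mul_le_mul_left K (by omega)
    rw [Nat.mul_add, mul_one] at h3
    have h5 : K ^ (m+1) = K * K ^ m := pow_succ' K m
    have := hg 0
    omega

lemma sphere_triv (n a b c k : ℕ) (ha : 0 < a) (hb : 0 < b) (hc : 0 < c)
    (x y z w : Fin n → ℕ)
    (hx : ∑ i, (x i)^2 = k) (hy : ∑ i, (y i)^2 = k)
    (hz : ∑ i, (z i)^2 = k) (hw : ∑ i, (w i)^2 = k)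
    (heq : ∀ i, a * x i + b * y i + c * z i = (a+b+c) * w i) :
    x = w ∧ y = w ∧ z = w := by
  have ha' : (0:ℤ) < a := by exact_mod_cast ha
  have hb' : (0:ℤ) < b := by exact_mod_cast hb
  have hc' : (0:ℤ) < c := by exact_mod_cast hc
  have heq' : ∀ i, (a:ℤ) * x i + b * y i + c * z i = ((a:ℤ)+b+c) * w i := by
    intro i; exact_mod_cast heq i
  have hx' : ∑ i, ((x i : ℤ))^2 = k := by exact_mod_cast hx
  have hy' : ∑ i, ((y i : ℤ))^2 = k := by exact_mod_cast hy
  have hz' : ∑ i, ((z i : ℤ))^2 = k := by exact_mod_cast hz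
  have hw' : ∑ i, ((w i : ℤ))^2 = k := by exact_mod_cast hw
  have key : ∑ i, ((a:ℤ)*b*((x i:ℤ) - y i)^2 + (a:ℤ)*c*((x i:ℤ) - z i)^2
      + (b:ℤ)*c*((y i:ℤ) - z i)^2) = 0 := by
    have hpt : ∀ i ∈ Finset.univ, (a:ℤ)*b*((x i:ℤ) - y i)^2 + (a:ℤ)*c*((x i:ℤ) - z i)^2
        + (b:ℤ)*c*((y i:ℤ) - z i)^2
        = ((a:ℤ)+b+c)*(a:ℤ)*(x i:ℤ)^2 + ((a:ℤ)+b+c)*(b:ℤ)*(y i:ℤ)^2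
          + ((a:ℤ)+b+c)*(c:ℤ)*(z i:ℤ)^2 - ((a:ℤ)+b+c)^2*(w i:ℤ)^2 := by
      intro i _
      have h := heq' i
      linear_combination (-((a:ℤ)*(x i:ℤ) + (b:ℤ)*(y i:ℤ) + (c:ℤ)*(z i:ℤ)
        + ((a:ℤ)+b+c)*(w i:ℤ))) * h
    rw [Finset.sum_congr rfl hpt, Finset.sum_sub_distrib, Finset.sum_add_distrib,
      Finset.sum_add_distrib, ← Finset.mul_sum, ← Finset.mul_sum, ← Finset.mul_sum,
      ← Finset.mul_sum, hx', hy', hz', hw']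
    ring
  have hnn : ∀ i ∈ Finset.univ, (0:ℤ) ≤ (a:ℤ)*b*((x i:ℤ) - y i)^2
      + (a:ℤ)*c*((x i:ℤ) - z i)^2 + (b:ℤ)*c*((y i:ℤ) - z i)^2 := by
    intro i _; positivity
  have hterm := (Finset.sum_eq_zero_iff_of_nonneg hnn).mp key
  have sq0 : ∀ (u v : ℤ) (p : ℤ), 0 < p → p * (u - v)^2 = 0 → u = v := by
    intro u v p hp h
    rcases mul_eq_zero.mp h with h' | h'
    · exact absurd h' (ne_of_gt hp)
    · exact sub_eq_zero.mp (pow_eq_zero_iff two_ne_zero |>.mp h')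
  have hxyz : ∀ i, x i = y i ∧ x i = z i := by
    intro i
    have h0 := hterm i (Finset.mem_univ i)
    have t1 : (0:ℤ) ≤ (a:ℤ)*b*((x i:ℤ) - y i)^2 := by positivity
    have t2 : (0:ℤ) ≤ (a:ℤ)*c*((x i:ℤ) - z i)^2 := by positivity
    have t3 : (0:ℤ) ≤ (b:ℤ)*c*((y i:ℤ) - z i)^2 := by positivity
    constructor
    · have e1 : (a:ℤ)*b*((x i:ℤ) - y i)^2 = 0 := by linarith
      exact_mod_cast sq0 _ _ _ (by positivity) e1
    · have e2 : (a:ℤ)*c*((x i:ℤ) - z i)^2 = 0 := by linarith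
      exact_mod_cast sq0 _ _ _ (by positivity) e2
  have hxw : ∀ i, x i = w i := by
    intro i
    have h := heq i
    rw [← (hxyz i).1, ← (hxyz i).2] at h
    have : (a+b+c) * x i = (a+b+c) * w i := by rw [← h]; ring
    exact Nat.eq_of_mul_eq_mul_left (by omega) this
  refine ⟨funext hxw, funext fun i => ?_, funext fun i => ?_⟩
  · rw [← (hxyz i).1]; exact hxw i
  · rw [← (hxyz i).2]; exact hxw i


lemma behrend_key (a b c d n : ℕ) (ha : 0 < a) (hb : 0 < b) (hc : 0 < c) (hd : 0 < d) :
    ∃ Λ : Finset ℕ, (∀ u ∈ Λ, u < ((a+b+c)*d)^n) ∧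
      ((d:ℝ)^n / ((n:ℝ)*(d:ℝ)^2+1) ≤ Λ.card) ∧
      ∀ x ∈ Λ, ∀ y ∈ Λ, ∀ z ∈ Λ, ∀ w ∈ Λ,
        a*x + b*y + c*z = (a+b+c)*w → x = w ∧ y = w ∧ z = w := by
  obtain ⟨K, hK⟩ : ∃ t, t = (a+b+c)*d := ⟨_, rfl⟩
  have hdK : d ≤ K := hK ▸ Nat.le_mul_of_pos_left d (by omega)
  have bnd : ∀ (p q r : ℕ), p < d → q < d → r < d → a*p + b*q + c*r < K := by
    intro p q r hp hq hr
    have h1 : a * p ≤ a * (d-1) := Nat.mul_le_mul_left a (by omega)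
    have h2 : b * q ≤ b * (d-1) := Nat.mul_le_mul_left b (by omega)
    have h3 : c * r ≤ c * (d-1) := Nat.mul_le_mul_left c (by omega)
    have e : a*(d-1) + b*(d-1) + c*(d-1) = (a+b+c)*(d-1) := by ring
    have h5 : K = (a+b+c)*(d-1) + (a+b+c) := by
      rw [hK]
      have hd' : (a+b+c)*d = (a+b+c)*((d-1)+1) := by rw [Nat.sub_add_cancel hd]
      rw [hd', Nat.mul_add, Nat.mul_one]
    omega
  set box : Finset (Fin n → ℕ) := Fintype.piFinset (fun _ => Finset.range d) with hboxdef
  clear_value box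
  have hbox : ∀ f ∈ box, ∀ i, f i < d := by
    rw [hboxdef]
    exact fun f hf i => Finset.mem_range.mp (Fintype.mem_piFinset.mp hf i)
  have hboxcard : box.card = d ^ n := by
    rw [hboxdef]; simp [Fintype.card_piFinset]
  obtain ⟨M, hM⟩ : ∃ t, t = n * d^2 + 1 := ⟨_, rfl⟩
  have hfib : ∀ f ∈ box, (∑ i, (f i)^2) ∈ Finset.range M := by
    intro f hf
    rw [Finset.mem_range]
    have h1 : ∀ i ∈ Finset.univ, (f i)^2 ≤ d^2 - 1 := by
      intro i _
      have h2 : f i ^ 2 < d ^ 2 := Nat.pow_lt_pow_left (hbox f hf i) two_ne_zero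
      omega
    have h3 := Finset.sum_le_card_nsmul Finset.univ (fun i => (f i)^2) (d^2-1) h1
    simp only [Finset.card_univ, Fintype.card_fin, smul_eq_mul] at h3
    have h4 : n * (d^2-1) ≤ n * d^2 := Nat.mul_le_mul_left n (by omega)
    omega
  have hsplit : box.card = ∑ k ∈ Finset.range M,
      (box.filter fun f => ∑ i, (f i)^2 = k).card :=
    Finset.card_eq_sum_card_fiberwise hfib
  have hMpos : 0 < M := hM ▸ Nat.succ_pos _
  have hMpos' : (0:ℝ) < M := by exact_mod_cast hMpos
  have hpig : ∃ k ∈ Finset.range M,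
      ((d:ℝ)^n / M) ≤ ((box.filter fun f => ∑ i, (f i)^2 = k).card : ℝ) := by
    apply Finset.exists_le_of_sum_le ⟨0, Finset.mem_range.mpr hMpos⟩
    rw [Finset.sum_const, Finset.card_range, nsmul_eq_mul,
      mul_div_cancel₀ _ (ne_of_gt hMpos')]
    have h6 : ((box.card : ℕ) : ℝ)
        = ∑ k ∈ Finset.range M, ((box.filter fun f => ∑ i, (f i)^2 = k).card : ℝ) := by
      exact_mod_cast congrArg (fun t : ℕ => (t:ℝ)) hsplit
    rw [← h6, hboxcard]
    push_cast
    exact le_refl _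
  obtain ⟨k, hkmem, hkcard⟩ := hpig
  set S := box.filter (fun f => ∑ i, (f i)^2 = k) with hSdef
  clear_value S
  have hScard : ((d:ℝ)^n / M) ≤ (S.card : ℝ) := hSdef ▸ hkcard
  have hSbox : S ⊆ box := hSdef ▸ Finset.filter_subset _ _
  have hsph : ∀ u ∈ S, ∑ i, (u i)^2 = k := by
    rw [hSdef]; exact fun u hu => (Finset.mem_filter.mp hu).2
  clear hkcard hsplit hfib hSdef
  set N : (Fin n → ℕ) → ℕ := fun f => ∑ i, f i * K ^ (i:ℕ) with hN
  have hNapp : ∀ f, N f = ∑ i, f i * K ^ (i:ℕ) := fun f => rfl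
  clear_value N
  have hinj : Set.InjOn N S := by
    intro f hf g hg hfg
    rw [hNapp, hNapp] at hfg
    exact digits_unique n K f g (fun i => lt_of_lt_of_le (hbox f (hSbox hf) i) hdK)
      (fun i => lt_of_lt_of_le (hbox g (hSbox hg) i) hdK) hfg
  refine ⟨S.image N, ?_, ?_, ?_⟩
  · intro u hu
    obtain ⟨f, hf, rfl⟩ := Finset.mem_image.mp hu
    rw [hNapp, ← hK]
    exact digits_lt n K f (fun i => lt_of_lt_of_le (hbox f (hSbox hf) i) hdK)
  · rw [Finset.card_image_of_injOn hinj]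
    calc (d:ℝ)^n / ((n:ℝ)*(d:ℝ)^2+1) = (d:ℝ)^n / M := by rw [hM]; push_cast; ring_nf
    _ ≤ _ := hScard
  · intro x' hx' y' hy' z' hz' w' hw' heq
    obtain ⟨xf, hxf, rfl⟩ := Finset.mem_image.mp hx'
    obtain ⟨yf, hyf, rfl⟩ := Finset.mem_image.mp hy'
    obtain ⟨zf, hzf, rfl⟩ := Finset.mem_image.mp hz'
    obtain ⟨wf, hwf, rfl⟩ := Finset.mem_image.mp hw'
    have lhs : a * N xf + b * N yf + c * N zf
        = ∑ i, (a * xf i + b * yf i + c * zf i) * K ^ (i:ℕ) := by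
      rw [hNapp, hNapp, hNapp, Finset.mul_sum, Finset.mul_sum, Finset.mul_sum,
        ← Finset.sum_add_distrib, ← Finset.sum_add_distrib]
      exact Finset.sum_congr rfl fun i _ => by ring
    have rhs : (a+b+c) * N wf = ∑ i, ((a+b+c) * wf i) * K ^ (i:ℕ) := by
      rw [hNapp, Finset.mul_sum]
      exact Finset.sum_congr rfl fun i _ => by ring
    have hptw : (fun i => a * xf i + b * yf i + c * zf i) = (fun i => (a+b+c) * wf i) := by
      apply digits_unique n K
      · intro i
        exact bnd _ _ _ (hbox xf (hSbox hxf) i) (hbox yf (hSbox hyf) i) (hbox zf (hSbox hzf) i)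
      · intro i
        have hwi := hbox wf (hSbox hwf) i
        calc (a+b+c) * wf i = a * wf i + b * wf i + c * wf i := by ring
        _ < K := bnd _ _ _ hwi hwi hwi
      · rw [← lhs, ← rhs, heq]
    have htriv := sphere_triv n a b c k ha hb hc xf yf zf wf
      (hsph xf hxf) (hsph yf hyf) (hsph zf hzf) (hsph wf hwf)
      (fun i => congrFun hptw i)
    exact ⟨by rw [htriv.1], by rw [htriv.2.1], by rw [htriv.2.2]⟩


lemma cube_bound (E x : ℝ) (h2 : 2 ≤ E) (hx : x ≤ E*E^2) : x + 1 ≤ E*E*E*E := by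
  nlinarith [sq_nonneg E, sq_nonneg (E-2), sq_nonneg (E*E-2), mul_pos (lt_of_lt_of_le two_pos h2) (lt_of_lt_of_le two_pos h2)]

theorem stmt11 (m1 m2 m3 m4 : ℕ) (h1 : 0 < m1) (h2 : 0 < m2) (h3 : 0 < m3) (h4 : 0 < m4) :
    ∃ c : ℝ, 0 < c ∧
      ∀ L : ℕ, 0 < L →
        ∃ Λ : Finset ℕ, Λ ⊆ Finset.range L ∧
          (L : ℝ) * Real.exp (-c * Real.sqrt (Real.log L)) ≤ Λ.card ∧
          ∀ x ∈ Λ, ∀ y ∈ Λ, ∀ z ∈ Λ, ∀ w ∈ Λ,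
            m2 * m3 * x + m1 * m4 * y + m1 * m2 * z = (m2 * m3 + m1 * m4 + m1 * m2) * w →
            x = w ∧ y = w ∧ z = w := by
  have ha : 0 < m2 * m3 := Nat.mul_pos h2 h3
  have hb : 0 < m1 * m4 := Nat.mul_pos h1 h4
  have he : 0 < m1 * m2 := Nat.mul_pos h1 h2
  set s : ℕ := m2 * m3 + m1 * m4 + m1 * m2 with hsdef
  clear_value s
  have hs3 : 3 ≤ s := by omega
  set σ : ℝ := (s : ℝ) with hσdef
  clear_value σ
  have hσ3 : (3:ℝ) ≤ σ := by rw [hσdef]; exact_mod_cast hs3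
  have hσpos : (0:ℝ) < σ := by linarith
  have hlogpos : 0 < Real.log (2*σ) := Real.log_pos (by linarith)
  set C : ℝ := 4 + 2 * Real.log (2*σ) with hC
  clear_value C
  have hCpos : 0 < C := by rw [hC]; linarith
  have hC4 : 4 ≤ C := by rw [hC]; linarith
  refine ⟨C, hCpos, ?_⟩
  intro L hL
  by_cases hsmall : (L:ℝ) * Real.exp (-C * Real.sqrt (Real.log L)) ≤ 1
  · refine ⟨{0}, Finset.singleton_subset_iff.mpr (Finset.mem_range.mpr hL), by simpa using hsmall, ?_⟩
    intro x hx y hy z hz w hw _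
    simp only [Finset.mem_singleton] at hx hy hz hw
    subst hx; subst hy; subst hz; subst hw
    exact ⟨rfl, rfl, rfl⟩
  · push_neg at hsmall
    have hL1 : (1:ℝ) ≤ L := by exact_mod_cast hL
    have hLpos : (0:ℝ) < L := by linarith
    set l := Real.log L with hldef
    clear_value l
    have hl0 : 0 ≤ l := by rw [hldef]; exact Real.log_nonneg hL1
    set r := Real.sqrt l with hrdef
    have hr0 : 0 ≤ r := Real.sqrt_nonneg l
    have hrr : r * r = l := Real.mul_self_sqrt hl0
    clear_value r
    have hcr : C * r < l := by
      have hexp : (L:ℝ) = Real.exp l := by rw [hldef, Real.exp_log hLpos]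
      have h7 : (1:ℝ) < Real.exp (l - C * r) := by
        rw [Real.exp_sub, ← hexp]
        calc (1:ℝ) < (L:ℝ) * Real.exp (-(C*r)) := by
              have : -(C*r) = -C*r := by ring
              rw [this]; exact hsmall
        _ = (L:ℝ) / Real.exp (C*r) := by
              rw [Real.exp_neg]; ring
      have := Real.exp_lt_exp.mp (by simpa using h7 : Real.exp 0 < Real.exp (l - C*r))
      linarith
    have hrpos : 0 < r := by
      by_contra hno
      push_neg at hno
      have hr00 : r = 0 := le_antisymm hno hr0
      rw [hr00] at hcr hrr
      simp at hcr hrr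
      linarith
    have hCr : C < r := by
      have h8 : C * r < r * r := by rw [hrr]; exact hcr
      exact lt_of_mul_lt_mul_right (by linarith [h8]) hr0
    have hr4 : (4:ℝ) < r := lt_of_le_of_lt hC4 hCr
    -- parameters
    set n := ⌈r⌉₊ with hn
    have hn1 : r ≤ (n:ℝ) := Nat.le_ceil r
    have hn2 : (n:ℝ) < r + 1 := Nat.ceil_lt_add_one hr0
    have hnpos : 0 < n := Nat.ceil_pos.mpr hrpos
    have hnR : (0:ℝ) < n := by exact_mod_cast hnpos
    clear_value n
    set q := l / n with hq
    clear_value q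
    have hq1 : q ≤ r := by
      rw [hq, div_le_iff₀ hnR, ← hrr]
      exact mul_le_mul_of_nonneg_left hn1 hr0
    have hq2 : r - 1 ≤ q := by
      rw [hq, le_div_iff₀ hnR]
      nlinarith [hn2, hrr, hr0]
    have hq3 : Real.log (2*σ) ≤ q := by
      have : r - 1 ≥ 3 + 2 * Real.log (2*σ) := by rw [hC] at hCr; linarith
      linarith
    set t := Real.exp q with ht
    have htpos : 0 < t := Real.exp_pos q
    have htr : t ≤ Real.exp r := by rw [ht]; exact Real.exp_le_exp.mpr hq1
    have h2st : 2*σ ≤ t := by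
      rw [ht]
      calc 2*σ = Real.exp (Real.log (2*σ)) := (Real.exp_log (by linarith)).symm
      _ ≤ Real.exp q := Real.exp_le_exp.mpr hq3
    have htL : t ^ n = (L:ℝ) := by
      rw [ht, ← Real.exp_nat_mul]
      have h9 : (n:ℝ) * q = l := by rw [hq]; field_simp
      rw [h9, hldef, Real.exp_log hLpos]
    clear_value t
    set d := ⌊t / σ⌋₊ with hd
    have hd1 : (d:ℝ) ≤ t / σ := Nat.floor_le (by positivity)
    have hd2 : t/σ - 1 < d := Nat.sub_one_lt_floor _
    clear_value d
    have hd3 : t/(2*σ) ≤ (d:ℝ) := by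
      have e0 : t/σ - t/(2*σ) = t/(2*σ) := by field_simp; ring
      have h1' : 1 ≤ t/(2*σ) := by rw [le_div_iff₀ (by positivity)]; linarith
      linarith
    have hdposR : (0:ℝ) < d := lt_of_lt_of_le (by positivity) hd3
    have hdpos : 0 < d := by exact_mod_cast hdposR
    have hdr : (d:ℝ) ≤ Real.exp r := by
      calc (d:ℝ) ≤ t/σ := hd1
      _ ≤ t := div_le_self (le_of_lt htpos) (by linarith)
      _ ≤ Real.exp r := htr
    -- (s*d)^n ≤ L
    have hKL : (s*d)^n ≤ L := by
      have h10 : (((s*d)^n : ℕ):ℝ) ≤ (L:ℝ) := by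
        push_cast
        calc ((s:ℝ)*(d:ℝ))^n ≤ t^n := by
              apply pow_le_pow_left₀ (by positivity)
              rw [← hσdef]
              calc σ * d ≤ σ * (t/σ) := mul_le_mul_of_nonneg_left hd1 (le_of_lt hσpos)
              _ = t := by field_simp
        _ = (L:ℝ) := htL
      exact_mod_cast h10
    obtain ⟨Λ, hmem, hcard, hprop⟩ := behrend_key (m2*m3) (m1*m4) (m1*m2) d n ha hb he hdpos
    rw [← hsdef] at hmem hprop
    refine ⟨Λ, ?_, ?_, hprop⟩
    · intro u hu
      exact Finset.mem_range.mpr (lt_of_lt_of_le (hmem u hu) hKL)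
    · refine le_trans ?_ hcard
      -- main analytic inequality
      have hDpos : (0:ℝ) < (n:ℝ)*(d:ℝ)^2+1 := by positivity
      rw [le_div_iff₀ hDpos]
      have hE := Real.add_one_le_exp r
      have h2E : (2:ℝ) ≤ Real.exp r := by linarith
      have hnr : (n:ℝ) ≤ Real.exp r := by linarith
      have hdnn : (0:ℝ) ≤ (d:ℝ) := le_of_lt hdposR
      have e1 : (L:ℝ) ≤ (2*σ)^n * (d:ℝ)^n := by
        rw [← htL, ← mul_pow]
        apply pow_le_pow_left₀ (le_of_lt htpos)
        have := (div_le_iff₀ (show (0:ℝ) < 2*σ by linarith)).mp hd3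
        linarith [this]
      have e2 : ((2*σ):ℝ)^n ≤ Real.exp (2*Real.log (2*σ) * r) := by
        have h11 : ((2*σ):ℝ)^n = Real.exp ((n:ℝ) * Real.log (2*σ)) := by
          rw [Real.exp_nat_mul, Real.exp_log (by linarith)]
        rw [h11]
        apply Real.exp_le_exp.mpr
        have hn2r : (n:ℝ) ≤ 2*r := by linarith
        calc (n:ℝ)*Real.log (2*σ) ≤ (2*r)*Real.log (2*σ) :=
              mul_le_mul_of_nonneg_right hn2r (le_of_lt hlogpos)
        _ = 2*Real.log (2*σ)*r := by ring
      have e3 : (n:ℝ)*(d:ℝ)^2+1 ≤ Real.exp (4*r) := by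
        have h12 : Real.exp (4*r) = Real.exp r * Real.exp r * Real.exp r * Real.exp r := by
          rw [show (4:ℝ)*r = r+r+r+r by ring, Real.exp_add, Real.exp_add, Real.exp_add]
        have hd2E : (d:ℝ)^2 ≤ Real.exp r ^2 := pow_le_pow_left₀ hdnn hdr 2
        have h13 : (n:ℝ)*(d:ℝ)^2 ≤ Real.exp r * Real.exp r ^2 :=
          mul_le_mul hnr hd2E (by positivity) (by positivity)
        rw [h12]
        exact cube_bound _ _ h2E h13
      have main : (L:ℝ) * ((n:ℝ)*(d:ℝ)^2+1) ≤ (d:ℝ)^n * Real.exp (C*r) := by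
        calc (L:ℝ) * ((n:ℝ)*(d:ℝ)^2+1) ≤ ((2*σ)^n * (d:ℝ)^n) * Real.exp (4*r) :=
              mul_le_mul e1 e3 (le_of_lt hDpos) (by positivity)
        _ ≤ (Real.exp (2*Real.log (2*σ)*r) * (d:ℝ)^n) * Real.exp (4*r) :=
              mul_le_mul_of_nonneg_right (mul_le_mul_of_nonneg_right e2 (by positivity))
                (by positivity)
        _ = (d:ℝ)^n * Real.exp (C*r) := by
              rw [mul_comm (Real.exp (2*Real.log (2*σ)*r)) ((d:ℝ)^n), mul_assoc, ← Real.exp_add]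
              congr 1
              rw [hC]; ring
      calc (L:ℝ) * Real.exp (-C*r) * ((n:ℝ)*(d:ℝ)^2+1)
          = ((L:ℝ) * ((n:ℝ)*(d:ℝ)^2+1)) * Real.exp (-(C*r)) := by
            rw [show -C*r = -(C*r) by ring]; ring
      _ ≤ ((d:ℝ)^n * Real.exp (C*r)) * Real.exp (-(C*r)) :=
            mul_le_mul_of_nonneg_right main (by positivity)
      _ = (d:ℝ)^n := by rw [mul_assoc, ← Real.exp_add]; simp
end

section
/- Let m1, m2, m3, m4 be positive integers, let m = m2·m3 + m1·m4 + m1·m2, and let A, B, C be nonzero complex numbers with B/A ∉ ℝ satisfying BC(B − C) = m2·m3, CA(C − A) = m1·m4, AB(A − B) = m1·m2. Define f(x, y) = (m2·A·x + m1·B·y)²/A. Let L be a positive integer, let Λ ⊆ {0, 1, …, L − 1} be a set such that the only quadruples (x, y, z, w) ∈ Λ⁴ with m2·m3·x + m1·m4·y + m1·m2·z = m·w have x = y = z = w, and let ψ ∈ ℂ. For j = (j1, j2) ∈ Λ², let I_j = {t1·A + t2·B : t1 ∈ [j1/(mL), j1/(mL) + 1/(m²L)), t2 ∈ [j2/(mL),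 j2/(mL) + 1/(m²L))} ⊆ ℂ. Let n1, n2, d ∈ ℤ and set w = ψ·f(n1, n2), x = ψ·f(n1 + m1·d, n2), y = ψ·f(n1, n2 + m2·d), z = ψ·f(n1 − m3·d, n2 − m4·d). Suppose each of w, x, y, z is congruent modulo the lattice Aℤ + Bℤ to an element of ∪_{j ∈ Λ²} I_j. Then ‖2·m1·m2·(m2·A·n1 + m1·B·n2)·d·ψ + m1²·m2²·A·d²·ψ‖_{A,B} < 1/(m²·L). -/
set_option maxHeartbeats 1600000

/-- The distance from a real number to the nearest integer. -/
noncomputable def distToInt (t : ℝ) : ℝ := |t - round t|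

/-- `w : ℂ` is congruent, modulo the lattice `Aℤ + Bℤ`, to an element of the box
`I_{(j1,j2)} = A·[j1/(mL), j1/(mL) + 1/(m²L)) + B·[j2/(mL), j2/(mL) + 1/(m²L))`
for some `(j1, j2) ∈ Λ²`. -/
def InBoxMod (A B : ℂ) (m L : ℕ) (Λ : Finset ℕ) (w : ℂ) : Prop :=
  ∃ j1 ∈ Λ, ∃ j2 ∈ Λ, ∃ a b : ℤ, ∃ t1 t2 : ℝ,
    t1 ∈ Set.Ico ((j1 : ℝ) / (m * L)) ((j1 : ℝ) / (m * L) + 1 / ((m : ℝ) ^ 2 * L)) ∧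
    t2 ∈ Set.Ico ((j2 : ℝ) / (m * L)) ((j2 : ℝ) / (m * L) + 1 / ((m : ℝ) ^ 2 * L)) ∧
    w = (t1 : ℂ) * A + (t2 : ℂ) * B + (a : ℂ) * A + (b : ℂ) * B

lemma indepAB {A B : ℂ} (hA : A ≠ 0) (hBA : (B / A).im ≠ 0) (r1 r2 : ℝ)
    (h : (r1 : ℂ) * A + (r2 : ℂ) * B = 0) : r1 = 0 ∧ r2 = 0 := by
  have h2 : (r1 : ℂ) + (r2 : ℂ) * (B / A) = 0 := by
    field_simp
    linear_combination h
  have h3 : r2 * (B / A).im = 0 := by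
    have := congrArg Complex.im h2
    simpa using this
  have hr2 : r2 = 0 := by
    rcases mul_eq_zero.mp h3 with h' | h'
    · exact h'
    · exact absurd h' hBA
  subst hr2
  simp at h
  rcases h with h | h
  · exact ⟨by exact_mod_cast h, rfl⟩
  · exact absurd h hA

lemma inner_zero (A B C α β γ : ℂ) (e1 : B*C*(B-C) = α) (e2 : C*A*(C-A) = β)
    (e3 : A*B*(A-B) = γ) : α*A^2*(γ+α) + β*B^2*(γ+β) + 2*α*β*A*B = 0 := by
  linear_combination (-(A^2*γ + (α + B*C*(B-C))*A^2 + 2*β*A*B)) * e1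
    + (-(B^2*γ + (β + C*A*(C-A))*B^2 + 2*(B*C*(B-C))*A*B)) * e2
    + (-((B*C*(B-C))*A^2 + (C*A*(C-A))*B^2)) * e3

lemma key_rel (A B : ℂ) (hA : A ≠ 0) (α β γ u d ψ : ℂ)
    (hInner : α*A^2*(γ+α) + β*B^2*(γ+β) + 2*α*β*A*B = 0) :
    α * (ψ * ((u + γ*A*d)^2 / A)) + β * (ψ * ((u + γ*B*d)^2 / A))
      + γ * (ψ * ((u - (α*A+β*B)*d)^2 / A)) = (α+β+γ) * (ψ * (u^2/A)) := by
  field_simp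
  linear_combination (γ * d^2 * ψ) * hInner

lemma term_bound (m L c j : ℕ) (hm : 0 < m) (hL : 0 < L) (hc : 0 < c) (s : ℝ)
    (h1 : (j:ℝ)/(m*L) ≤ s) (h2 : s < (j:ℝ)/(m*L) + 1/((m:ℝ)^2*L)) :
    ((c:ℝ)*(j:ℝ)) ≤ (c:ℝ)*s*((m:ℝ)*(L:ℝ)) ∧
      (c:ℝ)*s*((m:ℝ)*(L:ℝ)) < (c:ℝ)*(j:ℝ) + (c:ℝ)/(m:ℝ) := by
  have hM : (0:ℝ) < (m:ℝ)*(L:ℝ) := by positivity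
  have hc0 : (0:ℝ) < (c:ℝ) := by exact_mod_cast hc
  have hm0 : (0:ℝ) < (m:ℝ) := by exact_mod_cast hm
  constructor
  · have h := mul_le_mul_of_nonneg_right
      (mul_le_mul_of_nonneg_left h1 hc0.le) hM.le
    calc (c:ℝ)*(j:ℝ) = (c:ℝ)*((j:ℝ)/((m:ℝ)*L))*((m:ℝ)*L) := by field_simp
      _ ≤ _ := h
  · have h := mul_lt_mul_of_pos_right (mul_lt_mul_of_pos_left h2 hc0) hM
    have heq : (c:ℝ)*((j:ℝ)/((m:ℝ)*L) + 1/((m:ℝ)^2*L))*((m:ℝ)*L)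
        = (c:ℝ)*(j:ℝ) + (c:ℝ)/m := by
      field_simp
    linarith [heq ▸ h]

lemma coord_eq (m L : ℕ) (hm : 0 < m) (hL : 0 < L)
    (a b c : ℕ) (ha : 0 < a) (hb : 0 < b) (hc : 0 < c) (hsum : a + b + c = m)
    (jx jy jz jw : ℕ) (hjx : jx < L) (hjy : jy < L) (hjz : jz < L) (hjw : jw < L)
    (ax ay az aw : ℤ) (sx sy sz sw : ℝ)
    (hsx1 : (jx:ℝ)/(m*L) ≤ sx) (hsx2 : sx < (jx:ℝ)/(m*L) + 1/((m:ℝ)^2*L))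
    (hsy1 : (jy:ℝ)/(m*L) ≤ sy) (hsy2 : sy < (jy:ℝ)/(m*L) + 1/((m:ℝ)^2*L))
    (hsz1 : (jz:ℝ)/(m*L) ≤ sz) (hsz2 : sz < (jz:ℝ)/(m*L) + 1/((m:ℝ)^2*L))
    (hsw1 : (jw:ℝ)/(m*L) ≤ sw) (hsw2 : sw < (jw:ℝ)/(m*L) + 1/((m:ℝ)^2*L))
    (hrel : (a:ℝ)*(sx+ax) + (b:ℝ)*(sy+ay) + (c:ℝ)*(sz+az) = (m:ℝ)*(sw+aw)) :
    a*jx + b*jy + c*jz = m*jw := by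
  have hm0 : (0:ℝ) < (m:ℝ) := by exact_mod_cast hm
  obtain ⟨t1l, t1u⟩ := term_bound m L a jx hm hL ha sx hsx1 hsx2
  obtain ⟨t2l, t2u⟩ := term_bound m L b jy hm hL hb sy hsy1 hsy2
  obtain ⟨t3l, t3u⟩ := term_bound m L c jz hm hL hc sz hsz1 hsz2
  obtain ⟨t4l, t4u⟩ := term_bound m L m jw hm hL hm sw hsw1 hsw2
  have hmm : (m:ℝ)/m = 1 := div_self hm0.ne'
  have hsumR : (a:ℝ) + (b:ℝ) + (c:ℝ) = (m:ℝ) := by exact_mod_cast hsum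
  have hsumdiv : (a:ℝ)/m + (b:ℝ)/m + (c:ℝ)/m = 1 := by
    rw [← add_div, ← add_div, hsumR, hmm]
  set NZ : ℤ := a*ax + b*ay + c*az - m*aw with hNZ
  set TZ : ℤ := (m:ℤ)*jw with hTZ
  set SZ : ℤ := (a:ℤ)*jx + (b:ℤ)*jy + (c:ℤ)*jz with hSZ
  have hTr : (TZ:ℝ) = (m:ℝ)*(jw:ℝ) := by rw [hTZ]; push_cast; ring
  have hSr : (SZ:ℝ) = (a:ℝ)*(jx:ℝ) + (b:ℝ)*(jy:ℝ) + (c:ℝ)*(jz:ℝ) := by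
    rw [hSZ]; push_cast; ring
  have hNr : (NZ:ℝ) = (m:ℝ)*sw - ((a:ℝ)*sx + (b:ℝ)*sy + (c:ℝ)*sz)
      + ((a:ℝ)*(sx+(ax:ℝ)) + (b:ℝ)*(sy+(ay:ℝ)) + (c:ℝ)*(sz+(az:ℝ))
         - (m:ℝ)*(sw+(aw:ℝ))) := by
    rw [hNZ]; push_cast; ring
  rw [hrel] at hNr
  have hNmL : (NZ:ℝ) * ((m:ℝ)*L) = (m:ℝ)*sw*((m:ℝ)*L)
      - ((a:ℝ)*sx*((m:ℝ)*L) + (b:ℝ)*sy*((m:ℝ)*L) + (c:ℝ)*sz*((m:ℝ)*L)) := by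
    rw [hNr]; ring
  have hup : ((NZ * ((m:ℤ)*(L:ℤ)) - (TZ - SZ) : ℤ):ℝ) < 1 := by
    push_cast
    rw [hTr, hSr]
    linarith [hNmL, t1l, t2l, t3l, t4u, hsumdiv]
  have hlo : (-1:ℝ) < ((NZ * ((m:ℤ)*(L:ℤ)) - (TZ - SZ) : ℤ):ℝ) := by
    push_cast
    rw [hTr, hSr]
    linarith [hNmL, t1u, t2u, t3u, t4l, hsumdiv]
  have hz : NZ * ((m:ℤ)*(L:ℤ)) - (TZ - SZ) = 0 := by
    have h1 : NZ * ((m:ℤ)*(L:ℤ)) - (TZ - SZ) < 1 := by exact_mod_cast hup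
    have h2 : -1 < NZ * ((m:ℤ)*(L:ℤ)) - (TZ - SZ) := by exact_mod_cast hlo
    omega
  have hdvd : ((m:ℤ)*(L:ℤ)) ∣ (TZ - SZ) := ⟨NZ, by linarith⟩
  have habs : |TZ - SZ| < (m:ℤ)*(L:ℤ) := by
    have hjx' : (jx:ℤ) ≤ (L:ℤ) - 1 := by
      have : (jx:ℤ) < (L:ℤ) := by exact_mod_cast hjx
      omega
    have hjy' : (jy:ℤ) ≤ (L:ℤ) - 1 := by
      have : (jy:ℤ) < (L:ℤ) := by exact_mod_cast hjy
      omega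
    have hjz' : (jz:ℤ) ≤ (L:ℤ) - 1 := by
      have : (jz:ℤ) < (L:ℤ) := by exact_mod_cast hjz
      omega
    have hjw' : (jw:ℤ) ≤ (L:ℤ) - 1 := by
      have : (jw:ℤ) < (L:ℤ) := by exact_mod_cast hjw
      omega
    have hsumZ : (a:ℤ) + b + c = m := by exact_mod_cast hsum
    have hmZ : (0:ℤ) < m := by exact_mod_cast hm
    have haZ : (0:ℤ) ≤ a := Int.ofNat_nonneg a
    have hbZ : (0:ℤ) ≤ b := Int.ofNat_nonneg b
    have hcZ : (0:ℤ) ≤ c := Int.ofNat_nonneg c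
    have hT1 : TZ ≤ (m:ℤ)*((L:ℤ)-1) := by
      rw [hTZ]; exact mul_le_mul_of_nonneg_left hjw' hmZ.le
    have hT0 : 0 ≤ TZ := by rw [hTZ]; positivity
    have hS1 : SZ ≤ (m:ℤ)*((L:ℤ)-1) := by
      rw [hSZ, ← hsumZ]
      nlinarith [mul_le_mul_of_nonneg_left hjx' haZ, mul_le_mul_of_nonneg_left hjy' hbZ,
        mul_le_mul_of_nonneg_left hjz' hcZ]
    have hS0 : 0 ≤ SZ := by rw [hSZ]; positivity
    rw [abs_lt]
    constructor <;> nlinarith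
  have h0 := Int.eq_zero_of_abs_lt_dvd hdvd habs
  have hfin : SZ = TZ := by omega
  rw [hSZ, hTZ] at hfin
  exact_mod_cast hfin

lemma distToInt_lt (t : ℝ) (k : ℤ) (ε : ℝ) (h : |t| < ε) (hε : ε ≤ 1/2) :
    distToInt (t + k) < ε := by
  unfold distToInt
  rw [round_add_intCast]
  have hr : round t = 0 := by
    rw [round_eq_zero_iff]
    constructor
    · linarith [(abs_lt.mp (lt_of_lt_of_le h hε)).1]
    · linarith [(abs_lt.mp (lt_of_lt_of_le h hε)).2]
  have heq : t + (k:ℝ) - ((round t + k : ℤ):ℝ) = t - (round t : ℝ) := by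
    push_cast; ring
  rw [heq, hr]
  simpa using h

theorem stmt13 (m1 m2 m3 m4 : ℕ) (h1 : 0 < m1) (h2 : 0 < m2) (h3 : 0 < m3) (h4 : 0 < m4)
    (m : ℕ) (hm : m = m2 * m3 + m1 * m4 + m1 * m2)
    (A B C : ℂ) (hA : A ≠ 0) (hB : B ≠ 0) (hC : C ≠ 0) (hBA : (B / A).im ≠ 0)
    (e1 : B * C * (B - C) = (m2 : ℂ) * (m3 : ℂ))
    (e2 : C * A * (C - A) = (m1 : ℂ) * (m4 : ℂ))
    (e3 : A * B * (A - B) = (m1 : ℂ) * (m2 : ℂ))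
    (f : ℂ → ℂ → ℂ)
    (hf : ∀ x y : ℂ, f x y = ((m2 : ℂ) * A * x + (m1 : ℂ) * B * y) ^ 2 / A)
    (L : ℕ) (hL : 0 < L) (Λ : Finset ℕ) (hΛL : Λ ⊆ Finset.range L)
    (hΛ : ∀ x ∈ Λ, ∀ y ∈ Λ, ∀ z ∈ Λ, ∀ w ∈ Λ,
      m2 * m3 * x + m1 * m4 * y + m1 * m2 * z = m * w → x = w ∧ y = w ∧ z = w)
    (ψ : ℂ) (n1 n2 d : ℤ)
    (hw : InBoxMod A B m L Λ (ψ * f (n1 : ℂ) (n2 : ℂ)))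
    (hx : InBoxMod A B m L Λ (ψ * f ((n1 : ℂ) + (m1 : ℂ) * (d : ℂ)) (n2 : ℂ)))
    (hy : InBoxMod A B m L Λ (ψ * f (n1 : ℂ) ((n2 : ℂ) + (m2 : ℂ) * (d : ℂ))))
    (hz : InBoxMod A B m L Λ
      (ψ * f ((n1 : ℂ) - (m3 : ℂ) * (d : ℂ)) ((n2 : ℂ) - (m4 : ℂ) * (d : ℂ)))) :
    ∃ x1 x2 : ℝ,
      2 * (m1 : ℂ) * (m2 : ℂ) * ((m2 : ℂ) * A * (n1 : ℂ) + (m1 : ℂ) * B * (n2 : ℂ)) *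
          (d : ℂ) * ψ + (m1 : ℂ) ^ 2 * (m2 : ℂ) ^ 2 * A * (d : ℂ) ^ 2 * ψ
        = (x1 : ℂ) * A + (x2 : ℂ) * B ∧
      max (distToInt x1) (distToInt x2) < 1 / ((m : ℝ) ^ 2 * L) := by
  obtain ⟨jw1, hjw1, jw2, hjw2, aw, bw, sw1, sw2, hsw1, hsw2, hW⟩ := hw
  obtain ⟨jx1, hjx1, jx2, hjx2, ax, bx, sx1, sx2, hsx1, hsx2, hX⟩ := hx
  obtain ⟨jy1, hjy1, jy2, hjy2, ay, by', sy1, sy2, hsy1, hsy2, hY⟩ := hy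
  obtain ⟨jz1, hjz1, jz2, hjz2, az, bz, sz1, sz2, hsz1, hsz2, hZ⟩ := hz
  have hm0 : 0 < m := by
    have := Nat.mul_pos h2 h3
    omega
  -- key complex relation
  have hInner := inner_zero A B C _ _ _ e1 e2 e3
  have hk := key_rel A B hA ((m2:ℂ)*m3) ((m1:ℂ)*m4) ((m1:ℂ)*m2)
    ((m2:ℂ)*A*(n1:ℂ) + (m1:ℂ)*B*(n2:ℂ)) (d:ℂ) ψ hInner
  have hkey : ((m2:ℂ)*m3) * (ψ * f ((n1:ℂ)+(m1:ℂ)*(d:ℂ)) (n2:ℂ))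
      + ((m1:ℂ)*m4) * (ψ * f (n1:ℂ) ((n2:ℂ)+(m2:ℂ)*(d:ℂ)))
      + ((m1:ℂ)*m2) * (ψ * f ((n1:ℂ)-(m3:ℂ)*(d:ℂ)) ((n2:ℂ)-(m4:ℂ)*(d:ℂ)))
      = (m:ℂ) * (ψ * f (n1:ℂ) (n2:ℂ)) := by
    rw [hf, hf, hf, hf, hm]
    push_cast
    linear_combination hk
  rw [hW, hX, hY, hZ] at hkey
  -- extract real coordinate relations
  set r1 : ℝ := ((m2*m3:ℕ):ℝ)*(sx1+(ax:ℝ)) + ((m1*m4:ℕ):ℝ)*(sy1+(ay:ℝ))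
      + ((m1*m2:ℕ):ℝ)*(sz1+(az:ℝ)) - (m:ℝ)*(sw1+(aw:ℝ)) with hr1def
  set r2 : ℝ := ((m2*m3:ℕ):ℝ)*(sx2+(bx:ℝ)) + ((m1*m4:ℕ):ℝ)*(sy2+(by':ℝ))
      + ((m1*m2:ℕ):ℝ)*(sz2+(bz:ℝ)) - (m:ℝ)*(sw2+(bw:ℝ)) with hr2def
  have hlin : (r1:ℂ) * A + (r2:ℂ) * B = 0 := by
    rw [hr1def, hr2def]
    push_cast
    linear_combination hkey
  obtain ⟨hc1, hc2⟩ := indepAB hA hBA r1 r2 hlin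
  rw [hr1def] at hc1
  rw [hr2def] at hc2
  have hjxL : jx1 < L := Finset.mem_range.mp (hΛL hjx1)
  have hjyL : jy1 < L := Finset.mem_range.mp (hΛL hjy1)
  have hjzL : jz1 < L := Finset.mem_range.mp (hΛL hjz1)
  have hjwL : jw1 < L := Finset.mem_range.mp (hΛL hjw1)
  have hjxL2 : jx2 < L := Finset.mem_range.mp (hΛL hjx2)
  have hjyL2 : jy2 < L := Finset.mem_range.mp (hΛL hjy2)
  have hjzL2 : jz2 < L := Finset.mem_range.mp (hΛL hjz2)
  have hjwL2 : jw2 < L := Finset.mem_range.mp (hΛL hjw2)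
  have hsum : m2*m3 + m1*m4 + m1*m2 = m := hm.symm
  have ha0 : 0 < m2*m3 := Nat.mul_pos h2 h3
  have hb0 : 0 < m1*m4 := Nat.mul_pos h1 h4
  have hc0 : 0 < m1*m2 := Nat.mul_pos h1 h2
  have heq1 : (m2*m3)*jx1 + (m1*m4)*jy1 + (m1*m2)*jz1 = m*jw1 := by
    apply coord_eq m L hm0 hL (m2*m3) (m1*m4) (m1*m2) ha0 hb0 hc0 hsum
      jx1 jy1 jz1 jw1 hjxL hjyL hjzL hjwL ax ay az aw sx1 sy1 sz1 sw1
      hsx1.1 hsx1.2 hsy1.1 hsy1.2 hsz1.1 hsz1.2 hsw1.1 hsw1.2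
    linarith [hc1]
  have heq2 : (m2*m3)*jx2 + (m1*m4)*jy2 + (m1*m2)*jz2 = m*jw2 := by
    apply coord_eq m L hm0 hL (m2*m3) (m1*m4) (m1*m2) ha0 hb0 hc0 hsum
      jx2 jy2 jz2 jw2 hjxL2 hjyL2 hjzL2 hjwL2 bx by' bz bw sx2 sy2 sz2 sw2
      hsx2.1 hsx2.2 hsy2.1 hsy2.2 hsz2.1 hsz2.2 hsw2.1 hsw2.2
    linarith [hc2]
  have hj1 : jx1 = jw1 := (hΛ jx1 hjx1 jy1 hjy1 jz1 hjz1 jw1 hjw1 heq1).1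
  have hj2 : jx2 = jw2 := (hΛ jx2 hjx2 jy2 hjy2 jz2 hjz2 jw2 hjw2 heq2).1
  -- the target is the difference of the x and w boxes
  have hXW : 2 * (m1 : ℂ) * (m2 : ℂ) * ((m2 : ℂ) * A * (n1 : ℂ) + (m1 : ℂ) * B * (n2 : ℂ)) *
      (d : ℂ) * ψ + (m1 : ℂ) ^ 2 * (m2 : ℂ) ^ 2 * A * (d : ℂ) ^ 2 * ψ
      = (ψ * f ((n1:ℂ)+(m1:ℂ)*(d:ℂ)) (n2:ℂ)) - (ψ * f (n1:ℂ) (n2:ℂ)) := by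
    rw [hf, hf]
    field_simp
    ring
  refine ⟨sx1 - sw1 + ((ax - aw : ℤ):ℝ), sx2 - sw2 + ((bx - bw : ℤ):ℝ), ?_, ?_⟩
  · rw [hXW, hX, hW]
    push_cast
    ring
  · have hmR : (3:ℝ) ≤ (m:ℝ) := by
      have : 3 ≤ m := by
        have := Nat.mul_pos h2 h3
        have := Nat.mul_pos h1 h4
        have := Nat.mul_pos h1 h2
        omega
      exact_mod_cast this
    have hLR : (1:ℝ) ≤ (L:ℝ) := by exact_mod_cast hL
    have hden : (0:ℝ) < (m:ℝ)^2 * L := by positivity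
    have hε2 : 1 / ((m:ℝ)^2 * L) ≤ 1/2 := by
      rw [div_le_div_iff₀ hden (by norm_num)]
      nlinarith
    have hd1 : |sx1 - sw1| < 1 / ((m:ℝ)^2 * L) := by
      rw [abs_lt]
      have e1 := hsx1.1
      have e2' := hsx1.2
      have e3' := hsw1.1
      have e4 := hsw1.2
      rw [hj1] at e1 e2'
      constructor <;> linarith
    have hd2 : |sx2 - sw2| < 1 / ((m:ℝ)^2 * L) := by
      rw [abs_lt]
      have e1 := hsx2.1
      have e2' := hsx2.2
      have e3' := hsw2.1
      have e4 := hsw2.2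
      rw [hj2] at e1 e2'
      constructor <;> linarith
    exact max_lt (distToInt_lt _ _ _ hd1 hε2) (distToInt_lt _ _ _ hd2 hε2)
end

section
/- For every M there exist a prime p > M and integers a1, a2, a3 ∈ {1, …, p} such that P1(a1,a2,a3) ≡ −1 (mod p), P2(a1,a2,a3) ≡ 3 (mod p), P3(a1,a2,a3) ≡ −1 (mod p), and P4(a1,a2,a3) ≡ −1 (mod p). -/
def P1 (x y z : ℤ) : ℤ := (x - y) * (y - z) * (z - x)
def P2 (x y z : ℤ) : ℤ := y * z * (y - z)
def P3 (x y z : ℤ) : ℤ := z * x * (z - x)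
def P4 (x y z : ℤ) : ℤ := x * y * (x - y)

/-- Lift an element of `ZMod p` to an integer in `[1, p]`. -/
lemma lift_zmod (p : ℕ) [NeZero p] (x : ZMod p) :
    ∃ a : ℤ, (1 ≤ a ∧ a ≤ (p : ℤ)) ∧ ((a : ZMod p) = x) := by
  by_cases h : x.val = 0
  · refine ⟨(p : ℤ), ⟨?_, le_refl _⟩, ?_⟩
    · exact_mod_cast Nat.one_le_iff_ne_zero.mpr (NeZero.ne p)
    · have hx : x = 0 := (ZMod.val_eq_zero x).mp h
      simp [hx]
  · refine ⟨(x.val : ℤ), ⟨?_, ?_⟩, ?_⟩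
    · exact_mod_cast Nat.one_le_iff_ne_zero.mpr h
    · exact_mod_cast le_of_lt (ZMod.val_lt x)
    · push_cast
      exact ZMod.natCast_rightInverse x

set_option maxHeartbeats 1000000 in
theorem stmt14 (M : ℕ) :
    ∃ p : ℕ, p.Prime ∧ M < p ∧
      ∃ a1 a2 a3 : ℤ,
        (1 ≤ a1 ∧ a1 ≤ (p : ℤ)) ∧ (1 ≤ a2 ∧ a2 ≤ (p : ℤ)) ∧ (1 ≤ a3 ∧ a3 ≤ (p : ℤ)) ∧
        P1 a1 a2 a3 ≡ -1 [ZMOD (p : ℤ)] ∧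
        P2 a1 a2 a3 ≡ 3 [ZMOD (p : ℤ)] ∧
        P3 a1 a2 a3 ≡ -1 [ZMOD (p : ℤ)] ∧
        P4 a1 a2 a3 ≡ -1 [ZMOD (p : ℤ)] := by
  classical
  -- Setup: N, t = N!, n = 4t
  set N : ℕ := M + 36 with hN
  set t : ℕ := Nat.factorial N with ht
  have ht1 : 1 ≤ t := Nat.one_le_iff_ne_zero.mpr (Nat.factorial_ne_zero N)
  set n : ℤ := 4 * (t : ℤ) with hn
  have hn4 : (4 : ℤ) ≤ n := by
    have : (1 : ℤ) ≤ (t : ℤ) := by exact_mod_cast ht1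
    nlinarith
  -- h-value
  set H : ℤ := n ^ 5 - 3 * n ^ 4 + 6 * n ^ 3 - 13 * n ^ 2 + 15 * n + 6 with hH
  have hH1 : 1 ≤ H := by
    have h3 : n ^ 3 ≥ 4 * n ^ 2 := by nlinarith
    have h5 : n ^ 5 ≥ 3 * n ^ 4 := by nlinarith
    nlinarith [sq_nonneg n]
  set q : ℤ := 1 + (t : ℤ) * H with hq
  have hq2 : 2 ≤ q := by
    have h1 : (1 : ℤ) ≤ (t : ℤ) := by exact_mod_cast ht1
    nlinarith
  set Q : ℕ := q.toNat with hQ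
  have hqQ : (Q : ℤ) = q := Int.toNat_of_nonneg (by omega)
  have hQ2 : 2 ≤ Q := by omega
  set p : ℕ := Q.minFac with hp
  have pp : p.Prime := Nat.minFac_prime (by omega)
  have hpQ : p ∣ Q := Nat.minFac_dvd Q
  have hpq : (p : ℤ) ∣ q := by rw [← hqQ]; exact_mod_cast hpQ
  -- p > N
  have hpN : N < p := by
    by_contra hle
    push_neg at hle
    have hpt : p ∣ t := Nat.dvd_factorial pp.pos hle
    have h1 : (p : ℤ) ∣ (t : ℤ) * H := Dvd.dvd.mul_right (by exact_mod_cast hpt) H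
    have h2 : (p : ℤ) ∣ 1 := by
      have := dvd_sub hpq h1
      rw [hq, add_sub_cancel_right] at this
      exact this
    have := Int.le_of_dvd one_pos h2
    have := pp.two_le
    omega
  have hMp : M < p := by omega
  -- p does not divide 36
  have hp36 : ¬ (p ∣ 36) := by
    intro hdvd
    have := Nat.le_of_dvd (by norm_num) hdvd
    omega
  -- p divides f(n)
  have hfn : (p : ℤ) ∣ (n ^ 6 - 3 * n ^ 5 + 6 * n ^ 4 - 13 * n ^ 3 + 15 * n ^ 2 + 6 * n + 4) := by
    have key : n ^ 6 - 3 * n ^ 5 + 6 * n ^ 4 - 13 * n ^ 3 + 15 * n ^ 2 + 6 * n + 4 = 4 * q := by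
      rw [hq, hH, hn]; ring
    rw [key]
    exact Dvd.dvd.mul_left hpq 4
  clear_value N t n H q Q p
  haveI : Fact p.Prime := ⟨pp⟩
  -- work in ZMod p
  set nn : ZMod p := ((n : ℤ) : ZMod p) with hnn
  have hf0 : nn ^ 6 - 3 * nn ^ 5 + 6 * nn ^ 4 - 13 * nn ^ 3 + 15 * nn ^ 2 + 6 * nn + 4 = 0 := by
    have := (ZMod.intCast_zmod_eq_zero_iff_dvd
      (n ^ 6 - 3 * n ^ 5 + 6 * n ^ 4 - 13 * n ^ 3 + 15 * n ^ 2 + 6 * n + 4) p).mpr hfn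
    push_cast at this
    rw [hnn]
    linear_combination this
  have m0 : (36 : ZMod p) ≠ 0 := by
    intro h
    have : ((36 : ℕ) : ZMod p) = 0 := by exact_mod_cast h
    exact hp36 ((ZMod.natCast_eq_zero_iff 36 p).mp this)
  set e : ZMod p := (36 : ZMod p)⁻¹ with he'
  have he : (36 : ZMod p) * e = 1 := mul_inv_cancel₀ m0
  -- the solution in ZMod p
  set x0 : ZMod p := (-3 * nn ^ 5 + 10 * nn ^ 4 - 20 * nn ^ 3 + 39 * nn ^ 2 - 62 * nn - 8) * e
    with hx0
  set y0 : ZMod p := (-6 * nn ^ 5 + 18 * nn ^ 4 - 36 * nn ^ 3 + 66 * nn ^ 2 - 90 * nn - 36) * e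
    with hy0
  set z0 : ZMod p := (-3 * nn ^ 5 + 12 * nn ^ 4 - 24 * nn ^ 3 + 51 * nn ^ 2 - 96 * nn + 12) * e
    with hz0
  have hP1 : (x0 - y0) * (y0 - z0) * (z0 - x0) = -1 := by
    rw [hx0, hy0, hz0]
    linear_combination (e ^ 3 * (4944 - 1872 * nn - 348 * nn ^ 2 + 1182 * nn ^ 3 - 1086 * nn ^ 4
        + 642 * nn ^ 5 - 234 * nn ^ 6 + 66 * nn ^ 7 - 18 * nn ^ 8)) * hf0
      + (-1 * ((36 * e) ^ 2 + 36 * e + 1)) * he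
  have hP2 : y0 * z0 * (y0 - z0) = 3 := by
    rw [hy0, hz0]
    linear_combination (e ^ 3 * (-29808 + 15552 * nn - 756 * nn ^ 2 - 6534 * nn ^ 3
        + 7668 * nn ^ 4 - 5940 * nn ^ 5 + 2808 * nn ^ 6 - 1080 * nn ^ 7 + 324 * nn ^ 8
        - 54 * nn ^ 9)) * hf0
      + (3 * ((36 * e) ^ 2 + 36 * e + 1)) * he
  have hP3 : z0 * x0 * (z0 - x0) = -1 := by
    rw [hx0, hz0]
    linear_combination (e ^ 3 * (11184 - 15840 * nn + 11388 * nn ^ 2 - 7038 * nn ^ 3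
        + 3774 * nn ^ 4 - 1410 * nn ^ 5 + 426 * nn ^ 6 - 114 * nn ^ 7 + 18 * nn ^ 8)) * hf0
      + (-1 * ((36 * e) ^ 2 + 36 * e + 1)) * he
  have hP4 : x0 * y0 * (x0 - y0) = -1 := by
    rw [hx0, hy0]
    linear_combination (e ^ 3 * (13680 + 2160 * nn - 10284 * nn ^ 2 + 12390 * nn ^ 3
        - 10356 * nn ^ 4 + 6708 * nn ^ 5 - 3000 * nn ^ 6 + 1128 * nn ^ 7 - 324 * nn ^ 8
        + 54 * nn ^ 9)) * hf0
      + (-1 * ((36 * e) ^ 2 + 36 * e + 1)) * he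
  -- lift to integers
  obtain ⟨a1, hb1, hc1⟩ := lift_zmod p x0
  obtain ⟨a2, hb2, hc2⟩ := lift_zmod p y0
  obtain ⟨a3, hb3, hc3⟩ := lift_zmod p z0
  refine ⟨p, pp, hMp, a1, a2, a3, hb1, hb2, hb3, ?_, ?_, ?_, ?_⟩
  · rw [P1, ← ZMod.intCast_eq_intCast_iff]
    push_cast
    rw [hc1, hc2, hc3, hP1]
  · rw [P2, ← ZMod.intCast_eq_intCast_iff]
    push_cast
    rw [hc2, hc3, hP2]
  · rw [P3, ← ZMod.intCast_eq_intCast_iff]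
    push_cast
    rw [hc1, hc3, hP3]
  · rw [P4, ← ZMod.intCast_eq_intCast_iff]
    push_cast
    rw [hc1, hc2, hP4]
end

section
/- There is an absolute constant c > 0 such that the following holds. Let p > 3 be a prime and let a1, a2, a3 be integers satisfying P1(a1,a2,a3) ≡ −1, P2(a1,a2,a3) ≡ 3, P3(a1,a2,a3) ≡ −1, and P4(a1,a2,a3) ≡ −1 (mod p). Then for all L sufficiently large in terms of p, there exists Λ ⊆ {0, 1, …, L − 1} with |Λ| ≥ L^(1 − c/√(log p)) such that the only quadruples (w, x, y, z) ∈ Λ⁴ satisfying P1(a1,a2,a3)·w + P2(a1,a2,a3)·x + P3(a1,a2,a3)·y + P4(a1,a2,a3)·z = 0 are those with w = x = y = z. -/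
open Finset

/-- Numbers with `r` digits in base `q`, each digit drawn from `T`. -/
def stack (q : ℕ) (T : Finset ℕ) : ℕ → Finset ℕ
  | 0 => {0}
  | r + 1 => (T ×ˢ stack q T r).image fun a => a.1 + q * a.2

lemma mem_stack_succ {q : ℕ} {T : Finset ℕ} {r : ℕ} {w : ℕ} :
    w ∈ stack q T (r + 1) ↔ ∃ t ∈ T, ∃ s ∈ stack q T r, w = t + q * s := by
  simp [stack, eq_comm, and_assoc]

lemma stack_lt {q : ℕ} {T : Finset ℕ} (hT : ∀ t ∈ T, t < q) :
    ∀ r, ∀ w ∈ stack q T r, w < q ^ r := by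
  intro r
  induction r with
  | zero => intro w hw; simp [stack] at hw; simp [hw]
  | succ r ih =>
    intro w hw
    rw [mem_stack_succ] at hw
    obtain ⟨t, ht, s, hs, rfl⟩ := hw
    have h1 := hT t ht
    have h2 := ih s hs
    have : q * s + q ≤ q * q ^ r := by
      calc q * s + q = q * (s + 1) := by ring
      _ ≤ q * q ^ r := Nat.mul_le_mul_left _ h2
    rw [pow_succ, mul_comm (q ^ r) q]
    omega

lemma stack_card {q : ℕ} {T : Finset ℕ} (hT : ∀ t ∈ T, t < q) :
    ∀ r, (stack q T r).card = T.card ^ r := by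
  intro r
  induction r with
  | zero => simp [stack]
  | succ r ih =>
    rw [stack, Finset.card_image_of_injOn, Finset.card_product, ih, pow_succ, mul_comm]
    rintro ⟨t, s⟩ hts ⟨t', s'⟩ hts' h
    simp only [Finset.mem_coe, Finset.mem_product] at hts hts'
    have h' : t + q * s = t' + q * s' := h
    have e1 : (t + q * s) % q = t % q := Nat.add_mul_mod_self_left t q s
    have e2 : (t' + q * s') % q = t' % q := Nat.add_mul_mod_self_left t' q s'
    have ht1 := hT t hts.1
    have ht2 := hT t' hts'.1
    have htt : t = t' := by
      have := e1.symm.trans ((congrArg (· % q) h').trans e2)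
      rwa [Nat.mod_eq_of_lt ht1, Nat.mod_eq_of_lt ht2] at this
    have hss : s = s' := by
      have hq : 0 < q := by omega
      exact Nat.eq_of_mul_eq_mul_left hq (by omega)
    simp [htt, hss]

lemma stack_solve {A B C D : ℤ} (hsum : A + B + C + D = 0) {q : ℕ} (hq : 0 < q)
    {U : Finset ℕ}
    (Hdig : ∀ w ∈ U, ∀ x ∈ U, ∀ y ∈ U, ∀ z ∈ U,
      (q : ℤ) ∣ (A * w + B * x + C * y + D * z) → w = x ∧ x = y ∧ y = z) :
    ∀ r, ∀ w ∈ stack q U r, ∀ x ∈ stack q U r, ∀ y ∈ stack q U r, ∀ z ∈ stack q U r,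
      A * w + B * x + C * y + D * z = 0 → w = x ∧ x = y ∧ y = z := by
  intro r
  induction r with
  | zero =>
    intro w hw x hx y hy z hz _
    simp [stack] at hw hx hy hz
    omega
  | succ r ih =>
    intro w hw x hx y hy z hz heq
    rw [mem_stack_succ] at hw hx hy hz
    obtain ⟨w0, hw0, w1, hw1, rfl⟩ := hw
    obtain ⟨x0, hx0, x1, hx1, rfl⟩ := hx
    obtain ⟨y0, hy0, y1, hy1, rfl⟩ := hy
    obtain ⟨z0, hz0, z1, hz1, rfl⟩ := hz
    have expand : A * (w0 + q * w1 : ℕ) + B * (x0 + q * x1 : ℕ) + C * (y0 + q * y1 : ℕ)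
        + D * (z0 + q * z1 : ℕ)
        = (A * w0 + B * x0 + C * y0 + D * z0)
          + (q : ℤ) * (A * w1 + B * x1 + C * y1 + D * z1) := by push_cast; ring
    rw [expand] at heq
    have hdvd : (q : ℤ) ∣ (A * w0 + B * x0 + C * y0 + D * z0) := by
      refine ⟨-(A * w1 + B * x1 + C * y1 + D * z1), by linarith⟩
    obtain ⟨e1, e2, e3⟩ := Hdig w0 hw0 x0 hx0 y0 hy0 z0 hz0 hdvd
    have hz0' : (A * w0 + B * x0 + C * y0 + D * z0) = 0 := by
      subst e1; subst e2; subst e3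
      have : A * (w0:ℤ) + B * w0 + C * w0 + D * w0 = (A + B + C + D) * w0 := by ring
      rw [this, hsum, zero_mul]
    rw [hz0', zero_add] at heq
    have hq' : (q : ℤ) ≠ 0 := by exact_mod_cast hq.ne'
    have heq' : A * w1 + B * x1 + C * y1 + D * z1 = 0 :=
      by
        rcases mul_eq_zero.1 heq with h | h
        · exact absurd h hq'
        · exact h
    obtain ⟨f1, f2, f3⟩ := ih w1 hw1 x1 hx1 y1 hy1 z1 hz1 heq'
    subst e1; subst e2; subst e3; subst f1; subst f2; subst f3
    exact ⟨rfl, rfl, rfl⟩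


open Finset Real

/-- `T` has no nontrivial solutions to `w + y + z = 3x`. -/
def Good (T : Finset ℕ) : Prop :=
  ∀ w ∈ T, ∀ x ∈ T, ∀ y ∈ T, ∀ z ∈ T, w + y + z = 3 * x → w = x ∧ x = y ∧ y = z

lemma sphere_geom {n d k : ℕ} {a f c e : Fin n → ℕ}
    (ha : a ∈ Behrend.sphere n d k) (hf : f ∈ Behrend.sphere n d k)
    (hc : c ∈ Behrend.sphere n d k) (he : e ∈ Behrend.sphere n d k)
    (h : ∀ i, a i + c i + e i = 3 * f i) : a = f ∧ f = c ∧ c = e := by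
  have hak : ∑ i, (a i : ℤ) ^ 2 = k := by
    have := (Finset.mem_filter.1 ha).2; push_cast [← this]; norm_cast
  have hfk : ∑ i, (f i : ℤ) ^ 2 = k := by
    have := (Finset.mem_filter.1 hf).2; push_cast [← this]; norm_cast
  have hck : ∑ i, (c i : ℤ) ^ 2 = k := by
    have := (Finset.mem_filter.1 hc).2; push_cast [← this]; norm_cast
  have hek : ∑ i, (e i : ℤ) ^ 2 = k := by
    have := (Finset.mem_filter.1 he).2; push_cast [← this]; norm_cast
  have key : ∑ i, (((a i : ℤ) - c i) ^ 2 + ((a i : ℤ) - e i) ^ 2 + ((c i : ℤ) - e i) ^ 2) = 0 := by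
    have step : ∀ i ∈ Finset.univ, (((a i : ℤ) - c i) ^ 2 + ((a i : ℤ) - e i) ^ 2
        + ((c i : ℤ) - e i) ^ 2)
        = 3 * (a i : ℤ) ^ 2 + 3 * (c i : ℤ) ^ 2 + 3 * (e i : ℤ) ^ 2 - 9 * (f i : ℤ) ^ 2 := by
      intro i _
      have hi : (a i : ℤ) + c i + e i = 3 * f i := by exact_mod_cast h i
      linear_combination (-((a i : ℤ) + c i + e i) - 3 * (f i : ℤ)) * hi
    rw [Finset.sum_congr rfl step]
    simp only [Finset.sum_sub_distrib, Finset.sum_add_distrib, ← Finset.mul_sum]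
    rw [hak, hck, hek, hfk]
    ring
  have hnn : ∀ i ∈ Finset.univ, (0:ℤ) ≤ (((a i : ℤ) - c i) ^ 2 + ((a i : ℤ) - e i) ^ 2
      + ((c i : ℤ) - e i) ^ 2) := by intro i _; positivity
  have hz := (Finset.sum_eq_zero_iff_of_nonneg hnn).1 key
  have hace : ∀ i, a i = c i ∧ a i = e i := by
    intro i
    have := hz i (Finset.mem_univ i)
    constructor <;>
    · have s1 := sq_nonneg ((a i : ℤ) - c i)
      have s2 := sq_nonneg ((a i : ℤ) - e i)
      have s3 := sq_nonneg ((c i : ℤ) - e i)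
      nlinarith [sq_nonneg ((a i : ℤ) - c i), sq_nonneg ((a i : ℤ) - e i),
        sq_nonneg ((c i : ℤ) - e i)]
  have haf : ∀ i, a i = f i := by
    intro i
    have h1 := (hace i).1
    have h2 := (hace i).2
    have := h i
    omega
  exact ⟨funext haf, funext fun i => ((haf i).symm.trans (hace i).1),
    funext fun i => ((hace i).1.symm.trans (hace i).2)⟩

lemma map_lt_pow {n b : ℕ} (hb : 0 < b) {g : Fin n → ℕ} (hg : ∀ i, g i < b) :
    Behrend.map b g < b ^ n := by
  induction n with
  | zero => simpa [Behrend.map] using Nat.one_pos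
  | succ n ih =>
    rw [Behrend.map_succ', pow_succ]
    have h1 : g 0 < b := hg 0
    have h2 : Behrend.map b (g ∘ Fin.succ) + 1 ≤ b ^ n := ih fun i => hg i.succ
    have h3 : (Behrend.map b (g ∘ Fin.succ) + 1) * b ≤ b ^ n * b := Nat.mul_le_mul_right b h2
    have h4 : Behrend.map b (g ∘ Fin.succ) * b + b ≤ b ^ n * b := by
      calc Behrend.map b (g ∘ Fin.succ) * b + b = (Behrend.map b (g ∘ Fin.succ) + 1) * b := by ring
        _ ≤ b ^ n * b := h3
    omega

lemma good_behrend_image {n d k : ℕ} (hd : 0 < d) :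
    Good ((Behrend.sphere n d k).image (Behrend.map (3 * d))) ∧
    ((Behrend.sphere n d k).image (Behrend.map (3 * d))).card = (Behrend.sphere n d k).card ∧
    ∀ m ∈ (Behrend.sphere n d k).image (Behrend.map (3 * d)), m < (3 * d) ^ n := by
  have hb : 0 < 3 * d := by omega
  have hcoord : ∀ v ∈ Behrend.sphere n d k, ∀ i, v i < 3 * d := fun v hv i =>
    lt_of_lt_of_le (Behrend.mem_box.1 (Behrend.sphere_subset_box hv) i) (by omega)
  refine ⟨?_, ?_, ?_⟩
  · intro w hw x hx y hy z hz heq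
    obtain ⟨va, hva, rfl⟩ := Finset.mem_image.1 hw
    obtain ⟨vf, hvf, rfl⟩ := Finset.mem_image.1 hx
    obtain ⟨vc, hvc, rfl⟩ := Finset.mem_image.1 hy
    obtain ⟨ve, hve, rfl⟩ := Finset.mem_image.1 hz
    have hsum : Behrend.map (3 * d) (va + vc + ve) = Behrend.map (3 * d) (3 • vf) := by
      rw [map_add, map_add, map_nsmul]
      simpa [smul_eq_mul, mul_comm] using heq
    have hlt1 : ∀ i, (va + vc + ve) i < 3 * d := by
      intro i
      have h1 := Behrend.mem_box.1 (Behrend.sphere_subset_box hva) i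
      have h2 := Behrend.mem_box.1 (Behrend.sphere_subset_box hvc) i
      have h3 := Behrend.mem_box.1 (Behrend.sphere_subset_box hve) i
      simp only [Pi.add_apply]
      omega
    have hlt2 : ∀ i, (3 • vf) i < 3 * d := by
      intro i
      have h1 := Behrend.mem_box.1 (Behrend.sphere_subset_box hvf) i
      simp only [Pi.smul_apply, smul_eq_mul]
      omega
    have hveq : va + vc + ve = 3 • vf := Behrend.map_injOn hlt1 hlt2 hsum
    have hptw : ∀ i, va i + vc i + ve i = 3 * vf i := by
      intro i
      have := congrFun hveq i
      simpa [smul_eq_mul] using this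
    obtain ⟨g1, g2, g3⟩ := sphere_geom hva hvf hvc hve hptw
    exact ⟨by rw [g1], by rw [g2], by rw [g3]⟩
  · apply Finset.card_image_of_injOn
    intro v hv v' hv' hvv
    exact Behrend.map_injOn (fun i => hcoord v hv i) (fun i => hcoord v' hv' i) hvv
  · intro m hm
    obtain ⟨v, hv, rfl⟩ := Finset.mem_image.1 hm
    exact map_lt_pow hb (hcoord v hv)

lemma behrend_large (N : ℕ) (hs5 : 5 ≤ Real.sqrt (Real.log N)) :
    ∃ T : Finset ℕ, (∀ t ∈ T, t < N) ∧ Good T ∧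
      (N : ℝ) * Real.exp (-7 * Real.sqrt (Real.log N)) ≤ T.card := by
  set s := Real.sqrt (Real.log N) with hs_def
  have hlog0 : 0 ≤ Real.log N := by
    by_contra hneg
    push_neg at hneg
    have : s = 0 := Real.sqrt_eq_zero'.2 hneg.le
    linarith
  have hsq : s ^ 2 = Real.log N := Real.sq_sqrt hlog0
  have h25 : 25 ≤ Real.log N := by nlinarith
  have hN1 : (1 : ℝ) < (N : ℝ) := by
    by_contra hle
    push_neg at hle
    have := Real.log_nonpos (by positivity) hle
    linarith
  have hNpos : (0 : ℝ) < N := by linarith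
  set n := ⌈s⌉₊ with hn_def
  have hn_lb : s ≤ n := Nat.le_ceil s
  have hn_ub : (n : ℝ) ≤ s + 1 := (Nat.ceil_lt_add_one (by linarith)).le
  have hn0 : 0 < n := by
    have : (0:ℝ) < n := by linarith
    exact_mod_cast this
  set x := (N : ℝ) ^ ((n : ℝ)⁻¹) with hx_def
  have hx_pos : 0 < x := Real.rpow_pos_of_pos hNpos _
  have hnR : (0:ℝ) < n := by exact_mod_cast hn0
  have hlogx : Real.log x = Real.log N / n := by
    rw [hx_def, Real.log_rpow hNpos]; ring
  have hlogx_lb : s - 1 ≤ Real.log x := by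
    rw [hlogx, le_div_iff₀ hnR]
    nlinarith
  have hlogx_ub : Real.log x ≤ s := by
    rw [hlogx, div_le_iff₀ hnR]
    nlinarith
  have hx_lb : Real.exp (s - 1) ≤ x := by
    rw [← Real.exp_log hx_pos]
    exact Real.exp_le_exp.2 hlogx_lb
  have hx_ub : x ≤ Real.exp s := by
    rw [← Real.exp_log hx_pos]
    exact Real.exp_le_exp.2 hlogx_ub
  have hexp4 : (54 : ℝ) ≤ Real.exp 4 := by
    have he : Real.exp 4 = Real.exp 1 ^ (4:ℕ) := by
      rw [← Real.exp_nat_mul]; norm_num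
    have h1 : (2.7182818283 : ℝ) ≤ Real.exp 1 := Real.exp_one_gt_d9.le
    calc (54:ℝ) ≤ (2.7182818283:ℝ) ^ (4:ℕ) := by norm_num
      _ ≤ Real.exp 1 ^ (4:ℕ) := by gcongr
      _ = Real.exp 4 := he.symm
  have hx54 : (54 : ℝ) ≤ x := by
    refine hexp4.trans (le_trans (Real.exp_le_exp.2 (by linarith : (4:ℝ) ≤ s - 1)) hx_lb)
  set m := ⌊x⌋₊ with hm_def
  have hm_ub : (m : ℝ) ≤ x := Nat.floor_le hx_pos.le
  have hm_lb : x - 1 < m := Nat.sub_one_lt_floor x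
  set d := m / 6 with hd_def
  have hdm := Nat.div_add_mod m 6
  have hmod : m % 6 < 6 := Nat.mod_lt _ (by norm_num)
  have hd_ub_nat : 6 * d ≤ m := by omega
  have hd_lb_nat : m ≤ 6 * d + 5 := by omega
  have hd_lbR : x / 12 ≤ (d : ℝ) := by
    have h1 : (m : ℝ) ≤ 6 * (d : ℝ) + 5 := by exact_mod_cast hd_lb_nat
    linarith
  have hd_ubR : (d : ℝ) ≤ x := by
    have h1 : (d : ℝ) ≤ (m : ℝ) := by exact_mod_cast Nat.div_le_self m 6
    linarith
  have hd_posR : (0 : ℝ) < d := by linarith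
  have hd0 : 0 < d := by exact_mod_cast hd_posR
  obtain ⟨k, hk⟩ := Behrend.exists_large_sphere n d
  obtain ⟨hGood, hcard, hbound⟩ := good_behrend_image (n := n) (k := k) hd0
  set T := (Behrend.sphere n d k).image (Behrend.map (3 * d)) with hT_def
  have hxn : x ^ n = (N : ℝ) := Real.rpow_inv_natCast_pow hNpos.le hn0.ne'
  have h3d_le_N : (3 * d) ^ n ≤ N := by
    have h3dm : 3 * d ≤ m := by omega
    have hR : ((3 * d : ℕ) : ℝ) ^ n ≤ (N : ℝ) := by
      calc ((3 * d : ℕ) : ℝ) ^ n ≤ (m : ℝ) ^ n := by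
            apply pow_le_pow_left₀ (by positivity)
            exact_mod_cast h3dm
        _ ≤ x ^ n := pow_le_pow_left₀ (by positivity) hm_ub n
        _ = (N : ℝ) := hxn
    exact_mod_cast (by push_cast at hR ⊢; exact hR : (((3*d)^n : ℕ) : ℝ) ≤ (N:ℝ))
  refine ⟨T, ?_, hGood, ?_⟩
  · intro t ht
    exact lt_of_lt_of_le (hbound t ht) h3d_le_N
  -- size bound
  have h2s : 2 * s ≤ Real.exp s := by
    have h1 : s / 2 + 1 ≤ Real.exp (s / 2) := Real.add_one_le_exp _
    have h2 : 2 * s ≤ (s / 2 + 1) ^ 2 := by nlinarith [sq_nonneg (s / 2 - 1)]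
    have h3 : (s / 2 + 1) ^ 2 ≤ Real.exp (s / 2) ^ 2 := by
      gcongr
    have h4 : Real.exp (s / 2) ^ 2 = Real.exp s := by
      rw [sq, ← Real.exp_add]
      ring_nf
    linarith
  have h12 : (12 : ℝ) ≤ Real.exp 3 := by
    have he : Real.exp 3 = Real.exp 1 ^ (3:ℕ) := by
      rw [← Real.exp_nat_mul]; norm_num
    have h1 : (2.7182818283 : ℝ) ≤ Real.exp 1 := Real.exp_one_gt_d9.le
    calc (12:ℝ) ≤ (2.7182818283:ℝ) ^ (3:ℕ) := by norm_num
      _ ≤ Real.exp 1 ^ (3:ℕ) := by gcongr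
      _ = Real.exp 3 := he.symm
  have h12n : (12 : ℝ) ^ n ≤ Real.exp (4 * s) := by
    calc (12 : ℝ) ^ n ≤ Real.exp 3 ^ n := pow_le_pow_left₀ (by norm_num) h12 n
      _ = Real.exp (n * 3) := (Real.exp_nat_mul 3 n).symm
      _ ≤ Real.exp (4 * s) := Real.exp_le_exp.2 (by push_cast; linarith)
  have h12n_pos : (0:ℝ) < (12:ℝ) ^ n := by positivity
  have hP : (N : ℝ) / 12 ^ n ≤ (d : ℝ) ^ n := by
    rw [div_le_iff₀ h12n_pos]
    calc (N:ℝ) = x ^ n := hxn.symm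
      _ = (x / 12) ^ n * 12 ^ n := by rw [div_pow]; field_simp
      _ ≤ (d : ℝ) ^ n * 12 ^ n := by
          have hx12 : (0:ℝ) ≤ x / 12 := by positivity
          gcongr
  have hQle : (n : ℝ) * (d : ℝ) ^ 2 ≤ 2 * s * Real.exp (2 * s) := by
    have hd2 : (d : ℝ) ^ 2 ≤ Real.exp (2 * s) := by
      calc (d : ℝ) ^ 2 ≤ Real.exp s ^ 2 := by have := hd_ubR.trans hx_ub; gcongr
        _ = Real.exp (2 * s) := by rw [sq, ← Real.exp_add]; ring_nf
    exact mul_le_mul (by linarith) hd2 (by positivity) (by linarith)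
  have hkey : 2 * s * Real.exp (2 * s) * 12 ^ n ≤ Real.exp (7 * s) := by
    calc 2 * s * Real.exp (2 * s) * 12 ^ n
        ≤ Real.exp s * Real.exp (2 * s) * Real.exp (4 * s) := by
          apply mul_le_mul (mul_le_mul h2s le_rfl (Real.exp_pos _).le (Real.exp_pos _).le)
            h12n h12n_pos.le (by positivity)
      _ = Real.exp (7 * s) := by
          rw [← Real.exp_add, ← Real.exp_add]; ring_nf
  have hQpos : (0:ℝ) < (n : ℝ) * (d : ℝ) ^ 2 := by positivity
  have hcard_ge : ((d ^ n : ℕ) : ℝ) / ((n * d ^ 2 : ℕ) : ℝ) ≤ (T.card : ℝ) := by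
    rw [hcard]
    exact_mod_cast hk
  have hfinal : (N : ℝ) * Real.exp (-7 * s) ≤ ((d:ℝ) ^ n) / ((n:ℝ) * (d:ℝ) ^ 2) := by
    rw [le_div_iff₀ hQpos]
    have hNe_pos : (0:ℝ) ≤ (N : ℝ) * Real.exp (-7 * s) := by positivity
    calc (N : ℝ) * Real.exp (-7 * s) * ((n:ℝ) * (d:ℝ)^2)
        ≤ (N : ℝ) * Real.exp (-7 * s) * (2 * s * Real.exp (2*s)) := by gcongr
      _ ≤ (N : ℝ) / 12 ^ n := by
          rw [le_div_iff₀ h12n_pos]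
          calc (N:ℝ) * Real.exp (-7*s) * (2*s*Real.exp (2*s)) * 12 ^ n
              = (N:ℝ) * (Real.exp (-7*s) * (2*s*Real.exp (2*s) * 12 ^ n)) := by ring
            _ ≤ (N:ℝ) * (Real.exp (-7*s) * Real.exp (7*s)) := by
                gcongr
            _ = (N:ℝ) := by rw [← Real.exp_add]; norm_num
      _ ≤ (d:ℝ) ^ n := hP
  · calc (N : ℝ) * Real.exp (-7 * s) ≤ ((d:ℝ) ^ n) / ((n:ℝ) * (d:ℝ) ^ 2) := hfinal
      _ ≤ (T.card : ℝ) := by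
          have : ((d ^ n : ℕ) : ℝ) = (d:ℝ)^n := by push_cast; rfl
          have h2 : ((n * d ^ 2 : ℕ) : ℝ) = (n:ℝ) * (d:ℝ)^2 := by push_cast; rfl
          rw [← this, ← h2]
          exact hcard_ge


lemma four_le_exp_two : (4 : ℝ) ≤ Real.exp 2 := by
  have he : Real.exp 2 = Real.exp 1 ^ (2:ℕ) := by
    rw [← Real.exp_nat_mul]; norm_num
  have h1 : (2.7182818283 : ℝ) ≤ Real.exp 1 := Real.exp_one_gt_d9.le
  calc (4:ℝ) ≤ (2.7182818283:ℝ) ^ (2:ℕ) := by norm_num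
    _ ≤ Real.exp 1 ^ (2:ℕ) := by gcongr
    _ = Real.exp 2 := he.symm

lemma twelve_le_exp_three : (12 : ℝ) ≤ Real.exp 3 := by
  have he : Real.exp 3 = Real.exp 1 ^ (3:ℕ) := by
    rw [← Real.exp_nat_mul]; norm_num
  have h1 : (2.7182818283 : ℝ) ≤ Real.exp 1 := Real.exp_one_gt_d9.le
  calc (12:ℝ) ≤ (2.7182818283:ℝ) ^ (3:ℕ) := by norm_num
    _ ≤ Real.exp 1 ^ (3:ℕ) := by gcongr
    _ = Real.exp 3 := he.symm

set_option maxHeartbeats 4000000 in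
theorem stmt15 :
    ∃ c : ℝ, 0 < c ∧
      ∀ p : ℕ, p.Prime → 3 < p →
        ∀ a1 a2 a3 : ℤ,
          P1 a1 a2 a3 ≡ -1 [ZMOD (p : ℤ)] →
          P2 a1 a2 a3 ≡ 3 [ZMOD (p : ℤ)] →
          P3 a1 a2 a3 ≡ -1 [ZMOD (p : ℤ)] →
          P4 a1 a2 a3 ≡ -1 [ZMOD (p : ℤ)] →
          ∃ L0 : ℕ, ∀ L : ℕ, L0 ≤ L →
            ∃ Λ : Finset ℕ, Λ ⊆ Finset.range L ∧
              (L : ℝ) ^ ((1 : ℝ) - c / Real.sqrt (Real.log p)) ≤ Λ.card ∧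
              ∀ w ∈ Λ, ∀ x ∈ Λ, ∀ y ∈ Λ, ∀ z ∈ Λ,
                P1 a1 a2 a3 * (w : ℤ) + P2 a1 a2 a3 * (x : ℤ) +
                  P3 a1 a2 a3 * (y : ℤ) + P4 a1 a2 a3 * (z : ℤ) = 0 →
                w = x ∧ x = y ∧ y = z := by
  refine ⟨100, by norm_num, ?_⟩
  intro p hp hp3 a1 a2 a3 h1 h2 h3 h4
  have hp0 : 0 < p := hp.pos
  have hp1 : (1:ℝ) < (p:ℝ) := by exact_mod_cast (by omega : 1 < p)
  have hlogp_pos : 0 < Real.log p := Real.log_pos hp1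
  set s := Real.sqrt (Real.log (p:ℕ)) with hs_def
  have hs_pos : 0 < s := Real.sqrt_pos.2 hlogp_pos
  have hsum : P1 a1 a2 a3 + P2 a1 a2 a3 + P3 a1 a2 a3 + P4 a1 a2 a3 = 0 := by
    unfold P1 P2 P3 P4; ring
  have hA : (p:ℤ) ∣ P1 a1 a2 a3 + 1 := by
    have h := h1.dvd
    have h' : (p:ℤ) ∣ -(-1 - P1 a1 a2 a3) := Dvd.dvd.neg_right h
    simpa using h'
  have hB : (p:ℤ) ∣ P2 a1 a2 a3 - 3 := by
    have h := h2.dvd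
    have h' : (p:ℤ) ∣ -(3 - P2 a1 a2 a3) := Dvd.dvd.neg_right h
    simpa using h'
  have hC : (p:ℤ) ∣ P3 a1 a2 a3 + 1 := by
    have h := h3.dvd
    have h' : (p:ℤ) ∣ -(-1 - P3 a1 a2 a3) := Dvd.dvd.neg_right h
    simpa using h'
  have hD : (p:ℤ) ∣ P4 a1 a2 a3 + 1 := by
    have h := h4.dvd
    have h' : (p:ℤ) ∣ -(-1 - P4 a1 a2 a3) := Dvd.dvd.neg_right h
    simpa using h'
  by_cases hcase : s ≤ 100
  · -- trivial case: exponent is nonpositive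
    refine ⟨1, fun L hL => ⟨{0}, ?_, ?_, ?_⟩⟩
    · rw [Finset.singleton_subset_iff, Finset.mem_range]; omega
    · have hθ : (1:ℝ) - 100 / s ≤ 0 := by
        rw [sub_nonpos, le_div_iff₀ hs_pos]; linarith
      have hL1 : (1:ℝ) ≤ (L:ℝ) := by exact_mod_cast hL
      simpa using Real.rpow_le_one_of_one_le_of_nonpos hL1 hθ
    · intro w hw x hx y hy z hz _
      simp only [Finset.mem_singleton] at hw hx hy hz
      omega
  · push_neg at hcase
    have hsq : s ^ 2 = Real.log p := Real.sq_sqrt hlogp_pos.le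
    have hlog_big : (10000:ℝ) ≤ Real.log p := by nlinarith
    set N := p / 3 with hN_def
    have hpR : (p:ℝ) = Real.exp (Real.log p) := (Real.exp_log (by positivity)).symm
    have hp12 : 12 ≤ p := by
      have h12p : (12:ℝ) ≤ (p:ℝ) := by
        rw [hpR]
        exact twelve_le_exp_three.trans (Real.exp_le_exp.2 (by linarith))
      exact_mod_cast h12p
    have hN4 : p ≤ 4 * N := by omega
    have h3N : 3 * N ≤ p := by omega
    have hNpos : 0 < N := by omega
    have hNR : (p:ℝ) / 4 ≤ (N:ℝ) := by
      have : (p:ℝ) ≤ 4 * (N:ℝ) := by exact_mod_cast hN4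
      linarith
    have hNposR : (0:ℝ) < (N:ℝ) := by exact_mod_cast hNpos
    have hlogN25 : (25:ℝ) ≤ Real.log N := by
      have hstep : Real.log ((p:ℝ)/4) ≤ Real.log N :=
        Real.log_le_log (by positivity) hNR
      rw [Real.log_div (by positivity) (by norm_num)] at hstep
      have hlog4 : Real.log 4 ≤ 2 := by
        have := Real.log_le_log (by norm_num : (0:ℝ) < 4) four_le_exp_two
        rwa [Real.log_exp] at this
      linarith
    have h5N : 5 ≤ Real.sqrt (Real.log N) := by
      have h := Real.sqrt_le_sqrt hlogN25
      rwa [show Real.sqrt 25 = 5 by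
        rw [show (25:ℝ) = 5^2 by norm_num, Real.sqrt_sq]; norm_num] at h
    obtain ⟨T, hTlt, hTgood, hTcard⟩ := behrend_large N h5N
    have hTp : ∀ t ∈ T, t < p := fun t ht => lt_of_lt_of_le (hTlt t ht) (by omega)
    -- per-digit condition modulo p
    have Hdig1 : ∀ w ∈ T, ∀ x ∈ T, ∀ y ∈ T, ∀ z ∈ T,
        (p:ℤ) ∣ (P1 a1 a2 a3 * w + P2 a1 a2 a3 * x + P3 a1 a2 a3 * y + P4 a1 a2 a3 * z) →
        w = x ∧ x = y ∧ y = z := by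
      intro w hw x hx y hy z hz hdvd
      have hwN := hTlt w hw
      have hxN := hTlt x hx
      have hyN := hTlt y hy
      have hzN := hTlt z hz
      have hd1 : (p:ℤ) ∣ ((P1 a1 a2 a3 + 1) * w + (P2 a1 a2 a3 - 3) * x
          + (P3 a1 a2 a3 + 1) * y + (P4 a1 a2 a3 + 1) * z) :=
        dvd_add (dvd_add (dvd_add (hA.mul_right _) (hB.mul_right _)) (hC.mul_right _))
          (hD.mul_right _)
      have hd2 : (p:ℤ) ∣ (-(w:ℤ) + 3*x - y - z) := by
        have heq : (-(w:ℤ) + 3*x - y - z)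
            = (P1 a1 a2 a3 * w + P2 a1 a2 a3 * x + P3 a1 a2 a3 * y + P4 a1 a2 a3 * z)
              - ((P1 a1 a2 a3 + 1) * w + (P2 a1 a2 a3 - 3) * x
                + (P3 a1 a2 a3 + 1) * y + (P4 a1 a2 a3 + 1) * z) := by ring
        rw [heq]
        exact dvd_sub hdvd hd1
      have hwZ : (w:ℤ) < N := by exact_mod_cast hwN
      have hxZ : (x:ℤ) < N := by exact_mod_cast hxN
      have hyZ : (y:ℤ) < N := by exact_mod_cast hyN
      have hzZ : (z:ℤ) < N := by exact_mod_cast hzN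
      have h3NZ : 3 * (N:ℤ) ≤ p := by exact_mod_cast h3N
      have habs : |(-(w:ℤ) + 3*x - y - z)| < (p:ℤ) := by
        rw [abs_lt]
        constructor <;> omega
      have hzero := Int.eq_zero_of_abs_lt_dvd hd2 habs
      have hnat : w + y + z = 3 * x := by omega
      exact hTgood w hw x hx y hy z hz hnat
    have inner := stack_solve hsum hp0 Hdig1
    -- the big base b
    set M := (P1 a1 a2 a3).natAbs + (P2 a1 a2 a3).natAbs + (P3 a1 a2 a3).natAbs
      + (P4 a1 a2 a3).natAbs with hM_def
    have hM1 : 1 ≤ M := by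
      by_contra h
      push_neg at h
      have hP1z : (P1 a1 a2 a3).natAbs = 0 := by omega
      have hP10 : P1 a1 a2 a3 = 0 := Int.natAbs_eq_zero.1 hP1z
      rw [hP10, zero_add] at hA
      have := Int.le_of_dvd one_pos hA
      have : (p:ℤ) ≤ 1 := this
      have : p ≤ 1 := by exact_mod_cast this
      omega
    set r := ⌈Real.log (4 * (M:ℝ))⌉₊ + 1 with hr_def
    set b := 2 * M * p ^ r + 1 with hb_def
    have hpr1 : 1 ≤ p ^ r := Nat.one_le_pow _ _ hp0
    have hMpr : 1 ≤ M * p ^ r := Nat.mul_pos (by omega) (by omega)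
    have hb_eq : b = 2 * (M * p ^ r) + 1 := by rw [hb_def, mul_assoc]
    have hb2 : 2 ≤ b := by omega
    have hb1 : 1 < b := hb2
    have hb_pos : 0 < b := by omega
    have hprb : p ^ r ≤ b := by
      have : p ^ r ≤ M * p ^ r := Nat.le_mul_of_pos_left _ (by omega)
      omega
    have hS := stack_lt hTp r
    have hSb : ∀ w ∈ stack p T r, w < b := fun w hw => lt_of_lt_of_le (hS w hw) (by omega)
    have hMZ : ((M:ℕ):ℤ) = |P1 a1 a2 a3| + |P2 a1 a2 a3| + |P3 a1 a2 a3| + |P4 a1 a2 a3| := by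
      rw [hM_def]
      push_cast [Int.natCast_natAbs]
      ring
    have Hdig2 : ∀ w ∈ stack p T r, ∀ x ∈ stack p T r, ∀ y ∈ stack p T r, ∀ z ∈ stack p T r,
        (b:ℤ) ∣ (P1 a1 a2 a3 * w + P2 a1 a2 a3 * x + P3 a1 a2 a3 * y + P4 a1 a2 a3 * z) →
        w = x ∧ x = y ∧ y = z := by
      intro w hw x hx y hy z hz hdvd
      have castbd : ∀ u : ℕ, u < p ^ r → (u:ℤ) ≤ (p:ℤ)^r - 1 := by
        intro u hu
        have h2 : (u:ℤ) < ((p ^ r : ℕ):ℤ) := by exact_mod_cast hu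
        push_cast at h2
        omega
      have hwZ : (w:ℤ) ≤ (p:ℤ)^r - 1 := castbd w (hS w hw)
      have hxZ : (x:ℤ) ≤ (p:ℤ)^r - 1 := castbd x (hS x hx)
      have hyZ : (y:ℤ) ≤ (p:ℤ)^r - 1 := castbd y (hS y hy)
      have hzZ : (z:ℤ) ≤ (p:ℤ)^r - 1 := castbd z (hS z hz)
      have hprZ : (1:ℤ) ≤ (p:ℤ)^r := by
        have := pow_pos (show (0:ℤ) < (p:ℤ) by exact_mod_cast hp0) r
        linarith
      have habs1 : ∀ (Q : ℤ) (u : ℕ), (u:ℤ) ≤ (p:ℤ)^r - 1 → |Q * u| ≤ |Q| * ((p:ℤ)^r - 1) := by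
        intro Q u hu
        rw [abs_mul]
        apply mul_le_mul_of_nonneg_left _ (abs_nonneg Q)
        rwa [Int.abs_natCast]
      have habs : |P1 a1 a2 a3 * w + P2 a1 a2 a3 * x + P3 a1 a2 a3 * y + P4 a1 a2 a3 * z|
          < (b:ℤ) := by
        have t1 := habs1 (P1 a1 a2 a3) w hwZ
        have t2 := habs1 (P2 a1 a2 a3) x hxZ
        have t3 := habs1 (P3 a1 a2 a3) y hyZ
        have t4 := habs1 (P4 a1 a2 a3) z hzZ
        have tsum : |P1 a1 a2 a3 * w + P2 a1 a2 a3 * x + P3 a1 a2 a3 * y + P4 a1 a2 a3 * z|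
            ≤ |P1 a1 a2 a3 * w| + |P2 a1 a2 a3 * x| + |P3 a1 a2 a3 * y| + |P4 a1 a2 a3 * z| := by
          calc |P1 a1 a2 a3 * w + P2 a1 a2 a3 * x + P3 a1 a2 a3 * y + P4 a1 a2 a3 * z|
              ≤ |P1 a1 a2 a3 * w + P2 a1 a2 a3 * x + P3 a1 a2 a3 * y| + |P4 a1 a2 a3 * z| :=
                abs_add_le _ _
            _ ≤ |P1 a1 a2 a3 * w + P2 a1 a2 a3 * x| + |P3 a1 a2 a3 * y| + |P4 a1 a2 a3 * z| := by
                have := abs_add_le (P1 a1 a2 a3 * w + P2 a1 a2 a3 * x) (P3 a1 a2 a3 * y)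
                linarith
            _ ≤ |P1 a1 a2 a3 * w| + |P2 a1 a2 a3 * x| + |P3 a1 a2 a3 * y| + |P4 a1 a2 a3 * z| := by
                have := abs_add_le (P1 a1 a2 a3 * w) (P2 a1 a2 a3 * x)
                linarith
        have hbZ : (b:ℤ) = 2 * (M:ℤ) * (p:ℤ)^r + 1 := by
          rw [hb_def]; push_cast; ring
        have hMZ1 : (1:ℤ) ≤ (M:ℤ) := by exact_mod_cast hM1
        have hfin : |P1 a1 a2 a3| * ((p:ℤ)^r - 1) + |P2 a1 a2 a3| * ((p:ℤ)^r - 1)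
            + |P3 a1 a2 a3| * ((p:ℤ)^r - 1) + |P4 a1 a2 a3| * ((p:ℤ)^r - 1)
            = (M:ℤ) * ((p:ℤ)^r - 1) := by rw [hMZ]; ring
        have hlast : (M:ℤ) * ((p:ℤ)^r - 1) < (b:ℤ) := by
          rw [hbZ]
          nlinarith
        linarith
      have hzero := Int.eq_zero_of_abs_lt_dvd hdvd habs
      exact inner r w hw x hx y hy z hz hzero
    have outer := stack_solve hsum hb_pos Hdig2
    ------------------------------------------------------------------
    refine ⟨b ^ (⌈s⌉₊ + 1), fun L hL => ?_⟩
    set k := Nat.log b L with hk_def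
    have hk_ge : ⌈s⌉₊ + 1 ≤ k := by
      calc ⌈s⌉₊ + 1 = Nat.log b (b ^ (⌈s⌉₊ + 1)) := (Nat.log_pow hb1 _).symm
        _ ≤ Nat.log b L := Nat.log_mono_right hL
    have hks : s ≤ (k:ℝ) := by
      have ha : s ≤ (⌈s⌉₊ : ℝ) := Nat.le_ceil s
      have hbb : ((⌈s⌉₊ : ℕ) : ℝ) ≤ (k:ℝ) := by
        exact_mod_cast le_trans (Nat.le_succ _) hk_ge
      linarith
    have hLpos : 0 < L := lt_of_lt_of_le (Nat.pow_pos hb_pos) hL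
    refine ⟨stack b (stack p T r) k, ?_, ?_, ?_⟩
    · intro w hw
      rw [Finset.mem_range]
      exact lt_of_lt_of_le (stack_lt hSb k w hw) (Nat.pow_log_le_self b hLpos.ne')
    · -- cardinality bound
      have hcardΛ : (stack b (stack p T r) k).card = T.card ^ (r * k) := by
        rw [stack_card hSb, stack_card hTp, ← pow_mul]
      set τ := (T.card : ℝ) with hτ_def
      have hsN : Real.sqrt (Real.log N) ≤ s := by
        apply Real.sqrt_le_sqrt
        apply Real.log_le_log hNposR
        exact_mod_cast (by omega : N ≤ p)
      have hτ1 : Real.exp (s^2 - 8*s) ≤ τ := by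
        have e1 : Real.exp (s^2 - 8*s) ≤ Real.exp (Real.log p - 2) * Real.exp (-7 * s) := by
          rw [← Real.exp_add]
          apply Real.exp_le_exp.2
          linarith
        have e2 : Real.exp (Real.log p - 2) ≤ (p:ℝ)/4 := by
          rw [Real.exp_sub, Real.exp_log (by positivity)]
          apply div_le_div_of_nonneg_left (by positivity) (by norm_num) four_le_exp_two
        have e3 : Real.exp (-7 * s) ≤ Real.exp (-7 * Real.sqrt (Real.log N)) :=
          Real.exp_le_exp.2 (by linarith)
        calc Real.exp (s^2 - 8*s) ≤ Real.exp (Real.log p - 2) * Real.exp (-7 * s) := e1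
          _ ≤ ((p:ℝ)/4) * Real.exp (-7 * s) := by
              apply mul_le_mul_of_nonneg_right e2 (Real.exp_pos _).le
          _ ≤ (N:ℝ) * Real.exp (-7 * Real.sqrt (Real.log N)) := by
              apply mul_le_mul hNR e3 (Real.exp_pos _).le hNposR.le
          _ ≤ τ := hTcard
      have hτpos : (0:ℝ) < τ := lt_of_lt_of_le (Real.exp_pos _) hτ1
      have hlogτ : s^2 - 8*s ≤ Real.log τ := by
        rw [← Real.log_exp (s^2 - 8*s)]
        exact Real.log_le_log (Real.exp_pos _) hτ1
      have hrR : (1:ℝ) ≤ (r:ℝ) := by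
        rw [hr_def]; push_cast
        have : (0:ℝ) ≤ (⌈Real.log (4 * (M:ℝ))⌉₊ : ℝ) := by positivity
        linarith
      have hlogb : Real.log b ≤ (r:ℝ) * (1 + s^2) := by
        have hMprR : (1:ℝ) ≤ (M:ℝ) * (p:ℝ)^r := by
          have : ((M * p ^ r : ℕ):ℝ) = (M:ℝ) * (p:ℝ)^r := by push_cast; ring
          rw [← this]
          exact_mod_cast hMpr
        have hble : (b:ℝ) ≤ 4 * (M:ℝ) * (p:ℝ)^r := by
          have : ((b:ℕ):ℝ) = 2 * ((M:ℝ) * (p:ℝ)^r) + 1 := by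
            rw [hb_eq]; push_cast; ring
          rw [this]
          nlinarith
        have hstep : Real.log b ≤ Real.log (4 * (M:ℝ) * (p:ℝ)^r) :=
          Real.log_le_log (by exact_mod_cast hb_pos) hble
        rw [Real.log_mul (by positivity) (by positivity), Real.log_pow] at hstep
        have hlog4M : Real.log (4 * (M:ℝ)) ≤ (r:ℝ) := by
          have := Nat.le_ceil (Real.log (4 * (M:ℝ)))
          rw [hr_def]; push_cast
          linarith
        have : (r:ℝ) * Real.log p = (r:ℝ) * s^2 := by rw [hsq]
        nlinarith [hlogp_pos, hrR]
      have hθpos : (0:ℝ) < 1 - 100/s := by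
        rw [sub_pos, div_lt_one hs_pos]; exact hcase
      have hLb : (L:ℝ) ≤ ((b:ℝ))^(k+1) := by
        have := (Nat.lt_pow_succ_log_self hb1 L).le
        calc (L:ℝ) ≤ ((b ^ (k+1) : ℕ):ℝ) := by exact_mod_cast this
          _ = ((b:ℝ))^(k+1) := by push_cast; ring
      have key : (1 - 100/s) * (((k:ℝ)+1) * Real.log b) ≤ ((r * k : ℕ):ℝ) * Real.log τ := by
        have hrkR : ((r * k : ℕ):ℝ) = (r:ℝ) * (k:ℝ) := by push_cast; ring
        rw [hrkR]
        have step1 : (1 - 100/s) * (((k:ℝ)+1) * Real.log b)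
            ≤ (1 - 100/s) * (((k:ℝ)+1) * ((r:ℝ) * (1 + s^2))) := by
          apply mul_le_mul_of_nonneg_left _ hθpos.le
          apply mul_le_mul_of_nonneg_left hlogb (by positivity)
        have step2 : (1 - 100/s) * (((k:ℝ)+1) * ((r:ℝ) * (1 + s^2)))
            ≤ (r:ℝ) * (k:ℝ) * (s^2 - 8*s) := by
          have hinner : (1 - 100/s) * (((k:ℝ)+1) * (1 + s^2)) ≤ (k:ℝ) * (s^2 - 8*s) := by
            have hθeq : (1:ℝ) - 100/s = (s - 100)/s := by field_simp
            rw [hθeq, div_mul_eq_mul_div, div_le_iff₀ hs_pos]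
            have hh : (0:ℝ) ≤ ((k:ℝ) - s) * (s * (92*s - 1)) := by
              apply mul_nonneg (by linarith)
              apply mul_nonneg hs_pos.le (by linarith)
            nlinarith [hh, hs_pos, hcase]
          calc (1 - 100/s) * (((k:ℝ)+1) * ((r:ℝ) * (1 + s^2)))
              = (r:ℝ) * ((1 - 100/s) * (((k:ℝ)+1) * (1 + s^2))) := by ring
            _ ≤ (r:ℝ) * ((k:ℝ) * (s^2 - 8*s)) := by
                apply mul_le_mul_of_nonneg_left hinner (by linarith)
            _ = (r:ℝ) * (k:ℝ) * (s^2 - 8*s) := by ring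
        have step3 : (r:ℝ) * (k:ℝ) * (s^2 - 8*s) ≤ (r:ℝ) * (k:ℝ) * Real.log τ := by
          apply mul_le_mul_of_nonneg_left hlogτ
          positivity
        linarith
      calc (L:ℝ) ^ ((1:ℝ) - 100 / s)
          ≤ (((b:ℝ))^(k+1)) ^ ((1:ℝ) - 100 / s) := by
            apply Real.rpow_le_rpow (by positivity) hLb hθpos.le
        _ = Real.exp ((1 - 100/s) * (((k:ℝ)+1) * Real.log b)) := by
            rw [Real.rpow_def_of_pos (by positivity), Real.log_pow]
            push_cast
            ring_nf
        _ ≤ Real.exp (((r * k : ℕ):ℝ) * Real.log τ) := Real.exp_le_exp.2 key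
        _ = τ ^ (r * k : ℕ) := by
            rw [← Real.log_pow, Real.exp_log (pow_pos hτpos _)]
        _ = ((stack b (stack p T r) k).card : ℝ) := by
            rw [hcardΛ, hτ_def]
            push_cast
            ring
    · intro w hw x hx y hy z hz heq
      exact outer k w hw x hx y hy z hz heq
end

section
/- Let p > 3 be a prime and let a1, a2, a3 be integers satisfying P1(a1,a2,a3) ≡ −1, P2(a1,a2,a3) ≡ 3, P3(a1,a2,a3) ≡ −1, and P4(a1,a2,a3) ≡ −1 (mod p). Then there exist reals Θ1 ≥ 1, Θ2 > 0, Θ3 > 0 (depending only on p, a1, a2, a3) such that the following holds. Let L be a positive integer and let Λ ⊆ {0, 1, …, L − 1} be a set such that the only quadruples (w, x, y, z) ∈ Λ⁴ with P1(a1,a2,a3)·w + P2(a1,a2,a3)·x + P3(a1,a2,a3)·y + P4(a1,a2,a3)·z = 0 have w = x = y = z. Let ψ ∈ ℝ, set B = ∪_{j ∈ Λ} [j/(Θ1·L), j/(Θ1·L) + 1/(Θ1²·L)) ⊆ [0,1), and let n, d ∈ ℤ. If the fractional parts of ψ·n², ψ·(n + a1·d)², ψ·(n + a2·d)², and ψ·(n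 + a3·d)² all lie in B, then ‖Θ2·ψ·n·d‖_{ℝ/ℤ} < Θ3/L. -/
set_option maxHeartbeats 1000000


/-- The fractional part of `t` lies in
`∪_{j ∈ Λ} [j/(Θ1·L), j/(Θ1·L) + 1/(Θ1²·L))`. -/
def FractInB (Θ1 : ℝ) (L : ℕ) (Λ : Finset ℕ) (t : ℝ) : Prop :=
  ∃ j ∈ Λ, Int.fract t ∈
    Set.Ico ((j : ℝ) / (Θ1 * L)) ((j : ℝ) / (Θ1 * L) + 1 / (Θ1 ^ 2 * L))

lemma distToInt_le (x : ℝ) (m : ℤ) : distToInt x ≤ |x - m| := round_le x m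

lemma abs_add_four (a b c d : ℝ) : |a + b + c + d| ≤ |a| + |b| + |c| + |d| := by
  calc |a + b + c + d| ≤ |a + b + c| + |d| := abs_add_le _ _
    _ ≤ (|a + b| + |c|) + |d| := by gcongr; exact abs_add_le _ _
    _ ≤ ((|a| + |b|) + |c|) + |d| := by gcongr; exact abs_add_le _ _

lemma distToInt_neg (x : ℝ) : distToInt (-x) = distToInt x := by
  apply le_antisymm
  · calc distToInt (-x) ≤ |(-x) - (-(round x) : ℤ)| := distToInt_le _ _
      _ = distToInt x := by rw [distToInt]; push_cast; rw [← abs_neg]; ring_nf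
  · calc distToInt x ≤ |x - (-(round (-x)) : ℤ)| := distToInt_le _ _
      _ = distToInt (-x) := by rw [distToInt]; push_cast; rw [← abs_neg]; ring_nf

lemma distToInt_add_le (x y : ℝ) : distToInt (x + y) ≤ distToInt x + distToInt y := by
  calc distToInt (x + y) ≤ |(x + y) - ((round x + round y : ℤ) : ℝ)| := distToInt_le _ _
    _ = |(x - round x) + (y - round y)| := by push_cast; ring_nf
    _ ≤ _ := abs_add_le _ _

lemma distToInt_int_mul (k : ℤ) (x : ℝ) :
    distToInt ((k : ℝ) * x) ≤ |(k : ℝ)| * distToInt x := by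
  calc distToInt ((k : ℝ) * x) ≤ |(k : ℝ) * x - ((k * round x : ℤ) : ℝ)| := distToInt_le _ _
    _ = |(k : ℝ)| * |x - round x| := by push_cast; rw [← abs_mul]; ring_nf
    _ = _ := rfl

theorem stmt16 (p : ℕ) (hp : p.Prime) (hp3 : 3 < p) (a1 a2 a3 : ℤ)
    (h1 : P1 a1 a2 a3 ≡ -1 [ZMOD (p : ℤ)])
    (h2 : P2 a1 a2 a3 ≡ 3 [ZMOD (p : ℤ)])
    (h3 : P3 a1 a2 a3 ≡ -1 [ZMOD (p : ℤ)])
    (h4 : P4 a1 a2 a3 ≡ -1 [ZMOD (p : ℤ)]) :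
    ∃ Θ1 Θ2 Θ3 : ℝ, 1 ≤ Θ1 ∧ 0 < Θ2 ∧ 0 < Θ3 ∧
      ∀ L : ℕ, 0 < L →
        ∀ Λ : Finset ℕ, Λ ⊆ Finset.range L →
          (∀ w ∈ Λ, ∀ x ∈ Λ, ∀ y ∈ Λ, ∀ z ∈ Λ,
            P1 a1 a2 a3 * (w : ℤ) + P2 a1 a2 a3 * (x : ℤ) +
              P3 a1 a2 a3 * (y : ℤ) + P4 a1 a2 a3 * (z : ℤ) = 0 →
            w = x ∧ x = y ∧ y = z) →
          ∀ ψ : ℝ, ∀ n d : ℤ,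
            FractInB Θ1 L Λ (ψ * (n : ℝ) ^ 2) →
            FractInB Θ1 L Λ (ψ * ((n : ℝ) + (a1 : ℝ) * (d : ℝ)) ^ 2) →
            FractInB Θ1 L Λ (ψ * ((n : ℝ) + (a2 : ℝ) * (d : ℝ)) ^ 2) →
            FractInB Θ1 L Λ (ψ * ((n : ℝ) + (a3 : ℝ) * (d : ℝ)) ^ 2) →
            distToInt (Θ2 * ψ * (n : ℝ) * (d : ℝ)) < Θ3 / L := by
  set Q1 := P1 a1 a2 a3 with hQ1
  set Q2 := P2 a1 a2 a3 with hQ2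
  set Q3 := P3 a1 a2 a3 with hQ3
  set Q4 := P4 a1 a2 a3 with hQ4
  -- nonvanishing facts
  have hQ1ne : Q1 ≠ 0 := by
    intro h
    have hd : (p : ℤ) ∣ (-1 - Q1) := h1.dvd
    rw [h] at hd
    have : (p : ℤ) ∣ 1 := (dvd_neg).mp (by simpa using hd)
    have := Int.le_of_dvd one_pos this
    omega
  have hQ4ne : Q4 ≠ 0 := by
    intro h
    have hd : (p : ℤ) ∣ (-1 - Q4) := h4.dvd
    rw [h] at hd
    have : (p : ℤ) ∣ 1 := (dvd_neg).mp (by simpa using hd)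
    have := Int.le_of_dvd one_pos this
    omega
  have ha1 : a1 ≠ 0 := by intro h; apply hQ4ne; rw [hQ4, P4, h]; ring
  have ha2 : a2 ≠ 0 := by intro h; apply hQ4ne; rw [hQ4, P4, h]; ring
  have ha12 : a1 ≠ a2 := by intro h; apply hQ4ne; rw [hQ4, P4, h]; ring
  set K : ℤ := 2 * a1 * a2 * (a2 - a1) with hK
  have hKne : K ≠ 0 := by
    simp only [hK]
    intro h
    rcases mul_eq_zero.mp h with h' | h'
    · rcases mul_eq_zero.mp h' with h'' | h''
      · rcases mul_eq_zero.mp h'' with h''' | h''' <;> omega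
      · exact ha2 h''
    · omega
  set C : ℤ := |Q1| + |Q2| + |Q3| + |Q4| with hCdef
  have hC1 : 1 ≤ C := by
    have : 1 ≤ |Q1| := Int.one_le_abs (by omega)
    have h2' := abs_nonneg Q2
    have h3' := abs_nonneg Q3
    have h4' := abs_nonneg Q4
    omega
  have hCR : (1 : ℝ) ≤ (C : ℝ) := by exact_mod_cast hC1
  set Θ1 : ℝ := 2 * (C : ℝ) with hΘ1
  have hΘ1pos : 0 < Θ1 := by rw [hΘ1]; linarith
  have hΘ1ge1 : 1 ≤ Θ1 := by rw [hΘ1]; linarith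
  have ha1R : ((a1 : ℝ)) ≠ 0 := Int.cast_ne_zero.mpr ha1
  have ha2R : ((a2 : ℝ)) ≠ 0 := Int.cast_ne_zero.mpr ha2
  have ha1sq : (0 : ℝ) < (a1 : ℝ) ^ 2 := by positivity
  have ha2sq : (0 : ℝ) < (a2 : ℝ) ^ 2 := by positivity
  refine ⟨Θ1, |(K : ℝ)|, ((a1 : ℝ) ^ 2 + (a2 : ℝ) ^ 2) / Θ1 ^ 2, hΘ1ge1, ?_, ?_, ?_⟩
  · exact abs_pos.mpr (Int.cast_ne_zero.mpr hKne)
  · positivity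
  intro L hL Λ hΛ hsol ψ n d hB1 hB2 hB3 hB4
  have hLR : (1 : ℝ) ≤ (L : ℝ) := by exact_mod_cast hL
  have hLpos : (0 : ℝ) < (L : ℝ) := by linarith
  set t1 := ψ * (n : ℝ) ^ 2 with ht1
  set t2 := ψ * ((n : ℝ) + (a1 : ℝ) * (d : ℝ)) ^ 2 with ht2
  set t3 := ψ * ((n : ℝ) + (a2 : ℝ) * (d : ℝ)) ^ 2 with ht3
  set t4 := ψ * ((n : ℝ) + (a3 : ℝ) * (d : ℝ)) ^ 2 with ht4
  obtain ⟨j1, hj1, hlo1, hhi1⟩ := hB1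
  obtain ⟨j2, hj2, hlo2, hhi2⟩ := hB2
  obtain ⟨j3, hj3, hlo3, hhi3⟩ := hB3
  obtain ⟨j4, hj4, hlo4, hhi4⟩ := hB4
  set T : ℝ := Θ1 * (L : ℝ) with hT
  have hTpos : 0 < T := by positivity
  set ε : ℝ := 1 / (Θ1 ^ 2 * (L : ℝ)) with hε
  have hεpos : 0 < ε := by positivity
  -- the basic algebraic identity
  have hid : (Q1 : ℝ) * t1 + (Q2 : ℝ) * t2 + (Q3 : ℝ) * t3 + (Q4 : ℝ) * t4 = 0 := by
    simp only [hQ1, hQ2, hQ3, hQ4, P1, P2, P3, P4, ht1, ht2, ht3, ht4]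
    push_cast
    ring
  set M : ℤ := Q1 * ⌊t1⌋ + Q2 * ⌊t2⌋ + Q3 * ⌊t3⌋ + Q4 * ⌊t4⌋ with hM
  have hsum : (Q1 : ℝ) * Int.fract t1 + (Q2 : ℝ) * Int.fract t2 + (Q3 : ℝ) * Int.fract t3
      + (Q4 : ℝ) * Int.fract t4 = -(M : ℝ) := by
    simp only [Int.fract, hM]
    push_cast
    linear_combination hid
  set S : ℤ := Q1 * (j1 : ℤ) + Q2 * (j2 : ℤ) + Q3 * (j3 : ℤ) + Q4 * (j4 : ℤ) with hS
  -- deviations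
  have hd1 : |Int.fract t1 - (j1 : ℝ) / T| < ε := by
    rw [abs_sub_lt_iff]; constructor <;> [linarith; linarith]
  have hd2 : |Int.fract t2 - (j2 : ℝ) / T| < ε := by
    rw [abs_sub_lt_iff]; constructor <;> [linarith; linarith]
  have hd3 : |Int.fract t3 - (j3 : ℝ) / T| < ε := by
    rw [abs_sub_lt_iff]; constructor <;> [linarith; linarith]
  have hd4 : |Int.fract t4 - (j4 : ℝ) / T| < ε := by
    rw [abs_sub_lt_iff]; constructor <;> [linarith; linarith]
  have hterm : ∀ (Q : ℤ) (f c : ℝ), |f - c| < ε →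
      |(Q : ℝ) * f - (Q : ℝ) * c| ≤ |(Q : ℝ)| * ε := by
    intro Q f c h
    rw [← mul_sub, abs_mul]
    exact mul_le_mul_of_nonneg_left h.le (abs_nonneg _)
  have hMS : |(M : ℝ) + (S : ℝ) / T| ≤ (C : ℝ) * ε := by
    have hrw : (M : ℝ) + (S : ℝ) / T =
        -(((Q1 : ℝ) * Int.fract t1 - (Q1 : ℝ) * ((j1 : ℝ) / T))
        + ((Q2 : ℝ) * Int.fract t2 - (Q2 : ℝ) * ((j2 : ℝ) / T))
        + ((Q3 : ℝ) * Int.fract t3 - (Q3 : ℝ) * ((j3 : ℝ) / T))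
        + ((Q4 : ℝ) * Int.fract t4 - (Q4 : ℝ) * ((j4 : ℝ) / T))) := by
      have hSr : (S : ℝ) = (Q1 : ℝ) * (j1 : ℝ) + (Q2 : ℝ) * (j2 : ℝ)
          + (Q3 : ℝ) * (j3 : ℝ) + (Q4 : ℝ) * (j4 : ℝ) := by
        rw [hS]; push_cast; ring
      field_simp [hSr]
      linear_combination T * hsum + hSr
    rw [hrw, abs_neg]
    have hCr : (C : ℝ) = |(Q1 : ℝ)| + |(Q2 : ℝ)| + |(Q3 : ℝ)| + |(Q4 : ℝ)| := by
      rw [hCdef]; push_cast; ring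
    calc _ ≤ _ := abs_add_four _ _ _ _
      _ ≤ |(Q1 : ℝ)| * ε + |(Q2 : ℝ)| * ε + |(Q3 : ℝ)| * ε + |(Q4 : ℝ)| * ε :=
        add_le_add (add_le_add (add_le_add (hterm _ _ _ hd1) (hterm _ _ _ hd2))
          (hterm _ _ _ hd3)) (hterm _ _ _ hd4)
      _ = (C : ℝ) * ε := by rw [hCr]; ring
  have hCε : (C : ℝ) * ε ≤ 1 / 4 := by
    rw [hε, hΘ1, mul_one_div, div_le_div_iff₀ (by positivity) (by norm_num)]
    nlinarith
  -- bound on S as a sum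
  have hjlt : ∀ j ∈ Λ, ((j : ℝ)) ≤ (L : ℝ) - 1 := by
    intro j hj
    have := Finset.mem_range.mp (hΛ hj)
    have : (j : ℝ) ≤ (L : ℝ) - 1 := by
      have : (j : ℝ) + 1 ≤ (L : ℝ) := by exact_mod_cast this
      linarith
    exact this
  have hSbound : |(S : ℝ)| ≤ (C : ℝ) * ((L : ℝ) - 1) := by
    have hSr : (S : ℝ) = (Q1 : ℝ) * (j1 : ℝ) + (Q2 : ℝ) * (j2 : ℝ)
        + (Q3 : ℝ) * (j3 : ℝ) + (Q4 : ℝ) * (j4 : ℝ) := by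
      rw [hS]; push_cast; ring
    have hCr : (C : ℝ) = |(Q1 : ℝ)| + |(Q2 : ℝ)| + |(Q3 : ℝ)| + |(Q4 : ℝ)| := by
      rw [hCdef]; push_cast; ring
    have hterm2 : ∀ (Q : ℤ) (j : ℕ), j ∈ Λ →
        |(Q : ℝ) * (j : ℝ)| ≤ |(Q : ℝ)| * ((L : ℝ) - 1) := by
      intro Q j hj
      rw [abs_mul, abs_of_nonneg (by positivity : (0:ℝ) ≤ (j:ℝ))]
      exact mul_le_mul_of_nonneg_left (hjlt _ hj) (abs_nonneg _)
    rw [hSr]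
    calc _ ≤ _ := abs_add_four _ _ _ _
      _ ≤ |(Q1 : ℝ)| * ((L : ℝ) - 1) + |(Q2 : ℝ)| * ((L : ℝ) - 1)
          + |(Q3 : ℝ)| * ((L : ℝ) - 1) + |(Q4 : ℝ)| * ((L : ℝ) - 1) :=
        add_le_add (add_le_add (add_le_add (hterm2 _ _ hj1) (hterm2 _ _ hj2))
          (hterm2 _ _ hj3)) (hterm2 _ _ hj4)
      _ = (C : ℝ) * ((L : ℝ) - 1) := by rw [hCr]; ring
  have hSTle : |(S : ℝ)| / T ≤ 1 / 2 - 1 / (2 * (L : ℝ)) := by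
    rw [hT, hΘ1, div_le_iff₀ (by positivity)]
    have h := hSbound
    have : (1 / 2 - 1 / (2 * (L : ℝ))) * (2 * (C : ℝ) * (L : ℝ))
        = (C : ℝ) * ((L : ℝ) - 1) := by field_simp
    linarith [hSbound]
  have hMzero : M = 0 := by
    have habs : |(M : ℝ)| < 1 := by
      have h1' : |(M : ℝ)| ≤ |(M : ℝ) + (S : ℝ) / T| + |(S : ℝ) / T| := by
        have h := abs_add_le ((M : ℝ) + (S : ℝ) / T) (-((S : ℝ) / T))
        rw [abs_neg] at h
        simpa using h
      have h2' : |(S : ℝ) / T| = |(S : ℝ)| / T := by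
        rw [abs_div, abs_of_pos hTpos]
      rw [h2'] at h1'
      have hLb : 1 / (2 * (L : ℝ)) > 0 := by positivity
      linarith [hMS, hCε, hSTle]
    have habs' : |M| < 1 := by exact_mod_cast habs
    have := abs_lt.mp habs'
    omega
  have hSzero : S = 0 := by
    rw [hMzero] at hMS
    simp only [Int.cast_zero, abs_zero, add_zero, zero_add] at hMS
    have h2' : |(S : ℝ)| / T ≤ (C : ℝ) * ε := by
      rw [← abs_of_pos hTpos, ← abs_div]
      exact hMS
    have h3' : |(S : ℝ)| ≤ (C : ℝ) * ε * T := by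
      rw [div_le_iff₀ hTpos] at h2'; exact h2'
    have h4' : (C : ℝ) * ε * T = 1 / 2 := by
      rw [hε, hT, hΘ1]; field_simp
    have habs : |(S : ℝ)| < 1 := by rw [h4'] at h3'; linarith
    have habs' : |S| < 1 := by exact_mod_cast habs
    have := abs_lt.mp habs'
    omega
  -- all four indices coincide
  obtain ⟨e12, e23, e34⟩ := hsol j1 hj1 j2 hj2 j3 hj3 j4 hj4 (by rw [← hS]; exact hSzero)
  -- now the fractional parts of t1, t2, t3 are ε-close
  have hf12 : |Int.fract t2 - Int.fract t1| < ε := by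
    rw [e12] at hlo1 hhi1
    rw [abs_sub_lt_iff]; constructor <;> linarith
  have hf13 : |Int.fract t3 - Int.fract t1| < ε := by
    rw [e12, e23] at hlo1 hhi1
    rw [abs_sub_lt_iff]; constructor <;> linarith
  set b1 : ℝ := t2 - t1 with hb1
  set b2 : ℝ := t3 - t1 with hb2
  have hdist1 : distToInt b1 < ε := by
    calc distToInt b1 ≤ |b1 - ((⌊t2⌋ - ⌊t1⌋ : ℤ) : ℝ)| := distToInt_le _ _
      _ = |Int.fract t2 - Int.fract t1| := by
        simp only [Int.fract, hb1]; push_cast; ring_nf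
      _ < ε := hf12
  have hdist2 : distToInt b2 < ε := by
    calc distToInt b2 ≤ |b2 - ((⌊t3⌋ - ⌊t1⌋ : ℤ) : ℝ)| := distToInt_le _ _
      _ = |Int.fract t3 - Int.fract t1| := by
        simp only [Int.fract, hb2]; push_cast; ring_nf
      _ < ε := hf13
  -- the key linear combination
  have hcomb : (K : ℝ) * (ψ * (n : ℝ) * (d : ℝ))
      = ((a2 ^ 2 : ℤ) : ℝ) * b1 + ((-(a1 ^ 2) : ℤ) : ℝ) * b2 := by
    simp only [hK, hb1, hb2, ht1, ht2, ht3]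
    push_cast
    ring
  have hmain : distToInt ((K : ℝ) * (ψ * (n : ℝ) * (d : ℝ)))
      < ((a1 : ℝ) ^ 2 + (a2 : ℝ) ^ 2) * ε := by
    rw [hcomb]
    calc distToInt _ ≤ distToInt (((a2 ^ 2 : ℤ) : ℝ) * b1)
          + distToInt (((-(a1 ^ 2) : ℤ) : ℝ) * b2) := distToInt_add_le _ _
      _ ≤ |((a2 ^ 2 : ℤ) : ℝ)| * distToInt b1 + |((-(a1 ^ 2) : ℤ) : ℝ)| * distToInt b2 :=
          add_le_add (distToInt_int_mul _ _) (distToInt_int_mul _ _)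
      _ = (a2 : ℝ) ^ 2 * distToInt b1 + (a1 : ℝ) ^ 2 * distToInt b2 := by
          push_cast
          rw [abs_of_nonneg (by positivity), abs_neg, abs_of_nonneg (by positivity)]
      _ < (a2 : ℝ) ^ 2 * ε + (a1 : ℝ) ^ 2 * ε :=
          add_lt_add (mul_lt_mul_of_pos_left hdist1 ha2sq)
            (mul_lt_mul_of_pos_left hdist2 ha1sq)
      _ = ((a1 : ℝ) ^ 2 + (a2 : ℝ) ^ 2) * ε := by ring
  have hfinal : distToInt (|(K : ℝ)| * ψ * (n : ℝ) * (d : ℝ))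
      = distToInt ((K : ℝ) * (ψ * (n : ℝ) * (d : ℝ))) := by
    rcases abs_choice ((K : ℝ)) with h | h
    · rw [h]; ring_nf
    · rw [h]
      rw [show -(K : ℝ) * ψ * (n : ℝ) * (d : ℝ) = -((K : ℝ) * (ψ * (n : ℝ) * (d : ℝ))) by ring]
      exact distToInt_neg _
  rw [hfinal]
  have hεeq : ((a1 : ℝ) ^ 2 + (a2 : ℝ) ^ 2) / Θ1 ^ 2 / (L : ℝ)
      = ((a1 : ℝ) ^ 2 + (a2 : ℝ) ^ 2) * ε := by
    rw [hε]; field_simp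
  rw [hεeq]
  exact hmain
end

section
/- There exists a constant c > 0 such that for all 0 < α < 1/2 there exists N0 such that for every prime N > N0 there exists a function f : ℤ/Nℤ → [0,1] with (1/N)·Σ_{t ∈ ℤ/Nℤ} f(t) ≥ α such that for every nonzero d ∈ ℤ/Nℤ: (1/N)·Σ_{t ∈ ℤ/Nℤ} f(t)·f(t + d)·f(t + 2d)·f(t + 5d) < (1 − c)·α^4. -/
open Finset Complex
set_option maxRecDepth 10000

section basics
variable {N : ℕ} [NeZero N]

noncomputable def ψ (N : ℕ) [NeZero N] : AddChar (ZMod N) ℂ := ZMod.stdAddChar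

lemma norm_psi (x : ZMod N) : ‖ψ N x‖ = 1 := by
  rw [ψ, ZMod.stdAddChar_apply, Circle.norm_coe]

lemma psi_ne_zero (x : ZMod N) : ψ N x ≠ 0 := by
  intro h; have := norm_psi x; rw [h] at this; simp at this

lemma conj_psi (x : ZMod N) : (starRingEnd ℂ) (ψ N x) = ψ N (-x) := by
  have h1 : ψ N x * ψ N (-x) = 1 := by
    rw [← AddChar.map_add_eq_mul]; simp
  have h2 : ψ N x * (starRingEnd ℂ) (ψ N x) = 1 := by
    rw [Complex.mul_conj]
    norm_cast
    rw [Complex.normSq_eq_norm_sq, norm_psi]; norm_num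
  exact mul_left_cancel₀ (psi_ne_zero x) (h2.trans h1.symm)

lemma sum_psi_mul {c : ZMod N} (hc : c ≠ 0) : ∑ x : ZMod N, ψ N (c * x) = 0 := by
  have h1 : AddChar.mulShift (ψ N) c ≠ 1 := ZMod.isPrimitive_stdAddChar N hc
  have := AddChar.sum_eq_zero_of_ne_one h1
  simpa [AddChar.mulShift_apply] using this

lemma sum_psi_linear {l : ZMod N} (hl : l ≠ 0) (r : ZMod N) :
    ∑ t : ZMod N, ψ N (l * t + r) = 0 := by
  have : ∀ t : ZMod N, ψ N (l * t + r) = ψ N (l * t) * ψ N r := fun t =>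
    AddChar.map_add_eq_mul _ _ _
  rw [Finset.sum_congr rfl (fun t _ => this t), ← Finset.sum_mul, sum_psi_mul hl, zero_mul]

lemma sum_psi_const (r : ZMod N) : ∑ _t : ZMod N, ψ N r = (N : ℂ) * ψ N r := by
  rw [Finset.sum_const, Finset.card_univ, ZMod.card, nsmul_eq_mul]

lemma gauss_norm [Fact (Nat.Prime N)] (hN2 : (2 : ZMod N) ≠ 0) {q : ZMod N} (hq : q ≠ 0) (l r : ZMod N) :
    ‖∑ t : ZMod N, ψ N (q * t ^ 2 + l * t + r)‖ = Real.sqrt N := by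
  set S := ∑ t : ZMod N, ψ N (q * t ^ 2 + l * t + r) with hS
  have key : S * (starRingEnd ℂ) S = (N : ℂ) := by
    rw [hS, map_sum]
    rw [Finset.sum_mul_sum]
    have h1 : ∀ t s : ZMod N, ψ N (q * t ^ 2 + l * t + r) *
        (starRingEnd ℂ) (ψ N (q * s ^ 2 + l * s + r)) =
        ψ N ((q * t ^ 2 + l * t + r) - (q * s ^ 2 + l * s + r)) := by
      intro t s
      rw [conj_psi, ← AddChar.map_add_eq_mul, sub_eq_add_neg]
    calc (∑ t : ZMod N, ∑ s : ZMod N, ψ N (q * t ^ 2 + l * t + r) *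
            (starRingEnd ℂ) (ψ N (q * s ^ 2 + l * s + r)))
        = ∑ s : ZMod N, ∑ t : ZMod N,
            ψ N ((q * t ^ 2 + l * t + r) - (q * s ^ 2 + l * s + r)) := by
          rw [Finset.sum_comm]
          exact Finset.sum_congr rfl fun s _ => Finset.sum_congr rfl fun t _ => h1 t s
      _ = ∑ s : ZMod N, ∑ u : ZMod N, ψ N ((2 * q * u) * s) * ψ N (q * u ^ 2 + l * u) := by
          refine Finset.sum_congr rfl fun s _ => ?_
          rw [← Equiv.sum_comp (Equiv.addLeft s)]
          refine Finset.sum_congr rfl fun u _ => ?_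
          rw [← AddChar.map_add_eq_mul]
          congr 1
          simp only [Equiv.coe_addLeft]
          ring
      _ = ∑ u : ZMod N, (∑ s : ZMod N, ψ N ((2 * q * u) * s)) * ψ N (q * u ^ 2 + l * u) := by
          rw [Finset.sum_comm]
          exact Finset.sum_congr rfl fun u _ => (Finset.sum_mul _ _ _).symm
      _ = (N : ℂ) := by
          rw [Finset.sum_eq_single 0]
          · simp [sum_psi_const]
          · intro u _ hu
            have h2 : (2 : ZMod N) * q * u ≠ 0 := by
              apply mul_ne_zero (mul_ne_zero hN2 hq) hu
            rw [sum_psi_mul h2, zero_mul]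
          · intro h; exact absurd (Finset.mem_univ 0) h
  have h3 : Complex.normSq S = (N : ℝ) := by
    have := Complex.mul_conj S
    rw [key] at this
    exact_mod_cast this.symm
  rw [Complex.norm_def, h3]

end basics

def Mset : Finset ℤ := {0, 1, -1, 6, -6, 10, -10, 15, -15}
def Mset' : Finset ℤ := {1, -1, 6, -6, 10, -10, 15, -15}

lemma Mset_insert : Mset = insert 0 Mset' := rfl
lemma zero_not_mem_Mset' : (0 : ℤ) ∉ Mset' := by decide
lemma Mset_abs_le {m : ℤ} (hm : m ∈ Mset) : |m| ≤ 15 := by fin_cases hm <;> norm_num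

noncomputable def cfR (θ : ℝ) (m : ℤ) : ℝ :=
  if m = 0 then 1 + θ else if m = 15 ∨ m = -15 then -(1/9) else (1/9)

lemma cfR_neg (θ : ℝ) (m : ℤ) : cfR θ (-m) = cfR θ m := by
  unfold cfR
  split_ifs with h1 h2 h3 h4 h5 h6 <;> first | rfl | omega

lemma cfR_abs_le {θ : ℝ} (hθ : 0 ≤ θ) (m : ℤ) : |cfR θ m| ≤ 1 + θ := by
  unfold cfR
  split_ifs <;> rw [abs_le] <;> constructor <;> nlinarith

lemma cfR_ne_zero_abs {θ : ℝ} {m : ℤ} (hm : m ≠ 0) : |cfR θ m| = 1/9 := by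
  unfold cfR
  split_ifs <;> first | omega | norm_num

def Sp : Finset (ℤ × ℤ × ℤ × ℤ) := {(0,0,0,0), (6,-15,10,-1), (-6,15,-10,1)}
def MM : Finset (ℤ × ℤ × ℤ × ℤ) := Mset ×ˢ Mset ×ˢ Mset ×ˢ Mset

lemma mem_MM {p : ℤ × ℤ × ℤ × ℤ} :
    p ∈ MM ↔ p.1 ∈ Mset ∧ p.2.1 ∈ Mset ∧ p.2.2.1 ∈ Mset ∧ p.2.2.2 ∈ Mset := by
  simp [MM, Finset.mem_product]

lemma Sp_subset : Sp ⊆ MM := by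
  intro p hp
  rw [mem_MM]
  fin_cases hp <;> refine ⟨?_, ?_, ?_, ?_⟩ <;> decide

lemma key81 : ∀ c ∈ Mset, ∀ e ∈ Mset, (c + 4*e) ∈ Mset → (-(2*c) - 5*e) ∈ Mset →
    ((c = 0 ∧ e = 0) ∨ (c = 10 ∧ e = -1) ∨ (c = -10 ∧ e = 1)) := by decide

lemma char_resonant : ∀ p ∈ MM,
    (p.1 + p.2.1 + p.2.2.1 + p.2.2.2 = 0 ∧ p.2.1 + 2*p.2.2.1 + 5*p.2.2.2 = 0) → p ∈ Sp := by
  rintro ⟨a, b, c, e⟩ hp ⟨h1, h2⟩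
  rw [mem_MM] at hp
  obtain ⟨ha, hb, hc, he⟩ := hp
  dsimp only at h1 h2 ha hb hc he
  have hbv : b = -(2*c) - 5*e := by omega
  have hav : a = c + 4*e := by omega
  subst hbv hav
  have := key81 c hc e he ha hb
  rcases this with ⟨rfl, rfl⟩ | ⟨rfl, rfl⟩ | ⟨rfl, rfl⟩ <;> decide

section main
variable (N : ℕ) [NeZero N]

lemma small_intcast_ne {z : ℤ} (hz : z ≠ 0) (habs : |z| < N) : ((z : ℤ) : ZMod N) ≠ 0 := by
  intro h
  rw [ZMod.intCast_zmod_eq_zero_iff_dvd] at h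
  exact hz (Int.eq_zero_of_abs_lt_dvd h habs)

noncomputable def Fc (θ : ℝ) (x : ZMod N) : ℂ :=
  ∑ m ∈ Mset, (cfR θ m : ℂ) * ψ N ((m : ZMod N) * x ^ 2)

lemma neg_mem_Mset : ∀ m ∈ Mset, -m ∈ Mset := by decide
lemma Mset'_ne_zero : ∀ m ∈ Mset', m ≠ 0 := by decide

lemma Fc_conj (θ : ℝ) (x : ZMod N) : (starRingEnd ℂ) (Fc N θ x) = Fc N θ x := by
  rw [Fc, map_sum]
  rw [show (∑ m ∈ Mset, (cfR θ m : ℂ) * ψ N ((m : ZMod N) * x ^ 2))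
      = ∑ m ∈ Mset, (cfR θ (-m) : ℂ) * ψ N (((-m : ℤ) : ZMod N) * x ^ 2) from ?_]
  · refine Finset.sum_congr rfl fun m hm => ?_
    rw [map_mul, Complex.conj_ofReal, conj_psi, cfR_neg]
    push_cast
    ring_nf
  · refine Finset.sum_nbij' (fun m => -m) (fun m => -m) ?_ ?_ ?_ ?_ ?_
    · intro a ha; exact neg_mem_Mset a ha
    · intro a ha; exact neg_mem_Mset a ha
    · intro a _; ring
    · intro a _; ring
    · intro a _; rw [neg_neg]

lemma Fc_re_cast (θ : ℝ) (x : ZMod N) : ((Fc N θ x).re : ℂ) = Fc N θ x := by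
  rw [← Complex.conj_eq_iff_re]
  exact Fc_conj N θ x

lemma Fc_eq (θ : ℝ) (x : ZMod N) :
    Fc N θ x = ((1 + θ : ℝ) : ℂ) + ∑ m ∈ Mset', (cfR θ m : ℂ) * ψ N ((m : ZMod N) * x ^ 2) := by
  rw [Fc, Mset_insert, Finset.sum_insert zero_not_mem_Mset']
  congr 1
  simp [cfR]

lemma G_norm_le (θ : ℝ) (x : ZMod N) :
    ‖∑ m ∈ Mset', (cfR θ m : ℂ) * ψ N ((m : ZMod N) * x ^ 2)‖ ≤ 8/9 := by
  refine le_trans (norm_sum_le _ _) ?_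
  have h : ∀ m ∈ Mset', ‖(cfR θ m : ℂ) * ψ N ((m : ZMod N) * x ^ 2)‖ = 1/9 := by
    intro m hm
    rw [norm_mul, norm_psi, Complex.norm_real, Real.norm_eq_abs,
      cfR_ne_zero_abs (Mset'_ne_zero m hm), mul_one]
  rw [Finset.sum_congr rfl h, Finset.sum_const]
  norm_num [Mset']

lemma Fc_re_bounds {θ : ℝ} (hθ0 : 0 ≤ θ) (hθ : θ ≤ 1/9) (x : ZMod N) :
    0 ≤ (Fc N θ x).re ∧ (Fc N θ x).re ≤ 2 := by
  rw [Fc_eq]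
  set G := ∑ m ∈ Mset', (cfR θ m : ℂ) * ψ N ((m : ZMod N) * x ^ 2) with hG
  have h1 : |G.re| ≤ 8/9 := le_trans (Complex.abs_re_le_norm G)
    (by exact G_norm_le N θ x)
  rw [Complex.add_re, Complex.ofReal_re]
  rw [abs_le] at h1
  constructor <;> nlinarith


set_option linter.unusedSectionVars false

lemma two_ne_zero'' (hbig : 2 < N) : (2 : ZMod N) ≠ 0 := by
  have h : ((2 : ℤ) : ZMod N) ≠ 0 := by
    apply small_intcast_ne N (by norm_num)
    rw [show |(2:ℤ)| = 2 by norm_num]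
    exact_mod_cast hbig
  simpa using h

noncomputable def W4 (d : ZMod N) (p : ℤ × ℤ × ℤ × ℤ) : ℂ :=
  ∑ t : ZMod N, ψ N ((p.1 : ZMod N) * t ^ 2 + (p.2.1 : ZMod N) * (t + d) ^ 2
    + (p.2.2.1 : ZMod N) * (t + 2 * d) ^ 2 + (p.2.2.2 : ZMod N) * (t + 5 * d) ^ 2)

lemma W4_phase (d t : ZMod N) (p : ℤ × ℤ × ℤ × ℤ) :
    (p.1 : ZMod N) * t ^ 2 + (p.2.1 : ZMod N) * (t + d) ^ 2
      + (p.2.2.1 : ZMod N) * (t + 2 * d) ^ 2 + (p.2.2.2 : ZMod N) * (t + 5 * d) ^ 2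
    = ((p.1 + p.2.1 + p.2.2.1 + p.2.2.2 : ℤ) : ZMod N) * t ^ 2
      + (((p.2.1 + 2 * p.2.2.1 + 5 * p.2.2.2 : ℤ) : ZMod N) * (2 * d)) * t
      + ((p.2.1 + 4 * p.2.2.1 + 25 * p.2.2.2 : ℤ) : ZMod N) * d ^ 2 := by
  push_cast
  ring

lemma p_abs_bounds {p : ℤ × ℤ × ℤ × ℤ} (hp : p ∈ MM) :
    |p.1 + p.2.1 + p.2.2.1 + p.2.2.2| ≤ 120 ∧ |p.2.1 + 2 * p.2.2.1 + 5 * p.2.2.2| ≤ 120 := by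
  rw [mem_MM] at hp
  obtain ⟨h1, h2, h3, h4⟩ := hp
  have b1 := Mset_abs_le h1
  have b2 := Mset_abs_le h2
  have b3 := Mset_abs_le h3
  have b4 := Mset_abs_le h4
  constructor <;> rw [abs_le] at * <;> omega

lemma W4_case_a [Fact (Nat.Prime N)] (hbig : 120 < N) (d : ZMod N) {p : ℤ × ℤ × ℤ × ℤ}
    (hp : p ∈ MM) (hq : p.1 + p.2.1 + p.2.2.1 + p.2.2.2 ≠ 0) :
    ‖W4 N d p‖ = Real.sqrt N := by
  have h2 : (2 : ZMod N) ≠ 0 := two_ne_zero'' N (by omega)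
  have hqz : ((p.1 + p.2.1 + p.2.2.1 + p.2.2.2 : ℤ) : ZMod N) ≠ 0 :=
    small_intcast_ne N hq (lt_of_le_of_lt (p_abs_bounds hp).1 (by exact_mod_cast hbig))
  rw [W4]
  rw [Finset.sum_congr rfl fun t _ => congrArg (ψ N) (W4_phase N d t p)]
  exact gauss_norm h2 hqz _ _

lemma W4_case_b [Fact (Nat.Prime N)] (hbig : 120 < N) {d : ZMod N} (hd : d ≠ 0)
    {p : ℤ × ℤ × ℤ × ℤ} (hp : p ∈ MM) (hq : p.1 + p.2.1 + p.2.2.1 + p.2.2.2 = 0)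
    (hL : p.2.1 + 2 * p.2.2.1 + 5 * p.2.2.2 ≠ 0) :
    W4 N d p = 0 := by
  have h2 : (2 : ZMod N) ≠ 0 := two_ne_zero'' N (by omega)
  have hLz : ((p.2.1 + 2 * p.2.2.1 + 5 * p.2.2.2 : ℤ) : ZMod N) ≠ 0 :=
    small_intcast_ne N hL (lt_of_le_of_lt (p_abs_bounds hp).2 (by exact_mod_cast hbig))
  have hl : ((p.2.1 + 2 * p.2.2.1 + 5 * p.2.2.2 : ℤ) : ZMod N) * (2 * d) ≠ 0 :=
    mul_ne_zero hLz (mul_ne_zero h2 hd)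
  rw [W4]
  rw [Finset.sum_congr rfl fun t _ => congrArg (ψ N) (W4_phase N d t p)]
  rw [Finset.sum_congr rfl fun t _ => congrArg (ψ N) (by rw [hq]; push_cast; ring :
    ((p.1 + p.2.1 + p.2.2.1 + p.2.2.2 : ℤ) : ZMod N) * t ^ 2
      + (((p.2.1 + 2 * p.2.2.1 + 5 * p.2.2.2 : ℤ) : ZMod N) * (2 * d)) * t
      + ((p.2.1 + 4 * p.2.2.1 + 25 * p.2.2.2 : ℤ) : ZMod N) * d ^ 2
    = (((p.2.1 + 2 * p.2.2.1 + 5 * p.2.2.2 : ℤ) : ZMod N) * (2 * d)) * t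
      + ((p.2.1 + 4 * p.2.2.1 + 25 * p.2.2.2 : ℤ) : ZMod N) * d ^ 2)]
  exact sum_psi_linear hl _

lemma W4_case_c (d : ZMod N) {p : ℤ × ℤ × ℤ × ℤ}
    (hq : p.1 + p.2.1 + p.2.2.1 + p.2.2.2 = 0) (hL : p.2.1 + 2 * p.2.2.1 + 5 * p.2.2.2 = 0)
    (hQ : p.2.1 + 4 * p.2.2.1 + 25 * p.2.2.2 = 0) :
    W4 N d p = (N : ℂ) := by
  rw [W4]
  rw [Finset.sum_congr rfl fun t _ => congrArg (ψ N) (W4_phase N d t p)]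
  rw [Finset.sum_congr rfl fun t _ => congrArg (ψ N) (by rw [hq, hL, hQ]; push_cast; ring :
    ((p.1 + p.2.1 + p.2.2.1 + p.2.2.2 : ℤ) : ZMod N) * t ^ 2
      + (((p.2.1 + 2 * p.2.2.1 + 5 * p.2.2.2 : ℤ) : ZMod N) * (2 * d)) * t
      + ((p.2.1 + 4 * p.2.2.1 + 25 * p.2.2.2 : ℤ) : ZMod N) * d ^ 2 = 0)]
  simp [sum_psi_const]



lemma rev_MM (G : ℤ × ℤ × ℤ × ℤ → ℂ) :
    ∑ p ∈ MM, G p = ∑ p ∈ MM, G (p.2.2.2, p.2.2.1, p.2.1, p.1) := by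
  refine Finset.sum_nbij' (fun p => (p.2.2.2, p.2.2.1, p.2.1, p.1))
    (fun p => (p.2.2.2, p.2.2.1, p.2.1, p.1)) ?_ ?_ ?_ ?_ ?_
  · intro p hp; rw [mem_MM] at *; tauto
  · intro p hp; rw [mem_MM] at *; tauto
  · intro p _; rfl
  · intro p _; rfl
  · intro p _; rfl

lemma sum4_mul (g₁ g₂ g₃ g₄ : ℤ → ℂ) :
    (∑ m ∈ Mset, g₁ m) * (∑ m ∈ Mset, g₂ m) * (∑ m ∈ Mset, g₃ m) * (∑ m ∈ Mset, g₄ m)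
    = ∑ p ∈ MM, g₁ p.1 * g₂ p.2.1 * g₃ p.2.2.1 * g₄ p.2.2.2 := by
  rw [rev_MM]
  rw [MM]
  rw [Finset.sum_product]
  simp only [Finset.sum_product]
  simp only [Finset.sum_mul, Finset.mul_sum]

lemma T_expand (θ : ℝ) (d : ZMod N) :
    ∑ t : ZMod N, Fc N θ t * Fc N θ (t + d) * Fc N θ (t + 2 * d) * Fc N θ (t + 5 * d)
    = ∑ p ∈ MM, ((cfR θ p.1 * cfR θ p.2.1 * cfR θ p.2.2.1 * cfR θ p.2.2.2 : ℝ) : ℂ)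
        * W4 N d p := by
  have point : ∀ t : ZMod N,
      Fc N θ t * Fc N θ (t + d) * Fc N θ (t + 2 * d) * Fc N θ (t + 5 * d)
      = ∑ p ∈ MM, ((cfR θ p.1 * cfR θ p.2.1 * cfR θ p.2.2.1 * cfR θ p.2.2.2 : ℝ) : ℂ)
          * ψ N ((p.1 : ZMod N) * t ^ 2 + (p.2.1 : ZMod N) * (t + d) ^ 2
            + (p.2.2.1 : ZMod N) * (t + 2 * d) ^ 2 + (p.2.2.2 : ZMod N) * (t + 5 * d) ^ 2) := by
    intro t
    rw [Fc, Fc, Fc, Fc, sum4_mul]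
    refine Finset.sum_congr rfl fun p _ => ?_
    rw [AddChar.map_add_eq_mul, AddChar.map_add_eq_mul, AddChar.map_add_eq_mul]
    push_cast
    ring
  rw [Finset.sum_congr rfl fun t _ => point t]
  rw [Finset.sum_comm]
  refine Finset.sum_congr rfl fun p _ => ?_
  rw [W4, Finset.mul_sum]



lemma card_MM : MM.card = 6561 := by
  rw [MM, Finset.card_product, Finset.card_product, Finset.card_product]
  rfl

lemma CF_abs_le {θ : ℝ} (hθ0 : 0 ≤ θ) (hθ : θ ≤ 1/9) (p : ℤ × ℤ × ℤ × ℤ) :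
    ‖((cfR θ p.1 * cfR θ p.2.1 * cfR θ p.2.2.1 * cfR θ p.2.2.2 : ℝ) : ℂ)‖ ≤ 2 := by
  rw [Complex.norm_real, Real.norm_eq_abs, abs_mul, abs_mul, abs_mul]
  have b1 := cfR_abs_le hθ0 p.1
  have b2 := cfR_abs_le hθ0 p.2.1
  have b3 := cfR_abs_le hθ0 p.2.2.1
  have b4 := cfR_abs_le hθ0 p.2.2.2
  have m1 : |cfR θ p.1| ≤ 10/9 := by linarith
  have m2 : |cfR θ p.2.1| ≤ 10/9 := by linarith
  have m3 : |cfR θ p.2.2.1| ≤ 10/9 := by linarith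
  have m4 : |cfR θ p.2.2.2| ≤ 10/9 := by linarith
  calc |cfR θ p.1| * |cfR θ p.2.1| * |cfR θ p.2.2.1| * |cfR θ p.2.2.2|
      ≤ (10/9) * (10/9) * (10/9) * (10/9) := by
        gcongr <;> positivity
    _ ≤ 2 := by norm_num

lemma sum_Sp (θ : ℝ) (d : ZMod N) :
    ∑ p ∈ Sp, ((cfR θ p.1 * cfR θ p.2.1 * cfR θ p.2.2.1 * cfR θ p.2.2.2 : ℝ) : ℂ) * W4 N d p
    = (N : ℂ) * ((((1+θ)^4 - 2/6561 : ℝ)) : ℂ) := by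
  rw [show Sp = insert ((0:ℤ),(0:ℤ),(0:ℤ),(0:ℤ))
    (insert ((6:ℤ),(-15:ℤ),(10:ℤ),(-1:ℤ)) {((-6:ℤ),(15:ℤ),(-10:ℤ),(1:ℤ))}) from rfl]
  rw [Finset.sum_insert (by decide), Finset.sum_insert (by decide), Finset.sum_singleton]
  rw [W4_case_c N d (p := ((0:ℤ),(0:ℤ),(0:ℤ),(0:ℤ))) (by norm_num) (by norm_num) (by norm_num)]
  rw [W4_case_c N d (p := ((6:ℤ),(-15:ℤ),(10:ℤ),(-1:ℤ))) (by norm_num) (by norm_num) (by norm_num)]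
  rw [W4_case_c N d (p := ((-6:ℤ),(15:ℤ),(-10:ℤ),(1:ℤ))) (by norm_num) (by norm_num) (by norm_num)]
  norm_num [cfR]
  push_cast
  ring

lemma T_re_bound [Fact (Nat.Prime N)] (hbig : 120 < N) {θ : ℝ} (hθ0 : 0 ≤ θ) (hθ : θ ≤ 1/9)
    {d : ZMod N} (hd : d ≠ 0) :
    (∑ t : ZMod N, Fc N θ t * Fc N θ (t + d) * Fc N θ (t + 2 * d) * Fc N θ (t + 5 * d)).re
    ≤ (N : ℝ) * ((1+θ)^4 - 2/6561) + 13122 * Real.sqrt N := by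
  rw [T_expand, ← Finset.sum_sdiff Sp_subset, Complex.add_re]
  have hre2 : (∑ p ∈ Sp, ((cfR θ p.1 * cfR θ p.2.1 * cfR θ p.2.2.1 * cfR θ p.2.2.2 : ℝ) : ℂ)
      * W4 N d p).re = (N : ℝ) * ((1+θ)^4 - 2/6561) := by
    rw [sum_Sp]
    rw [show (N : ℂ) * ((((1+θ)^4 - 2/6561 : ℝ)) : ℂ) = ((((N : ℝ) * ((1+θ)^4 - 2/6561) : ℝ)) : ℂ) by
      push_cast; ring]
    exact Complex.ofReal_re _
  rw [hre2]
  have hre1 : (∑ p ∈ MM \ Sp, ((cfR θ p.1 * cfR θ p.2.1 * cfR θ p.2.2.1 * cfR θ p.2.2.2 : ℝ) : ℂ)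
      * W4 N d p).re ≤ 13122 * Real.sqrt N := by
    refine le_trans (Complex.re_le_norm _) ?_
    refine le_trans (norm_sum_le _ _) ?_
    have hterm : ∀ p ∈ MM \ Sp,
        ‖((cfR θ p.1 * cfR θ p.2.1 * cfR θ p.2.2.1 * cfR θ p.2.2.2 : ℝ) : ℂ) * W4 N d p‖
        ≤ 2 * Real.sqrt N := by
      intro p hp
      have hpMM : p ∈ MM := (Finset.mem_sdiff.mp hp).1
      have hpSp : p ∉ Sp := (Finset.mem_sdiff.mp hp).2
      rw [norm_mul]
      rcases eq_or_ne (p.1 + p.2.1 + p.2.2.1 + p.2.2.2) 0 with hq | hq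
      · have hL : p.2.1 + 2 * p.2.2.1 + 5 * p.2.2.2 ≠ 0 := by
          intro hL0
          exact hpSp (char_resonant p hpMM ⟨hq, hL0⟩)
        rw [W4_case_b N hbig hd hpMM hq hL]
        simp [Real.sqrt_nonneg]
      · rw [W4_case_a N hbig d hpMM hq]
        have := CF_abs_le hθ0 hθ p
        have := Real.sqrt_nonneg (N : ℝ)
        nlinarith
    refine le_trans (Finset.sum_le_card_nsmul _ _ _ hterm) ?_
    rw [nsmul_eq_mul]
    have hcard : ((MM \ Sp).card : ℝ) ≤ 6561 := by
      have := Finset.card_le_card (Finset.sdiff_subset (s := MM) (t := Sp))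
      rw [card_MM] at this
      exact_mod_cast this
    have := Real.sqrt_nonneg (N : ℝ)
    nlinarith
  linarith

lemma mean_re_bound [Fact (Nat.Prime N)] (hbig : 120 < N) (θ : ℝ) :
    (N : ℝ) * (1+θ) - (8/9) * Real.sqrt N ≤ (∑ x : ZMod N, Fc N θ x).re := by
  have h2 : (2 : ZMod N) ≠ 0 := two_ne_zero'' N (by omega)
  have hsum : ∑ x : ZMod N, Fc N θ x
      = (N : ℂ) * ((1 + θ : ℝ) : ℂ)
        + ∑ m ∈ Mset', (cfR θ m : ℂ) * ∑ x : ZMod N, ψ N ((m : ZMod N) * x ^ 2) := by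
    rw [Finset.sum_congr rfl fun x _ => Fc_eq N θ x, Finset.sum_add_distrib]
    congr 1
    · rw [Finset.sum_const, Finset.card_univ, ZMod.card, nsmul_eq_mul]
    · rw [Finset.sum_comm]
      exact Finset.sum_congr rfl fun m _ => (Finset.mul_sum _ _ _).symm
  rw [hsum, Complex.add_re]
  have h1 : ((N : ℂ) * ((1 + θ : ℝ) : ℂ)).re = (N : ℝ) * (1 + θ) := by
    simp [Complex.mul_re]
  rw [h1]
  have h3 : |(∑ m ∈ Mset', (cfR θ m : ℂ) * ∑ x : ZMod N, ψ N ((m : ZMod N) * x ^ 2)).re|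
      ≤ (8/9) * Real.sqrt N := by
    refine le_trans (Complex.abs_re_le_norm _) ?_
    refine le_trans (norm_sum_le _ _) ?_
    have hterm : ∀ m ∈ Mset',
        ‖(cfR θ m : ℂ) * ∑ x : ZMod N, ψ N ((m : ZMod N) * x ^ 2)‖
        = (1/9) * Real.sqrt N := by
      intro m hm
      have hm0 : m ≠ 0 := Mset'_ne_zero m hm
      have habs : |m| < (N : ℤ) := by
        have : |m| ≤ 15 := Mset_abs_le (by rw [Mset_insert]; exact Finset.mem_insert_of_mem hm)
        omega
      have hq : ((m : ℤ) : ZMod N) ≠ 0 := small_intcast_ne N hm0 habs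
      have hg : ‖∑ x : ZMod N, ψ N ((m : ZMod N) * x ^ 2)‖ = Real.sqrt N := by
        rw [Finset.sum_congr rfl fun x _ => congrArg (ψ N)
          (by ring : ((m : ℤ) : ZMod N) * x ^ 2 = ((m : ℤ) : ZMod N) * x ^ 2 + 0 * x + 0)]
        exact gauss_norm h2 hq 0 0
      rw [norm_mul, hg, Complex.norm_real, Real.norm_eq_abs, cfR_ne_zero_abs hm0]
    rw [Finset.sum_congr rfl hterm, Finset.sum_const]
    rw [show (Mset'.card : ℕ) = 8 from rfl]
    rw [nsmul_eq_mul]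
    push_cast
    linarith [Real.sqrt_nonneg (N : ℝ)]
  rw [abs_le] at h3
  linarith [h3.1]



lemma sum_range_zmod (g : ZMod N → ℝ) :
    ∑ i ∈ Finset.range N, g (i : ZMod N) = ∑ x : ZMod N, g x := by
  refine Finset.sum_nbij' (fun i => (i : ZMod N)) (fun x => x.val) ?_ ?_ ?_ ?_ ?_
  · intro a _; exact Finset.mem_univ _
  · intro x _; exact Finset.mem_range.mpr (ZMod.val_lt x)
  · intro a ha; exact ZMod.val_natCast_of_lt (Finset.mem_range.mp ha)
  · intro x _; exact ZMod.natCast_zmod_val x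
  · intro a _; rfl

end main

theorem stmt18 :
    ∃ c : ℝ, 0 < c ∧
      ∀ α : ℝ, 0 < α → α < 1/2 →
        ∃ N0 : ℕ, ∀ N : ℕ, N.Prime → N0 < N →
          ∃ f : ZMod N → ℝ,
            (∀ t : ZMod N, 0 ≤ f t ∧ f t ≤ 1) ∧
            α ≤ (1 / (N : ℝ)) * ∑ t ∈ Finset.range N, f (t : ZMod N) ∧
            ∀ d : ZMod N, d ≠ 0 →
              (1 / (N : ℝ)) * ∑ t ∈ Finset.range N,
                  f (t : ZMod N) * f ((t : ZMod N) + d) * f ((t : ZMod N) + 2 * d) *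
                    f ((t : ZMod N) + 5 * d) <
                (1 - c) * α ^ 4 := by
  refine ⟨1/6561, by norm_num, ?_⟩
  intro α hα0 hα2
  refine ⟨10^16, ?_⟩
  intro N hNp hNbig
  haveI : Fact (Nat.Prime N) := ⟨hNp⟩
  haveI : NeZero N := ⟨hNp.ne_zero⟩
  have hN0 : (0 : ℝ) < N := by positivity
  have hNR : (10^16 : ℝ) < (N : ℝ) := by exact_mod_cast hNbig
  have hsqrtpos : 0 < Real.sqrt N := Real.sqrt_pos.mpr hN0
  have hsqrt : (10^8 : ℝ) < Real.sqrt N := by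
    have h := Real.sqrt_lt_sqrt (by norm_num : (0:ℝ) ≤ 10^16) hNR
    rwa [show (10^16 : ℝ) = (10^8 : ℝ)^2 by norm_num, Real.sqrt_sq (by norm_num : (0:ℝ) ≤ 10^8)]
      at h
  have hNsq : Real.sqrt N * Real.sqrt N = (N : ℝ) := Real.mul_self_sqrt (le_of_lt hN0)
  set θ : ℝ := 1 / Real.sqrt N with hθdef
  have hθ0 : 0 ≤ θ := by positivity
  have hθsmall : θ ≤ 1/9 := by
    rw [hθdef, div_le_div_iff₀ hsqrtpos (by norm_num)]
    linarith
  have hNθ : (N : ℝ) * θ = Real.sqrt N := by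
    rw [hθdef, ← hNsq]
    field_simp
    rw [Real.sqrt_sq (Real.sqrt_nonneg _)]
  have hbig120 : 120 < N := by omega
  refine ⟨fun t => α * (Fc N θ t).re, ?_, ?_, ?_⟩
  · intro t
    obtain ⟨hl, hr⟩ := Fc_re_bounds N hθ0 hθsmall t
    constructor
    · positivity
    · show α * (Fc N θ t).re ≤ 1
      nlinarith
  · -- mean
    beta_reduce
    have hR := sum_range_zmod N (fun x => α * (Fc N θ x).re)
    beta_reduce at hR
    rw [hR, ← Finset.mul_sum]
    have hmean := mean_re_bound N hbig120 θ
    have hS : (∑ x : ZMod N, (Fc N θ x).re) = (∑ x : ZMod N, Fc N θ x).re := by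
      rw [Complex.re_sum]
    have hge : (N : ℝ) ≤ ∑ x : ZMod N, (Fc N θ x).re := by
      rw [hS]
      have e1 : (N : ℝ) * (1 + θ) - (8/9) * Real.sqrt N
          = (N : ℝ) + (Real.sqrt N - (8/9) * Real.sqrt N) := by
        rw [mul_add, hNθ]; ring
      have e2 : (N : ℝ) ≤ (N : ℝ) * (1+θ) - (8/9) * Real.sqrt N := by
        rw [e1]; nlinarith
      linarith
    calc α = 1/(N:ℝ) * (α * N) := by field_simp
      _ ≤ 1/(N:ℝ) * (α * ∑ x : ZMod N, (Fc N θ x).re) := by gcongr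
  · -- main inequality
    intro d hd
    beta_reduce
    have hR := sum_range_zmod N (fun x => α * (Fc N θ x).re * (α * (Fc N θ (x + d)).re)
      * (α * (Fc N θ (x + 2 * d)).re) * (α * (Fc N θ (x + 5 * d)).re))
    beta_reduce at hR
    rw [hR]
    have hT := T_re_bound N hbig120 hθ0 hθsmall hd
    have hprod : ∀ x : ZMod N,
        α * (Fc N θ x).re * (α * (Fc N θ (x + d)).re) * (α * (Fc N θ (x + 2 * d)).re)
          * (α * (Fc N θ (x + 5 * d)).re)
        = α^4 * ((Fc N θ x).re * (Fc N θ (x + d)).re * (Fc N θ (x + 2 * d)).re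
            * (Fc N θ (x + 5 * d)).re) := by
      intro x; ring
    rw [Finset.sum_congr rfl fun x _ => hprod x, ← Finset.mul_sum]
    have hreT : ∑ x : ZMod N, ((Fc N θ x).re * (Fc N θ (x + d)).re * (Fc N θ (x + 2 * d)).re
        * (Fc N θ (x + 5 * d)).re)
        = (∑ t : ZMod N, Fc N θ t * Fc N θ (t + d) * Fc N θ (t + 2 * d)
            * Fc N θ (t + 5 * d)).re := by
      rw [Complex.re_sum]
      refine Finset.sum_congr rfl fun x _ => ?_
      have e3 : Fc N θ x * Fc N θ (x + d) * Fc N θ (x + 2 * d) * Fc N θ (x + 5 * d)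
          = (((Fc N θ x).re * (Fc N θ (x + d)).re * (Fc N θ (x + 2 * d)).re
              * (Fc N θ (x + 5 * d)).re : ℝ) : ℂ) := by
        conv_lhs => rw [← Fc_re_cast N θ x, ← Fc_re_cast N θ (x + d),
          ← Fc_re_cast N θ (x + 2 * d), ← Fc_re_cast N θ (x + 5 * d)]
        push_cast
        ring
      rw [e3, Complex.ofReal_re]
    rw [hreT]
    have hkey : (∑ t : ZMod N, Fc N θ t * Fc N θ (t + d) * Fc N θ (t + 2 * d)
        * Fc N θ (t + 5 * d)).re < (N : ℝ) * (1 - 1/6561) := by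
      refine lt_of_le_of_lt hT ?_
      have hexp : (1+θ)^4 ≤ 1 + 5*θ := by
        have p2 : θ^2 ≤ θ/9 := by nlinarith
        have p3 : θ^3 ≤ θ/81 := by nlinarith
        have p4 : θ^4 ≤ θ/729 := by nlinarith
        nlinarith [p2, p3, p4]
      have h1 : (N : ℝ) * ((1+θ)^4 - 2/6561) ≤ (N : ℝ) * (1 + 5*θ - 2/6561) :=
        mul_le_mul_of_nonneg_left (by linarith) (le_of_lt hN0)
      have hbound : (86126247:ℝ) * Real.sqrt N < (N:ℝ) := by
        calc (86126247:ℝ) * Real.sqrt N ≤ (10^8 : ℝ) * Real.sqrt N :=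
              mul_le_mul_of_nonneg_right (by norm_num) (le_of_lt hsqrtpos)
          _ < Real.sqrt N * Real.sqrt N := mul_lt_mul_of_pos_right hsqrt hsqrtpos
          _ = (N : ℝ) := hNsq
      have h2 : (N : ℝ) * (1 + 5*θ - 2/6561) + 13122 * Real.sqrt N
          < (N : ℝ) * (1 - 1/6561) := by
        have expand : (N:ℝ) * (1 + 5*θ - 2/6561)
            = (N:ℝ) + 5*((N:ℝ)*θ) - 2*(N:ℝ)/6561 := by ring
        rw [expand, hNθ]
        linarith
      linarith
    have hα4 : (0:ℝ) < α^4 := by positivity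
    calc (1 / (N:ℝ)) * (α^4 * (∑ t : ZMod N, Fc N θ t * Fc N θ (t + d) * Fc N θ (t + 2 * d)
        * Fc N θ (t + 5 * d)).re)
        < (1 / (N:ℝ)) * (α^4 * ((N : ℝ) * (1 - 1/6561))) := by
          exact mul_lt_mul_of_pos_left (mul_lt_mul_of_pos_left hkey hα4) (by positivity)
      _ = (1 - 1/6561) * α ^ 4 := by
          field_simp
end
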